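/- arXiv:1302.1340 — 5 statements merged into one kernel-verified Lean document; each statement's English description precedes it below -/
import Mathlib

section
/- The space δX is a compact Hausdorff space and e(X) is dense in δX. -/
open Set

variable {X : Type*} [Nonempty X] [TopologicalSpace X] [DiscreteTopology X]

/-- The set `X(f,r) = {x ∈ X : |f(x)| ≤ r}`. -/
def XSet (f : BoundedContinuousFunction X ℂ) (r : ℝ) : Set X := {x | ‖f x‖ ≤ r}

/-- An `F`-family on `X`: a nonempty collection of nonempty subsets of `X` such that for every
member `A ≠ X` there are `B` in the collection and `f ∈ F` with `f(B) = {0}`,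
`f(X \ A) = {1}`. -/
def FFamily (F : StarSubalgebra ℂ (BoundedContinuousFunction X ℂ)) (𝒜 : Set (Set X)) : Prop :=
  𝒜.Nonempty ∧ (∀ A ∈ 𝒜, A.Nonempty) ∧
    ∀ A ∈ 𝒜, A ≠ Set.univ →
      ∃ B ∈ 𝒜, ∃ f ∈ F, (∀ x ∈ B, f x = 0) ∧ ∀ x ∉ A, f x = 1

/-- A filter on the set `X`, viewed as a collection of subsets. -/
def IsSetFilter (φ : Set (Set X)) : Prop :=
  φ.Nonempty ∧ (∀ A ∈ φ, ∀ B ∈ φ, A ∩ B ∈ φ) ∧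
    (∀ A ∈ φ, ∀ B : Set X, A ⊆ B → B ∈ φ) ∧ ∅ ∉ φ

/-- An `F`-filter on `X` is a filter which is also an `F`-family. -/
def FFilter (F : StarSubalgebra ℂ (BoundedContinuousFunction X ℂ)) (φ : Set (Set X)) : Prop :=
  IsSetFilter φ ∧ FFamily F φ

/-- An `F`-ultrafilter on `X` is an `F`-filter maximal with respect to inclusion. -/
def FUltrafilter (F : StarSubalgebra ℂ (BoundedContinuousFunction X ℂ)) (φ : Set (Set X)) : Prop :=
  FFilter F φ ∧ ∀ ψ : Set (Set X), FFilter F ψ → φ ⊆ ψ → ψ = φ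

/-- `F₀ = {f ∈ F : X(f,r) ≠ ∅ for all r > 0}`. -/
def FZero (F : StarSubalgebra ℂ (BoundedContinuousFunction X ℂ)) :
    Set (BoundedContinuousFunction X ℂ) :=
  {f | f ∈ F ∧ ∀ r : ℝ, 0 < r → (XSet f r).Nonempty}

/-- `Z(A) = {f ∈ F : f(x) = 0 for all x ∈ A}`. -/
def ZSet (F : StarSubalgebra ℂ (BoundedContinuousFunction X ℂ)) (A : Set X) :
    Set (BoundedContinuousFunction X ℂ) :=
  {f | f ∈ F ∧ ∀ x ∈ A, f x = 0}

/-- The finite intersection property. -/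
def FIP (𝒜 : Set (Set X)) : Prop :=
  ∀ s : Finset (Set X), ↑s ⊆ 𝒜 → s.Nonempty → (⋂₀ (s : Set (Set X))).Nonempty

/-- A filter base on `X`. -/
def IsFilterBase (ℬ : Set (Set X)) : Prop :=
  ℬ.Nonempty ∧ ∅ ∉ ℬ ∧ ∀ A ∈ ℬ, ∀ B ∈ ℬ, ∃ C ∈ ℬ, C ⊆ A ∩ B

/-- The filter generated by a filter base. -/
def genFilter (ℬ : Set (Set X)) : Set (Set X) :=
  {A | ∃ B ∈ ℬ, B ⊆ A}

/-- `δX`, the space of all `F`-ultrafilters on `X`. -/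
def Delta (F : StarSubalgebra ℂ (BoundedContinuousFunction X ℂ)) : Type _ :=
  {p : Set (Set X) // FUltrafilter F p}

/-- `Â = {p ∈ δX : A ∈ p}`. -/
def hatSet (F : StarSubalgebra ℂ (BoundedContinuousFunction X ℂ)) (A : Set X) :
    Set (Delta F) :=
  {p | A ∈ p.1}

/-- The topology on `δX` having `{Â : A ⊆ X}` as a base. -/
instance (F : StarSubalgebra ℂ (BoundedContinuousFunction X ℂ)) :
    TopologicalSpace (Delta F) :=
  TopologicalSpace.generateFrom {S | ∃ A : Set X, S = hatSet F A}

/-- For an `F`-filter `φ`, `φ̂ = {p ∈ δX : φ ⊆ p}`. -/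
def hatF (F : StarSubalgebra ℂ (BoundedContinuousFunction X ℂ)) (φ : Set (Set X)) :
    Set (Delta F) :=
  {p | φ ⊆ p.1}

/-- `τ(F)`, the weakest topology on `X` making every member of `F` continuous. -/
noncomputable def tauF (F : StarSubalgebra ℂ (BoundedContinuousFunction X ℂ)) : TopologicalSpace X :=
  ⨅ f ∈ (F : Set (BoundedContinuousFunction X ℂ)),
    TopologicalSpace.induced (fun x => f x) inferInstance

/-- `B(I) = {X(f,r) : f ∈ I, r > 0}` for an ideal `I` of `F`. -/
def BIdeal (F : StarSubalgebra ℂ (BoundedContinuousFunction X ℂ)) (I : Ideal F) :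
    Set (Set X) :=
  {S | ∃ f ∈ I, ∃ r : ℝ, 0 < r ∧ S = XSet (f : BoundedContinuousFunction X ℂ) r}

set_option linter.unusedSectionVars false

section Aux

variable {F : StarSubalgebra ℂ (BoundedContinuousFunction X ℂ)}

lemma univ_mem_of_isSetFilter {φ : Set (Set X)} (h : IsSetFilter φ) : Set.univ ∈ φ := by
  obtain ⟨A, hA⟩ := h.1
  exact h.2.2.1 A hA Set.univ (Set.subset_univ A)

lemma mem_of_superset' {φ : Set (Set X)} (h : IsSetFilter φ) {A B : Set X}
    (hA : A ∈ φ) (hAB : A ⊆ B) : B ∈ φ := h.2.2.1 A hA B hAB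

/-- witness lemma, including the trivial case `A = univ`. -/
lemma witness_of_mem {φ : Set (Set X)} (h : FFilter F φ) {A : Set X} (hA : A ∈ φ) :
    ∃ B ∈ φ, ∃ f ∈ F, (∀ x ∈ B, f x = 0) ∧ ∀ x ∉ A, f x = 1 := by
  by_cases hAu : A = Set.univ
  · refine ⟨Set.univ, univ_mem_of_isSetFilter h.1, 0, zero_mem F, by simp, ?_⟩
    intro x hx; exact absurd (by trivial : x ∈ Set.univ) (hAu ▸ hx)
  · exact h.2.2.2 A hA hAu

lemma subset_genFilter {ℬ : Set (Set X)} : ℬ ⊆ genFilter ℬ :=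
  fun B hB => ⟨B, hB, subset_rfl⟩

/-- The merge lemma: a directed family with `F`-witnesses generates an `F`-filter. -/
lemma genFilter_FFilter {ℬ : Set (Set X)}
    (h1 : Set.univ ∈ ℬ)
    (h2 : ∀ B ∈ ℬ, B.Nonempty)
    (h3 : ∀ B ∈ ℬ, ∀ C ∈ ℬ, ∃ D ∈ ℬ, D ⊆ B ∩ C)
    (h4 : ∀ B ∈ ℬ, B ≠ Set.univ →
      ∃ C ∈ ℬ, ∃ f ∈ F, (∀ x ∈ C, f x = 0) ∧ ∀ x ∉ B, f x = 1) :
    FFilter F (genFilter ℬ) := by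
  have hne : ∀ A ∈ genFilter ℬ, A.Nonempty := by
    rintro A ⟨B, hB, hBA⟩
    exact (h2 B hB).mono hBA
  refine ⟨⟨⟨Set.univ, subset_genFilter h1⟩, ?_, ?_, ?_⟩, ?_, hne, ?_⟩
  · rintro A ⟨B, hB, hBA⟩ A' ⟨B', hB', hBA'⟩
    obtain ⟨D, hD, hDsub⟩ := h3 B hB B' hB'
    exact ⟨D, hD, hDsub.trans (Set.inter_subset_inter hBA hBA')⟩
  · rintro A ⟨B, hB, hBA⟩ C hAC
    exact ⟨B, hB, hBA.trans hAC⟩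
  · rintro ⟨B, hB, hBA⟩
    exact absurd (Set.subset_empty_iff.mp hBA) (h2 B hB).ne_empty
  · exact ⟨Set.univ, subset_genFilter h1⟩
  · rintro A ⟨B, hB, hBA⟩ hAu
    have hBu : B ≠ Set.univ := by
      rintro rfl
      exact hAu (Set.eq_univ_of_univ_subset hBA)
    obtain ⟨C, hC, f, hf, hf0, hf1⟩ := h4 B hB hBu
    exact ⟨C, subset_genFilter hC, f, hf, hf0, fun x hx => hf1 x (fun hxB => hx (hBA hxB))⟩

/-- Every `F`-filter is contained in an `F`-ultrafilter. -/
lemma exists_fUltrafilter_ge {φ : Set (Set X)} (hφ : FFilter F φ) :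
    ∃ p, FUltrafilter F p ∧ φ ⊆ p := by
  have H : ∀ c ⊆ {ψ | FFilter F ψ ∧ φ ⊆ ψ}, IsChain (· ⊆ ·) c → c.Nonempty →
      ∃ ub ∈ {ψ | FFilter F ψ ∧ φ ⊆ ψ}, ∀ s ∈ c, s ⊆ ub := by
    intro c hcS hchain ⟨ψ₀, hψ₀⟩
    refine ⟨⋃₀ c, ⟨⟨⟨⟨Set.univ, ?_⟩, ?_, ?_, ?_⟩, ⟨Set.univ, ?_⟩, ?_, ?_⟩, ?_⟩, fun s hs => Set.subset_sUnion_of_mem hs⟩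
    · exact ⟨ψ₀, hψ₀, univ_mem_of_isSetFilter (hcS hψ₀).1.1⟩
    · rintro A ⟨ψ₁, hψ₁, hA⟩ B ⟨ψ₂, hψ₂, hB⟩
      rcases hchain.total hψ₁ hψ₂ with h | h
      · exact ⟨ψ₂, hψ₂, (hcS hψ₂).1.1.2.1 A (h hA) B hB⟩
      · exact ⟨ψ₁, hψ₁, (hcS hψ₁).1.1.2.1 A hA B (h hB)⟩
    · rintro A ⟨ψ₁, hψ₁, hA⟩ B hAB
      exact ⟨ψ₁, hψ₁, (hcS hψ₁).1.1.2.2.1 A hA B hAB⟩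
    · rintro ⟨ψ₁, hψ₁, hbot⟩
      exact (hcS hψ₁).1.1.2.2.2 hbot
    · exact ⟨ψ₀, hψ₀, univ_mem_of_isSetFilter (hcS hψ₀).1.1⟩
    · rintro A ⟨ψ₁, hψ₁, hA⟩
      exact (hcS hψ₁).1.2.2.1 A hA
    · rintro A ⟨ψ₁, hψ₁, hA⟩ hAu
      obtain ⟨B, hB, f, hf, h0, h1⟩ := (hcS hψ₁).1.2.2.2 A hA hAu
      exact ⟨B, ⟨ψ₁, hψ₁, hB⟩, f, hf, h0, h1⟩
    · exact (hcS hψ₀).2.trans (Set.subset_sUnion_of_mem hψ₀)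
  obtain ⟨m, hφm, hmax⟩ := zorn_subset_nonempty {ψ | FFilter F ψ ∧ φ ⊆ ψ} H φ ⟨hφ, subset_rfl⟩
  refine ⟨m, ⟨hmax.prop.1, ?_⟩, hmax.prop.2⟩
  intro ψ hψ hsub
  exact (hmax.eq_of_le ⟨hψ, hmax.prop.2.trans hsub⟩ hsub).symm

/-- Distinct `F`-ultrafilters contain disjoint sets. -/
lemma exists_disjoint_of_ne {p q : Set (Set X)} (hp : FUltrafilter F p)
    (hq : FUltrafilter F q) (hne : p ≠ q) :
    ∃ B ∈ p, ∃ C ∈ q, B ∩ C = ∅ := by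
  by_contra hcon
  push_neg at hcon
  set ℬ : Set (Set X) := {S | ∃ B ∈ p, ∃ C ∈ q, S = B ∩ C} with hℬ
  have hpb : p ⊆ ℬ := by
    intro B hB
    exact ⟨B, hB, Set.univ, univ_mem_of_isSetFilter hq.1.1, (Set.inter_univ B).symm⟩
  have hqb : q ⊆ ℬ := by
    intro C hC
    exact ⟨Set.univ, univ_mem_of_isSetFilter hp.1.1, C, hC, (Set.univ_inter C).symm⟩
  have hgen : FFilter F (genFilter ℬ) := by
    refine genFilter_FFilter (hpb (univ_mem_of_isSetFilter hp.1.1)) ?_ ?_ ?_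
    · rintro S ⟨B, hB, C, hC, rfl⟩
      have h := hcon B hB C hC
      exact h
    · rintro S ⟨B, hB, C, hC, rfl⟩ S' ⟨B', hB', C', hC', rfl⟩
      refine ⟨(B ∩ B') ∩ (C ∩ C'), ⟨B ∩ B', hp.1.1.2.1 B hB B' hB',
        C ∩ C', hq.1.1.2.1 C hC C' hC', rfl⟩, ?_⟩
      intro x hx
      exact ⟨⟨hx.1.1, hx.2.1⟩, hx.1.2, hx.2.2⟩
    · rintro S ⟨B, hB, C, hC, rfl⟩ hSu
      obtain ⟨B₁, hB₁, f, hfF, hf0, hf1⟩ := witness_of_mem hp.1 hB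
      obtain ⟨C₁, hC₁, g, hgF, hg0, hg1⟩ := witness_of_mem hq.1 hC
      refine ⟨B₁ ∩ C₁, ⟨B₁, hB₁, C₁, hC₁, rfl⟩, f + g - f * g, ?_, ?_, ?_⟩
      · exact sub_mem (add_mem hfF hgF) (mul_mem hfF hgF)
      · intro x hx
        simp [hf0 x hx.1, hg0 x hx.2]
      · intro x hx
        rcases Classical.em (x ∈ B) with hxB | hxB
        · have hxC : x ∉ C := fun h => hx ⟨hxB, h⟩
          simp [hg1 x hxC]
        · simp [hf1 x hxB]
  have h1 : genFilter ℬ = p := hp.2 _ hgen (hpb.trans subset_genFilter)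
  have h2 : q ⊆ p := h1 ▸ (hqb.trans subset_genFilter)
  exact hne (hq.2 p hp.1 h2)

lemma mem_hatSet {A : Set X} {p : Delta F} : p ∈ hatSet F A ↔ A ∈ p.1 := Iff.rfl

lemma isOpen_hatSet (F : StarSubalgebra ℂ (BoundedContinuousFunction X ℂ)) (A : Set X) :
    IsOpen (hatSet F A) :=
  TopologicalSpace.GenerateOpen.basic _ ⟨A, rfl⟩

lemma t2space_delta (F : StarSubalgebra ℂ (BoundedContinuousFunction X ℂ)) :
    T2Space (Delta F) := by
  constructor
  intro p q hne
  have hne' : p.1 ≠ q.1 := fun h => hne (Subtype.ext h)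
  obtain ⟨B, hB, C, hC, hBC⟩ := exists_disjoint_of_ne p.2 q.2 hne'
  refine ⟨hatSet F B, hatSet F C, isOpen_hatSet F B, isOpen_hatSet F C, hB, hC, ?_⟩
  rw [Set.disjoint_iff_inter_eq_empty]
  ext r
  simp only [Set.mem_inter_iff, mem_hatSet, Set.mem_empty_iff_false, iff_false]
  rintro ⟨h1, h2⟩
  exact r.2.1.1.2.2.2 (hBC ▸ r.2.1.1.2.1 B h1 C h2)

end Aux
section FC

variable {F : StarSubalgebra ℂ (BoundedContinuousFunction X ℂ)}

/-- Urysohn-type lemma inside `F` via polynomial approximation and closedness. -/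
lemma exists_cutoff (hF : IsClosed (F : Set (BoundedContinuousFunction X ℂ)))
    {f : BoundedContinuousFunction X ℂ} (hf : f ∈ F) {s t : ℝ} (hs : 0 ≤ s) (hst : s < t) :
    ∃ g ∈ F, (∀ x, ‖f x‖ ≤ s → g x = 0) ∧ (∀ x, t ≤ ‖f x‖ → g x = 1) := by
  classical
  set b : BoundedContinuousFunction X ℂ := star f * f with hbdef
  have hb : b ∈ F := mul_mem (star_mem hf) hf
  set u : X → ℝ := fun x => Complex.normSq (f x) with hudef
  have hbx : ∀ x, b x = (u x : ℂ) := by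
    intro x
    simp only [hbdef, BoundedContinuousFunction.coe_mul, Pi.mul_apply,
      BoundedContinuousFunction.coe_star, Pi.star_apply, Complex.star_def, hudef]
    exact (Complex.normSq_eq_conj_mul_self).symm
  have hux : ∀ x, u x = ‖f x‖ ^ 2 := by
    intro x
    rw [hudef]
    simp [Complex.normSq_eq_norm_sq]
  set c : ℝ := ‖b‖ + 1 with hcdef
  have hc0 : (0:ℝ) ≤ c := by positivity
  have huIcc : ∀ x, u x ∈ Set.Icc (-c) c := by
    intro x
    have h0 : 0 ≤ u x := Complex.normSq_nonneg _
    have h1 : ‖b x‖ ≤ ‖b‖ := BoundedContinuousFunction.norm_coe_le_norm b x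
    rw [hbx x, Complex.norm_real, Real.norm_eq_abs, abs_of_nonneg h0] at h1
    constructor <;> [linarith; linarith]
  have hd : 0 < t ^ 2 - s ^ 2 := by nlinarith
  set h : ℝ → ℝ := fun w => max 0 (min 1 ((w - s ^ 2) / (t ^ 2 - s ^ 2))) with hhdef
  have hcont : Continuous h := by
    apply Continuous.max continuous_const
    apply Continuous.min continuous_const
    exact (continuous_id.sub continuous_const).div_const _
  have hh0 : ∀ w, w ≤ s ^ 2 → h w = 0 := by
    intro w hw
    have : (w - s ^ 2) / (t ^ 2 - s ^ 2) ≤ 0 := div_nonpos_of_nonpos_of_nonneg (by linarith) hd.le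
    rw [hhdef]
    simp only []
    rw [min_eq_right (by linarith), max_eq_left this]
  have hh1 : ∀ w, t ^ 2 ≤ w → h w = 1 := by
    intro w hw
    have : (1:ℝ) ≤ (w - s ^ 2) / (t ^ 2 - s ^ 2) := (le_div_iff₀ hd).mpr (by linarith)
    rw [hhdef]
    simp only []
    rw [min_eq_left this, max_eq_right zero_le_one]
  have hhmem : ∀ w, 0 ≤ h w ∧ h w ≤ 1 := by
    intro w
    refine ⟨le_max_left _ _, ?_⟩
    rw [hhdef]
    simp only []
    exact max_le (by linarith [min_le_left (1:ℝ) ((w - s ^ 2) / (t ^ 2 - s ^ 2))])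
      (min_le_left _ _)
  -- Stone–Weierstrass approximation
  have hSW : ∀ ε : ℝ, 0 < ε → ∃ q : Polynomial ℝ, ∀ w ∈ Set.Icc (-c) c,
      |h w - q.eval w| ≤ ε := by
    intro ε hε
    set H : C(Set.Icc (-c) c, ℝ) := ⟨fun w => h w, hcont.comp continuous_subtype_val⟩ with hH
    have h1 := polynomialFunctions_closure_eq_top (-c) c
    have hHmem : H ∈ (polynomialFunctions (Set.Icc (-c) c)).topologicalClosure := by
      rw [h1]; trivial
    rw [← SetLike.mem_coe, Subalgebra.topologicalClosure_coe] at hHmem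
    obtain ⟨P, hP, hdist⟩ := Metric.mem_closure_iff.mp hHmem ε hε
    rw [polynomialFunctions_coe] at hP
    obtain ⟨q, rfl⟩ := hP
    refine ⟨q, fun w hw => ?_⟩
    have h2 := ContinuousMap.dist_apply_le_dist (f := H)
      (g := Polynomial.toContinuousMapOnAlgHom (Set.Icc (-c) c) q) (⟨w, hw⟩ : Set.Icc (-c) c)
    have h3 : dist (H ⟨w, hw⟩) ((Polynomial.toContinuousMapOnAlgHom (Set.Icc (-c) c) q) ⟨w, hw⟩)
        ≤ ε := h2.trans hdist.le
    simpa [hH, Polynomial.toContinuousMapOnAlgHom, Polynomial.toContinuousMapOn,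
      Polynomial.toContinuousMap, Real.dist_eq] using h3
  choose q hq using fun n : ℕ => hSW (1 / (n + 1)) (by positivity)
  -- the candidate limit
  set G : BoundedContinuousFunction X ℂ :=
    BoundedContinuousFunction.ofNormedAddCommGroupDiscrete (fun x => (h (u x) : ℂ)) 1
      (by
        intro x
        rw [Complex.norm_real, Real.norm_eq_abs, abs_of_nonneg (hhmem (u x)).1]
        exact (hhmem (u x)).2) with hGdef
  have hGx : ∀ x, G x = (h (u x) : ℂ) := fun x => rfl
  -- the approximating elements of F
  set g : ℕ → BoundedContinuousFunction X ℂ := fun n =>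
    ∑ i ∈ Finset.range ((q n).natDegree + 1), ((q n).coeff i : ℂ) • b ^ i with hgdef
  have hgmem : ∀ n, g n ∈ F := by
    intro n
    apply sum_mem
    intro i _
    have : ((q n).coeff i : ℂ) • b ^ i ∈ F.toSubalgebra :=
      F.toSubalgebra.smul_mem (pow_mem hb i) _
    exact this
  have hgx : ∀ n x, g n x = (((q n).eval (u x) : ℝ) : ℂ) := by
    intro n x
    rw [hgdef]
    have hsum : (∑ i ∈ Finset.range ((q n).natDegree + 1), ((q n).coeff i : ℂ) • b ^ i) x
        = ∑ i ∈ Finset.range ((q n).natDegree + 1), ((q n).coeff i : ℂ) * (u x : ℂ) ^ i := by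
      rw [BoundedContinuousFunction.coe_sum, Finset.sum_apply]
      refine Finset.sum_congr rfl fun i _ => ?_
      simp only [BoundedContinuousFunction.coe_smul, Pi.smul_apply,
        BoundedContinuousFunction.coe_pow, Pi.pow_apply, smul_eq_mul, hbx x]
    have he : (q n).eval (u x) = ∑ i ∈ Finset.range ((q n).natDegree + 1),
        (q n).coeff i * u x ^ i := Polynomial.eval_eq_sum_range (u x)
    rw [hsum, he]
    push_cast
    ring
  have hnorm : ∀ n, ‖g n - G‖ ≤ 1 / (n + 1) := by
    intro n
    rw [BoundedContinuousFunction.norm_le (by positivity)]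
    intro x
    rw [BoundedContinuousFunction.coe_sub, Pi.sub_apply, hgx n x, hGx x, ← Complex.ofReal_sub,
      Complex.norm_real, Real.norm_eq_abs, abs_sub_comm]
    exact hq n (u x) (huIcc x)
  have htend : Filter.Tendsto g Filter.atTop (nhds G) := by
    rw [tendsto_iff_norm_sub_tendsto_zero]
    refine squeeze_zero (fun n => norm_nonneg _) hnorm ?_
    exact tendsto_one_div_add_atTop_nhds_zero_nat
  have hGF : G ∈ F := hF.mem_of_tendsto htend (Filter.Eventually.of_forall hgmem)
  refine ⟨G, hGF, ?_, ?_⟩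
  · intro x hx
    rw [hGx x, hh0 (u x) (by rw [hux x]; nlinarith [norm_nonneg (f x)])]
    simp
  · intro x hx
    rw [hGx x, hh1 (u x) (by rw [hux x]; nlinarith [norm_nonneg (f x)])]
    simp

end FC
section Chi

variable {F : StarSubalgebra ℂ (BoundedContinuousFunction X ℂ)}

lemma const_mem (F : StarSubalgebra ℂ (BoundedContinuousFunction X ℂ)) (c : ℂ) :
    BoundedContinuousFunction.const X c ∈ F := by
  have h := F.algebraMap_mem c
  have : algebraMap ℂ (BoundedContinuousFunction X ℂ) c = BoundedContinuousFunction.const X c := by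
    ext x
    rw [BoundedContinuousFunction.algebraMap_apply]
    simp [BoundedContinuousFunction.const_apply]
  rwa [this] at h

/-- The "limit along an F-ultrafilter" of an element of F. -/
lemma exists_chi (hF : IsClosed (F : Set (BoundedContinuousFunction X ℂ)))
    {p : Set (Set X)} (hp : FUltrafilter F p)
    {f : BoundedContinuousFunction X ℂ} (hf : f ∈ F) :
    ∃ c : ℂ, ∀ s : ℝ, 0 < s → {x | ‖f x - c‖ ≤ s} ∈ p := by
  classical
  -- the associated Lean filter
  set 𝔽 : Filter X :=
    { sets := p
      univ_sets := univ_mem_of_isSetFilter hp.1.1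
      sets_of_superset := fun hA hAB => hp.1.1.2.2.1 _ hA _ hAB
      inter_sets := fun hA hB => hp.1.1.2.1 _ hA _ hB } with h𝔽
  have hmem𝔽 : ∀ {A : Set X}, A ∈ 𝔽 ↔ A ∈ p := Iff.rfl
  haveI hNB : 𝔽.NeBot := by
    rw [← Filter.forall_mem_nonempty_iff_neBot]
    intro A hA
    exact hp.1.2.2.1 A hA
  haveI : (Filter.map (fun x => f x) 𝔽).NeBot := Filter.map_neBot
  have hle : Filter.map (fun x => f x) 𝔽 ≤ Filter.principal (Metric.closedBall 0 ‖f‖) := by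
    rw [Filter.le_principal_iff, Filter.mem_map]
    have : (fun x => f x) ⁻¹' (Metric.closedBall 0 ‖f‖) = Set.univ := by
      ext x
      simp only [Set.mem_preimage, Metric.mem_closedBall, Set.mem_univ, iff_true,
        dist_zero_right]
      exact BoundedContinuousFunction.norm_coe_le_norm f x
    rw [this]
    exact univ_mem_of_isSetFilter hp.1.1
  obtain ⟨c, -, hclus⟩ := (isCompact_closedBall (0:ℂ) ‖f‖).exists_clusterPt hle
  -- cluster point property
  have hcl : ∀ s : ℝ, 0 < s → ∀ B ∈ p, ∃ x ∈ B, ‖f x - c‖ < s := by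
    intro s hs B hB
    have hU : Metric.ball c s ∈ nhds c := Metric.ball_mem_nhds c hs
    have hV : (fun x => f x) '' B ∈ Filter.map (fun x => f x) 𝔽 :=
      Filter.image_mem_map (hmem𝔽.mpr hB)
    obtain ⟨z, hz1, hz2⟩ := clusterPt_iff_nonempty.mp hclus hU hV
    obtain ⟨x, hxB, rfl⟩ := hz2
    exact ⟨x, hxB, by rwa [Metric.mem_ball, dist_eq_norm] at hz1⟩
  refine ⟨c, ?_⟩
  -- the merge construction
  set ℬ : Set (Set X) := {S | ∃ r : ℝ, 0 < r ∧ ∃ B ∈ p, S = {x | ‖f x - c‖ ≤ r} ∩ B} with hℬ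
  have hf' : f - BoundedContinuousFunction.const X c ∈ F := sub_mem hf (const_mem F c)
  have hf'x : ∀ x, (f - BoundedContinuousFunction.const X c) x = f x - c := by
    intro x; simp
  have hgen : FFilter F (genFilter ℬ) := by
    refine genFilter_FFilter ?_ ?_ ?_ ?_
    · refine ⟨‖f‖ + ‖c‖ + 1, by positivity, Set.univ, univ_mem_of_isSetFilter hp.1.1, ?_⟩
      symm
      rw [Set.inter_univ, Set.eq_univ_iff_forall]
      intro x
      have h1 : ‖f x - c‖ ≤ ‖f x‖ + ‖c‖ := norm_sub_le _ _
      have h2 : ‖f x‖ ≤ ‖f‖ := BoundedContinuousFunction.norm_coe_le_norm f x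
      simp only [Set.mem_setOf_eq]
      linarith
    · rintro S ⟨r, hr, B, hB, rfl⟩
      obtain ⟨x, hxB, hx⟩ := hcl r hr B hB
      exact ⟨x, hx.le, hxB⟩
    · rintro S ⟨r, hr, B, hB, rfl⟩ S' ⟨r', hr', B', hB', rfl⟩
      refine ⟨{x | ‖f x - c‖ ≤ min r r'} ∩ (B ∩ B'),
        ⟨min r r', lt_min hr hr', B ∩ B', hp.1.1.2.1 B hB B' hB', rfl⟩, ?_⟩
      rintro x ⟨hx1, hx2, hx3⟩
      have hx1' : ‖f x - c‖ ≤ min r r' := hx1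
      exact ⟨⟨le_trans hx1' (min_le_left _ _), hx2⟩,
        Set.mem_setOf_eq ▸ le_trans hx1' (min_le_right _ _), hx3⟩
    · rintro S ⟨r, hr, B, hB, rfl⟩ hSu
      obtain ⟨u, huF, hu0, hu1⟩ := exists_cutoff hF hf' (le_of_lt (by positivity : (0:ℝ) < r/2))
        (by linarith : r / 2 < r)
      obtain ⟨B₁, hB₁, v, hvF, hv0, hv1⟩ := witness_of_mem hp.1 hB
      refine ⟨{x | ‖f x - c‖ ≤ r / 2} ∩ B₁, ⟨r / 2, by positivity, B₁, hB₁, rfl⟩,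
        u + v - u * v, sub_mem (add_mem huF hvF) (mul_mem huF hvF), ?_, ?_⟩
      · rintro x ⟨hx1, hx2⟩
        have h1 : u x = 0 := hu0 x (by rwa [hf'x])
        have h2 : v x = 0 := hv0 x hx2
        simp [h1, h2]
      · intro x hx
        rcases Classical.em (‖f x - c‖ ≤ r) with hxr | hxr
        · have hxB : x ∉ B := fun h => hx ⟨hxr, h⟩
          have h2 : v x = 1 := hv1 x hxB
          simp [h2]
        · have h1 : u x = 1 := hu1 x (by rw [hf'x]; linarith [not_le.mp hxr])
          simp [h1]
  have hsub : p ⊆ genFilter ℬ := by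
    intro B hB
    refine ⟨{x | ‖f x - c‖ ≤ ‖f‖ + ‖c‖ + 1} ∩ B, ⟨‖f‖ + ‖c‖ + 1, by positivity, B, hB, rfl⟩,
      Set.inter_subset_right⟩
  have heq : genFilter ℬ = p := hp.2 _ hgen hsub
  intro s hs
  rw [← heq]
  exact ⟨{x | ‖f x - c‖ ≤ s} ∩ Set.univ, ⟨s, hs, Set.univ, univ_mem_of_isSetFilter hp.1.1, rfl⟩,
    Set.inter_subset_left⟩

end Chi
section Compact

variable {F : StarSubalgebra ℂ (BoundedContinuousFunction X ℂ)}

lemma norm_aux {a b : ℂ} : ‖b‖ ≤ ‖a - b‖ + ‖a‖ := by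
  calc ‖b‖ = ‖b - a + a‖ := by rw [sub_add_cancel]
  _ ≤ ‖b - a‖ + ‖a‖ := norm_add_le _ _
  _ = ‖a - b‖ + ‖a‖ := by rw [norm_sub_rev]

lemma eq_zero_of_norm_le_all {c : ℂ} (h : ∀ s : ℝ, 0 < s → ‖c‖ ≤ s) : c = 0 := by
  rw [← norm_le_zero_iff]
  refine le_of_forall_pos_le_add fun ε hε => ?_
  simpa using h ε hε

lemma ultrafilter_converges (hF : IsClosed (F : Set (BoundedContinuousFunction X ℂ)))
    (𝒰 : Ultrafilter (Delta F)) :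
    ∃ p : Delta F, ∀ A ∈ p.1, hatSet F A ∈ 𝒰 := by
  classical
  -- the limit function χ
  have hchi : ∀ (q : Delta F) (f : BoundedContinuousFunction X ℂ), f ∈ F →
      ∃ c : ℂ, ∀ s : ℝ, 0 < s → {x | ‖f x - c‖ ≤ s} ∈ q.1 :=
    fun q f hf => exists_chi hF q.2 hf
  choose χ hχ using hchi
  -- basic facts about χ
  have hne : ∀ (q : Delta F) (A : Set X), A ∈ q.1 → A.Nonempty := fun q A hA => q.2.1.2.2.1 A hA
  have hint : ∀ (q : Delta F) (A B : Set X), A ∈ q.1 → B ∈ q.1 → A ∩ B ∈ q.1 :=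
    fun q A B hA hB => q.2.1.1.2.1 A hA B hB
  have hup : ∀ (q : Delta F) (A B : Set X), A ∈ q.1 → A ⊆ B → B ∈ q.1 :=
    fun q A B hA hAB => q.2.1.1.2.2.1 A hA B hAB
  have hbd : ∀ (q : Delta F) (f : BoundedContinuousFunction X ℂ) (hf : f ∈ F),
      ‖χ q f hf‖ ≤ ‖f‖ := by
    intro q f hf
    refine le_of_forall_pos_le_add fun ε hε => ?_
    obtain ⟨x, hx⟩ := hne q _ (hχ q f hf ε hε)
    have h1 : ‖f x - χ q f hf‖ ≤ ε := hx
    have h2 : ‖f x‖ ≤ ‖f‖ := BoundedContinuousFunction.norm_coe_le_norm f x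
    have := norm_aux (a := f x) (b := χ q f hf)
    linarith
  -- the limit of χ along 𝒰
  have hPhi : ∀ (f : BoundedContinuousFunction X ℂ) (hf : f ∈ F), ∃ d : ℂ,
      Filter.Tendsto (fun q => χ q f hf) (𝒰 : Filter (Delta F)) (nhds d) := by
    intro f hf
    have hle : ↑(Ultrafilter.map (fun q => χ q f hf) 𝒰) ≤
        Filter.principal (Metric.closedBall (0:ℂ) ‖f‖) := by
      rw [Ultrafilter.coe_map, Filter.le_principal_iff, Filter.mem_map]
      have : (fun q => χ q f hf) ⁻¹' Metric.closedBall (0:ℂ) ‖f‖ = Set.univ := by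
        ext q
        simp only [Set.mem_preimage, Metric.mem_closedBall, dist_zero_right, Set.mem_univ,
          iff_true]
        exact hbd q f hf
      rw [this]
      exact Filter.univ_mem
    obtain ⟨d, -, hd⟩ := isCompact_iff_ultrafilter_le_nhds.mp
      (ProperSpace.isCompact_closedBall (0:ℂ) ‖f‖) (Ultrafilter.map (fun q => χ q f hf) 𝒰) hle
    rw [Ultrafilter.coe_map] at hd
    exact ⟨d, hd⟩
  choose Φ hΦ using hPhi
  -- the shift property of χ
  have hshift : ∀ (q : Delta F) (g : BoundedContinuousFunction X ℂ) (hg : g ∈ F) (d : ℂ)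
      (hg' : g - BoundedContinuousFunction.const X d ∈ F),
      χ q (g - BoundedContinuousFunction.const X d) hg' = χ q g hg - d := by
    intro q g hg d hg'
    rw [← sub_eq_zero]
    apply eq_zero_of_norm_le_all
    intro s hs
    have h1 := hχ q g hg (s/2) (by positivity)
    have h2 := hχ q _ hg' (s/2) (by positivity)
    obtain ⟨x, hx1, hx2⟩ := hne q _ (hint q _ _ h1 h2)
    have hx1' : ‖g x - χ q g hg‖ ≤ s/2 := hx1
    have hx2' : ‖(g - BoundedContinuousFunction.const X d) x -
        χ q (g - BoundedContinuousFunction.const X d) hg'‖ ≤ s/2 := hx2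
    rw [show (g - BoundedContinuousFunction.const X d) x = g x - d by simp] at hx2'
    calc ‖χ q (g - BoundedContinuousFunction.const X d) hg' - (χ q g hg - d)‖
        = ‖(g x - χ q g hg) - ((g x - d) - χ q (g - BoundedContinuousFunction.const X d) hg')‖ :=
          by ring_nf
      _ ≤ ‖g x - χ q g hg‖ + ‖(g x - d) - χ q (g - BoundedContinuousFunction.const X d) hg'‖ :=
          norm_sub_le _ _
      _ ≤ s := by linarith
  -- the base of the limit filter
  set N : Set (BoundedContinuousFunction X ℂ) :=
    {g | ∃ hg : g ∈ F, Filter.Tendsto (fun q => χ q g hg) (𝒰 : Filter (Delta F)) (nhds 0)}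
    with hN
  set ℬ : Set (Set X) := {S | ∃ g ∈ N, ∃ r : ℝ, 0 < r ∧ S = {x | ‖g x‖ ≤ r}} with hℬ
  -- membership of hats of base sets in 𝒰
  have hhat : ∀ (g : BoundedContinuousFunction X ℂ) (hg : g ∈ F) (r : ℝ), 0 < r →
      ∀ q : Delta F, ‖χ q g hg‖ < r → {x | ‖g x‖ ≤ r} ∈ q.1 := by
    intro g hg r hr q hq
    refine hup q _ _ (hχ q g hg (r - ‖χ q g hg‖) (by linarith)) ?_
    intro x hx
    have hx' : ‖g x - χ q g hg‖ ≤ r - ‖χ q g hg‖ := hx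
    have := norm_aux (a := χ q g hg) (b := g x)
    have : ‖g x‖ ≤ ‖χ q g hg - g x‖ + ‖χ q g hg‖ := norm_aux
    rw [norm_sub_rev] at this
    simp only [Set.mem_setOf_eq]
    linarith
  have hhatU : ∀ g ∈ N, ∀ r : ℝ, 0 < r → hatSet F {x | ‖g x‖ ≤ r} ∈ 𝒰 := by
    rintro g ⟨hg, htend⟩ r hr
    have hmem : (fun q : Delta F => χ q g hg) ⁻¹' Metric.ball 0 r ∈ (𝒰 : Filter (Delta F)) :=
      htend (Metric.ball_mem_nhds _ hr)
    refine Filter.mem_of_superset hmem (fun q hq => ?_)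
    rw [Set.mem_preimage, Metric.mem_ball, dist_zero_right] at hq
    exact hhat g hg r hr q hq
  -- ℬ generates an F-filter
  have hgen : FFilter F (genFilter ℬ) := by
    refine genFilter_FFilter ?_ ?_ ?_ ?_
    · have hz : ∀ q : Delta F, χ q 0 (zero_mem F) = 0 := by
        intro q
        apply eq_zero_of_norm_le_all
        intro s hs
        obtain ⟨x, hx⟩ := hne q _ (hχ q 0 (zero_mem F) s hs)
        have hx' : ‖(0 : BoundedContinuousFunction X ℂ) x - χ q 0 (zero_mem F)‖ ≤ s := hx
        simpa using hx'
      refine ⟨0, ⟨zero_mem F, by simp only [hz]; exact tendsto_const_nhds⟩, 1, one_pos, ?_⟩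
      symm
      rw [Set.eq_univ_iff_forall]
      intro x
      simp
    · rintro S ⟨g, hgN, r, hr, rfl⟩
      have h1 := hhatU g hgN r hr
      have h2 : (hatSet F {x | ‖g x‖ ≤ r}).Nonempty := Ultrafilter.nonempty_of_mem h1
      obtain ⟨q, hq⟩ := h2
      exact hne q _ hq
    · rintro S ⟨g, ⟨hg, hgt⟩, r, hr, rfl⟩ S' ⟨g', ⟨hg', hgt'⟩, r', hr', rfl⟩
      set k := star g * g + star g' * g' with hk
      have hkF : k ∈ F := add_mem (mul_mem (star_mem hg) hg) (mul_mem (star_mem hg') hg')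
      have hkx : ∀ x, k x = ((Complex.normSq (g x) + Complex.normSq (g' x) : ℝ) : ℂ) := by
        intro x
        simp only [hk, BoundedContinuousFunction.coe_add, Pi.add_apply,
          BoundedContinuousFunction.coe_mul, Pi.mul_apply, BoundedContinuousFunction.coe_star,
          Pi.star_apply, Complex.star_def]
        rw [← Complex.normSq_eq_conj_mul_self, ← Complex.normSq_eq_conj_mul_self]
        push_cast
        ring
      have hknorm : ∀ x, ‖k x‖ = ‖g x‖ ^ 2 + ‖g' x‖ ^ 2 := by
        intro x
        rw [hkx x, Complex.norm_real, Real.norm_eq_abs,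
          abs_of_nonneg (add_nonneg (Complex.normSq_nonneg _) (Complex.normSq_nonneg _))]
        simp [Complex.normSq_eq_norm_sq]
      -- χ of k is controlled
      have hkbound : ∀ q : Delta F, ‖χ q k hkF‖ ≤ ‖χ q g hg‖ ^ 2 + ‖χ q g' hg'‖ ^ 2 := by
        intro q
        refine le_of_forall_pos_le_add fun ε hε => ?_
        set s : ℝ := min 1 (ε / (2 * ‖χ q g hg‖ + 2 * ‖χ q g' hg'‖ + 3)) with hs
        have hspos : 0 < s := lt_min one_pos (by positivity)
        have h1 := hχ q g hg s hspos
        have h2 := hχ q g' hg' s hspos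
        have h3 := hχ q k hkF s hspos
        obtain ⟨x, hx12, hx3⟩ := hne q _ (hint q _ _ (hint q _ _ h1 h2) h3)
        obtain ⟨hx1, hx2⟩ := hx12
        have e1 : ‖g x - χ q g hg‖ ≤ s := hx1
        have e2 : ‖g' x - χ q g' hg'‖ ≤ s := hx2
        have e3 : ‖k x - χ q k hkF‖ ≤ s := hx3
        have f1 : ‖g x‖ ≤ ‖χ q g hg‖ + s := by
          have := norm_aux (a := χ q g hg) (b := g x)
          rw [norm_sub_rev] at e1
          linarith
        have f2 : ‖g' x‖ ≤ ‖χ q g' hg'‖ + s := by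
          have := norm_aux (a := χ q g' hg') (b := g' x)
          rw [norm_sub_rev] at e2
          linarith
        have f3 : ‖χ q k hkF‖ ≤ ‖k x‖ + s := by
          have := norm_aux (a := k x) (b := χ q k hkF)
          linarith
        have f4 : ‖k x‖ = ‖g x‖ ^ 2 + ‖g' x‖ ^ 2 := hknorm x
        have hs1 : s ≤ 1 := min_le_left _ _
        have hs2 : s ≤ ε / (2 * ‖χ q g hg‖ + 2 * ‖χ q g' hg'‖ + 3) := min_le_right _ _
        have hs3 : s * (2 * ‖χ q g hg‖ + 2 * ‖χ q g' hg'‖ + 3) ≤ ε := by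
          rw [← le_div_iff₀ (by positivity)]
          exact hs2
        nlinarith [norm_nonneg (g x), norm_nonneg (g' x), norm_nonneg (χ q g hg),
          norm_nonneg (χ q g' hg'), sq_nonneg s]
      have hkN : k ∈ N := by
        refine ⟨hkF, ?_⟩
        rw [tendsto_zero_iff_norm_tendsto_zero]
        refine squeeze_zero (fun q => norm_nonneg _) hkbound ?_
        have t1 : Filter.Tendsto (fun q : Delta F => ‖χ q g hg‖ ^ 2) 𝒰 (nhds 0) := by
          have := (hgt.norm).pow 2
          simpa using this
        have t2 : Filter.Tendsto (fun q : Delta F => ‖χ q g' hg'‖ ^ 2) 𝒰 (nhds 0) := by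
          have := (hgt'.norm).pow 2
          simpa using this
        simpa using t1.add t2
      refine ⟨{x | ‖k x‖ ≤ (min r r') ^ 2}, ⟨k, hkN, (min r r') ^ 2,
        pow_pos (lt_min hr hr') 2, rfl⟩, ?_⟩
      intro x hx
      have hx' : ‖k x‖ ≤ (min r r') ^ 2 := hx
      rw [hknorm x] at hx'
      have hm : 0 < min r r' := lt_min hr hr'
      constructor
      · have : ‖g x‖ ≤ min r r' := by nlinarith [norm_nonneg (g x), norm_nonneg (g' x)]
        exact Set.mem_setOf_eq ▸ this.trans (min_le_left _ _)
      · have : ‖g' x‖ ≤ min r r' := by nlinarith [norm_nonneg (g x), norm_nonneg (g' x)]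
        exact Set.mem_setOf_eq ▸ this.trans (min_le_right _ _)
    · rintro S ⟨g, hgN, r, hr, rfl⟩ hSu
      obtain ⟨hg, -⟩ := id hgN
      obtain ⟨u, huF, hu0, hu1⟩ := exists_cutoff hF hg
        (le_of_lt (by positivity : (0:ℝ) < r/2)) (by linarith : r/2 < r)
      refine ⟨{x | ‖g x‖ ≤ r/2}, ⟨g, hgN, r/2, by positivity, rfl⟩, u, huF, ?_, ?_⟩
      · intro x hx
        exact hu0 x hx
      · intro x hx
        have : ¬ ‖g x‖ ≤ r := hx
        exact hu1 x (by linarith [not_le.mp this])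
  -- extend to an F-ultrafilter
  obtain ⟨p', hp', hsub'⟩ := exists_fUltrafilter_ge hgen
  set p : Delta F := ⟨p', hp'⟩ with hpdef
  have hℬp : ℬ ⊆ p.1 := subset_genFilter.trans hsub'
  refine ⟨p, ?_⟩
  intro A hA
  by_cases hAu : A = Set.univ
  · subst hAu
    have : hatSet F Set.univ = Set.univ := by
      rw [Set.eq_univ_iff_forall]
      intro q
      exact univ_mem_of_isSetFilter q.2.1.1
    rw [this]
    exact Filter.univ_mem
  · obtain ⟨B, hB, f, hf, hf0, hf1⟩ := p.2.1.2.2.2 A hA hAu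
    -- χ p f = 0
    have hc0 : χ p f hf = 0 := by
      apply eq_zero_of_norm_le_all
      intro s hs
      obtain ⟨x, hx1, hx2⟩ := hne p _ (hint p _ _ (hχ p f hf s hs) hB)
      have hx1' : ‖f x - χ p f hf‖ ≤ s := hx1
      rw [hf0 x hx2, zero_sub, norm_neg] at hx1'
      exact hx1'
    -- Φ f = 0
    set d := Φ f hf with hd
    have hfd : f - BoundedContinuousFunction.const X d ∈ F := sub_mem hf (const_mem F d)
    have hfdN : f - BoundedContinuousFunction.const X d ∈ N := by
      refine ⟨hfd, ?_⟩
      have heq : (fun q : Delta F => χ q (f - BoundedContinuousFunction.const X d) hfd)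
          = fun q => χ q f hf - d := by
        funext q
        exact hshift q f hf d hfd
      rw [heq]
      simpa [← hd] using (hΦ f hf).sub_const d
    have hd0 : d = 0 := by
      apply eq_zero_of_norm_le_all
      intro s hs
      have m1 : {x | ‖(f - BoundedContinuousFunction.const X d) x‖ ≤ s/2} ∈ p.1 :=
        hℬp ⟨_, hfdN, s/2, by positivity, rfl⟩
      have m2 := hχ p f hf (s/2) (by positivity)
      rw [hc0] at m2
      obtain ⟨x, hx1, hx2⟩ := hne p _ (hint p _ _ m1 m2)
      have hx1' : ‖(f - BoundedContinuousFunction.const X d) x‖ ≤ s/2 := hx1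
      have hx2' : ‖f x - 0‖ ≤ s/2 := hx2
      rw [show (f - BoundedContinuousFunction.const X d) x = f x - d by simp] at hx1'
      rw [sub_zero] at hx2'
      calc ‖d‖ = ‖f x - (f x - d)‖ := by ring_nf
        _ ≤ ‖f x‖ + ‖f x - d‖ := norm_sub_le _ _
        _ ≤ s := by linarith
    -- conclude
    have htf : Filter.Tendsto (fun q : Delta F => χ q f hf) 𝒰 (nhds 0) := by
      have := hΦ f hf
      rwa [← hd, hd0] at this
    have hmem : (fun q : Delta F => χ q f hf) ⁻¹' Metric.ball 0 (1/2) ∈ (𝒰 : Filter (Delta F)) :=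
      htf (Metric.ball_mem_nhds (0:ℂ) (by norm_num : (0:ℝ) < 1/2))
    refine Filter.mem_of_superset hmem ?_
    intro q hq
    rw [Set.mem_preimage, Metric.mem_ball, dist_zero_right] at hq
    have h3 : {x | ‖f x‖ ≤ 1/2} ∈ q.1 := hhat f hf (1/2) (by norm_num) q hq
    refine hup q _ _ h3 ?_
    intro x hx
    by_contra hxA
    have : ‖f x‖ ≤ 1/2 := hx
    rw [hf1 x hxA] at this
    norm_num at this

end Compact
theorem stmt10 (F : StarSubalgebra ℂ (BoundedContinuousFunction X ℂ)) (hF : IsClosed (F : Set (BoundedContinuousFunction X ℂ))) (e : X → Delta F) (he : ∀ x : X, (e x).1 = {A : Set X | A ∈ @nhds X (tauF F) x}) :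
    CompactSpace (Delta F) ∧ T2Space (Delta F) ∧ Dense (Set.range e) := by
  refine ⟨?_, t2space_delta F, ?_⟩
  · -- compactness
    rw [← isCompact_univ_iff, isCompact_iff_ultrafilter_le_nhds]
    intro 𝒰 h𝒰
    obtain ⟨p, hp⟩ := ultrafilter_converges hF 𝒰
    refine ⟨p, trivial, ?_⟩
    rw [le_nhds_iff]
    intro U hpU hUopen
    have hg : TopologicalSpace.GenerateOpen {S | ∃ A : Set X, S = hatSet F A} U := hUopen
    clear hUopen
    have key : ∀ V : Set (Delta F),
        TopologicalSpace.GenerateOpen {S | ∃ A : Set X, S = hatSet F A} V →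
        p ∈ V → V ∈ (𝒰 : Filter (Delta F)) := by
      intro V hV
      induction hV with
      | basic S hS =>
        obtain ⟨A, rfl⟩ := hS
        exact fun hq => hp A hq
      | univ => exact fun _ => Filter.univ_mem
      | inter U' V' hU' hV' ihU ihV => exact fun hq => Filter.inter_mem (ihU hq.1) (ihV hq.2)
      | sUnion S hS ih =>
        rintro ⟨W, hWS, hpW⟩
        exact Filter.mem_of_superset (ih W hWS hpW) (Set.subset_sUnion_of_mem hWS)
    exact key U hg hpU
  · -- density
    rw [dense_iff_inter_open]
    intro U hUopen hUne
    obtain ⟨p, hpU⟩ := hUne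
    have hg : TopologicalSpace.GenerateOpen {S | ∃ A : Set X, S = hatSet F A} U := hUopen
    have key : ∀ V : Set (Delta F),
        TopologicalSpace.GenerateOpen {S | ∃ A : Set X, S = hatSet F A} V →
        ∀ q : Delta F, q ∈ V → ∃ A : Set X, A ∈ q.1 ∧ hatSet F A ⊆ V := by
      intro V hV
      induction hV with
      | basic S hS =>
        obtain ⟨A, rfl⟩ := hS
        exact fun q hq => ⟨A, hq, subset_rfl⟩
      | univ =>
        exact fun q _ => ⟨Set.univ, univ_mem_of_isSetFilter q.2.1.1, Set.subset_univ _⟩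
      | inter U' V' hU' hV' ihU ihV =>
        intro q hq
        obtain ⟨A, hA, hAs⟩ := ihU q hq.1
        obtain ⟨B, hB, hBs⟩ := ihV q hq.2
        refine ⟨A ∩ B, q.2.1.1.2.1 A hA B hB, ?_⟩
        intro r hr
        exact ⟨hAs (r.2.1.1.2.2.1 _ hr _ Set.inter_subset_left),
          hBs (r.2.1.1.2.2.1 _ hr _ Set.inter_subset_right)⟩
      | sUnion S hS ih =>
        intro q hq
        obtain ⟨W, hWS, hqW⟩ := hq
        obtain ⟨A, hA, hAs⟩ := ih W hWS q hqW
        exact ⟨A, hA, hAs.trans (Set.subset_sUnion_of_mem hWS)⟩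
    obtain ⟨A, hA, hAs⟩ := key U hg p hpU
    -- produce a point of X whose neighbourhood filter contains A
    by_cases hAu : A = Set.univ
    · obtain ⟨x₀⟩ := ‹Nonempty X›
      refine ⟨e x₀, hAs ?_, ⟨x₀, rfl⟩⟩
      show A ∈ (e x₀).1
      rw [he x₀, hAu]
      exact Filter.univ_mem
    · obtain ⟨B, hB, f, hf, hf0, hf1⟩ := p.2.1.2.2.2 A hA hAu
      obtain ⟨x, hxB⟩ := p.2.1.2.2.1 B hB
      have hto : tauF F ≤ TopologicalSpace.induced (fun y => f y) inferInstance := by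
        rw [tauF]
        exact iInf₂_le f hf
      set V : Set X := (fun y => f y) ⁻¹' Metric.ball (0:ℂ) 1 with hVdef
      have hVopen : @IsOpen X (tauF F) V := by
        refine (isOpen_implies_isOpen_iff.mpr hto) V ?_
        exact ⟨Metric.ball (0:ℂ) 1, Metric.isOpen_ball, rfl⟩
      have hxV : x ∈ V := by
        simp only [hVdef, Set.mem_preimage, Metric.mem_ball, dist_zero_right]
        rw [hf0 x hxB]
        norm_num
      have hVA : V ⊆ A := by
        intro y hy
        by_contra hyA
        have h1 : ‖f y‖ < 1 := by
          simpa [hVdef, Metric.mem_ball, dist_zero_right] using hy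
        rw [hf1 y hyA] at h1
        norm_num at h1
      have hnhds : A ∈ @nhds X (tauF F) x := by
        letI : TopologicalSpace X := tauF F
        exact Filter.mem_of_superset (hVopen.mem_nhds hxV) hVA
      refine ⟨e x, hAs ?_, ⟨x, rfl⟩⟩
      show A ∈ (e x).1
      rw [he x]
      exact hnhds
end

section
/- If φ is an F-filter on X, then φ̂ equals the intersection over all A ∈ φ of the closure of e(A) in δX. -/
open Set

variable {X : Type*} [Nonempty X] [TopologicalSpace X] [DiscreteTopology X]

/-- The sets `Â` form a topological basis of `δX`. -/
lemma delta_basis (F : StarSubalgebra ℂ (BoundedContinuousFunction X ℂ)) :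
    TopologicalSpace.IsTopologicalBasis {S : Set (Delta F) | ∃ A : Set X, S = hatSet F A} := by
  have hup : ∀ p : Delta F, ∀ A ∈ p.1, ∀ B : Set X, A ⊆ B → B ∈ p.1 := fun p =>
    p.2.1.1.2.2.1
  have hint : ∀ p : Delta F, ∀ A ∈ p.1, ∀ B ∈ p.1, A ∩ B ∈ p.1 := fun p =>
    p.2.1.1.2.1
  have huniv : ∀ p : Delta F, (Set.univ : Set X) ∈ p.1 := by
    intro p
    obtain ⟨A, hA⟩ := p.2.1.1.1
    exact hup p A hA _ (Set.subset_univ A)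
  refine ⟨?_, ?_, rfl⟩
  · rintro t₁ ⟨A₁, rfl⟩ t₂ ⟨A₂, rfl⟩ p ⟨hp₁, hp₂⟩
    refine ⟨hatSet F (A₁ ∩ A₂), ⟨A₁ ∩ A₂, rfl⟩, hint p A₁ hp₁ A₂ hp₂, ?_⟩
    rintro q hq
    exact ⟨hup q _ hq _ Set.inter_subset_left, hup q _ hq _ Set.inter_subset_right⟩
  · refine Set.eq_univ_of_forall fun p => ?_
    exact ⟨hatSet F Set.univ, ⟨Set.univ, rfl⟩, huniv p⟩

/-- A closed star subalgebra of `ℓ∞(X)` is stable under composition with continuous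
functions `ℂ → ℂ`. -/
lemma comp_mem_of_closed (F : StarSubalgebra ℂ (BoundedContinuousFunction X ℂ))
    (hF : IsClosed (F : Set (BoundedContinuousFunction X ℂ)))
    {f : BoundedContinuousFunction X ℂ} (hf : f ∈ F) (u : ℂ → ℂ) (hu : Continuous u) :
    ∃ g ∈ F, ∀ x, g x = u (f x) := by
  set K : Set ℂ := Metric.closedBall 0 ‖f‖ with hK
  haveI : CompactSpace K := isCompact_iff_compactSpace.mp (isCompact_closedBall 0 ‖f‖)
  have hfK : ∀ x, f x ∈ K := fun x => by
    simpa [hK, Metric.mem_closedBall, dist_zero_right] using f.norm_coe_le_norm x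
  let toB : C(K, ℂ) → BoundedContinuousFunction X ℂ := fun g =>
    BoundedContinuousFunction.ofNormedAddCommGroup (fun x => g ⟨f x, hfK x⟩)
      continuous_of_discreteTopology ‖g‖ (fun x => g.norm_coe_le_norm _)
  have toB_apply : ∀ (g : C(K, ℂ)) (x : X), toB g x = g ⟨f x, hfK x⟩ := fun g x => rfl
  let Ψ : C(K, ℂ) →⋆ₐ[ℂ] BoundedContinuousFunction X ℂ :=
    { toFun := toB
      map_one' := by ext x; simp [toB_apply]
      map_mul' := fun g h => by ext x; simp [toB_apply]
      map_zero' := by ext x; simp [toB_apply]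
      map_add' := fun g h => by ext x; simp [toB_apply]
      commutes' := fun c => by ext x; simp [toB_apply]
      map_star' := fun g => by ext x; simp [toB_apply] }
  have hΨ_apply : ∀ (g : C(K, ℂ)) (x : X), Ψ g x = g ⟨f x, hfK x⟩ := toB_apply
  have hΨcont : Continuous Ψ := by
    refine LipschitzWith.continuous (K := 1) (LipschitzWith.of_dist_le_mul fun g h => ?_)
    rw [NNReal.coe_one, one_mul]
    refine (BoundedContinuousFunction.dist_le dist_nonneg).mpr fun x => ?_
    rw [hΨ_apply, hΨ_apply]
    exact ContinuousMap.dist_apply_le_dist _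
  let S : StarSubalgebra ℂ C(K, ℂ) := F.comap Ψ
  have hS_closed : IsClosed (S : Set C(K, ℂ)) := hF.preimage hΨcont
  let ι : C(K, ℂ) := ⟨Subtype.val, continuous_subtype_val⟩
  have hι : ι ∈ S := by
    show Ψ ι ∈ F
    have : Ψ ι = f := by
      ext x; rw [hΨ_apply]; rfl
    rwa [this]
  have hsep : S.SeparatesPoints := by
    rintro x y hxy
    exact ⟨_, ⟨ι, hι, rfl⟩, fun h => hxy (Subtype.ext h)⟩
  have htop : S = ⊤ := by
    have h1 := ContinuousMap.starSubalgebra_topologicalClosure_eq_top_of_separatesPoints S hsep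
    have h2 : S.topologicalClosure ≤ S :=
      StarSubalgebra.topologicalClosure_minimal le_rfl hS_closed
    exact le_antisymm le_top (h1 ▸ h2)
  let uK : C(K, ℂ) := ⟨fun k => u k, hu.comp continuous_subtype_val⟩
  have huK : uK ∈ S := htop ▸ StarSubalgebra.mem_top
  exact ⟨Ψ uK, huK, fun x => rfl⟩

lemma mem_of_mem_nhds' {Y : Type*} [t : TopologicalSpace Y] {y : Y} {s : Set Y}
    (h : s ∈ nhds y) : y ∈ s := mem_of_mem_nhds h

lemma mem_nhds_of_continuous {Y Z : Type*} [tY : TopologicalSpace Y] [tZ : TopologicalSpace Z]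
    {f : Y → Z} (hf : Continuous f) {t : Set Z} (ht : IsOpen t) {y : Y} (hy : f y ∈ t)
    {s : Set Y} (hsub : f ⁻¹' t ⊆ s) : s ∈ nhds y :=
  Filter.mem_of_superset (IsOpen.mem_nhds (ht.preimage hf) hy) hsub

theorem stmt11 (F : StarSubalgebra ℂ (BoundedContinuousFunction X ℂ)) (hF : IsClosed (F : Set (BoundedContinuousFunction X ℂ))) (e : X → Delta F) (he : ∀ x : X, (e x).1 = {A : Set X | A ∈ @nhds X (tauF F) x})
    (φ : Set (Set X)) (hφ : FFilter F φ) :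
    hatF F φ = ⋂ A ∈ φ, closure (e '' A) := by
  obtain ⟨⟨hφne, hφinter, hφup, hφempty⟩, -, hφmem_ne, hφfam⟩ := hφ
  ext p
  obtain ⟨⟨⟨hpne, hpinter, hpup, hpempty⟩, -, hpmem_ne, hpfam⟩, hpmax⟩ := p.2
  have huniv : (Set.univ : Set X) ∈ p.1 := by
    obtain ⟨A₀, hA₀⟩ := hpne
    exact hpup A₀ hA₀ _ (Set.subset_univ A₀)
  simp only [Set.mem_iInter]
  constructor
  · -- φ̂ ⊆ ⋂ closure (e '' A)
    intro hp A hA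
    rw [(delta_basis F).mem_closure_iff]
    rintro o ⟨A', rfl⟩ hpo
    have hAp : A ∈ p.1 := hp hA
    have hA'p : A' ∈ p.1 := hpo
    by_cases hcase : A ∩ A' = Set.univ
    · obtain ⟨x, hx⟩ := hpmem_ne A hAp
      have hA'univ : A' = Set.univ := by
        apply Set.eq_univ_of_univ_subset
        rw [← hcase]; exact Set.inter_subset_right
      refine ⟨e x, ?_, ⟨x, hx, rfl⟩⟩
      show A' ∈ (e x).1
      rw [he x, hA'univ]
      exact Filter.univ_mem
    · obtain ⟨B, hBp, f, hfF, hfB, hf1⟩ :=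
        hpfam (A ∩ A') (hpinter A hAp A' hA'p) hcase
      obtain ⟨x, hxB, hxA, hxA'⟩ := hpmem_ne _ (hpinter B hBp _ (hpinter A hAp A' hA'p))
      refine ⟨e x, ?_, ⟨x, hxA, rfl⟩⟩
      show A' ∈ (e x).1
      rw [he x]
      show A' ∈ @nhds X (tauF F) x
      have hcont : @Continuous X ℂ (tauF F) _ (fun y => f y) := by
        rw [tauF]
        exact continuous_iInf_dom (i := f) (continuous_iInf_dom (i := hfF)
          continuous_induced_dom)
      have hxU : x ∈ (fun y => f y) ⁻¹' Metric.ball 0 1 := by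
        simp [Metric.mem_ball, hfB x hxB]
      refine mem_nhds_of_continuous (tY := tauF F) hcont Metric.isOpen_ball hxU ?_
      intro y hy
      by_contra hyA'
      have hyAA' : y ∉ A ∩ A' := fun h => hyA' h.2
      have hfy : f y = 1 := hf1 y hyAA'
      simp [Set.mem_preimage, Metric.mem_ball, hfy] at hy
  · -- ⋂ closure (e '' A) ⊆ φ̂
    intro hcl A hA
    by_cases hAuniv : A = Set.univ
    · rw [hAuniv]; exact huniv
    obtain ⟨B, hBφ, f, hfF, hfB, hf1⟩ := hφfam A hA hAuniv
    have hpB : p ∈ closure (e '' B) := hcl B hBφ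
    have hmeet : ∀ P ∈ p.1, ∃ x, x ∈ P ∧ f x = 0 := by
      intro P hP
      have hopen : IsOpen (hatSet F P) :=
        TopologicalSpace.isOpen_generateFrom_of_mem ⟨P, rfl⟩
      obtain ⟨q, hq, x, hxB, rfl⟩ := mem_closure_iff.mp hpB _ hopen hP
      have hPx : P ∈ @nhds X (tauF F) x := by
        have h' : P ∈ (e x).1 := hq
        rwa [he x] at h'
      exact ⟨x, mem_of_mem_nhds' (t := tauF F) hPx, hfB x hxB⟩
    set ψ : Set (Set X) := {D | ∃ P ∈ p.1, ∃ r : ℝ, 0 < r ∧ P ∩ XSet f r ⊆ D} with hψdef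
    have base_mem : ∀ P ∈ p.1, ∀ r : ℝ, 0 < r → P ∩ XSet f r ∈ ψ := fun P hP r hr =>
      ⟨P, hP, r, hr, le_refl _⟩
    have hpsub : p.1 ⊆ ψ := fun P hP =>
      ⟨P, hP, 1, one_pos, Set.inter_subset_left⟩
    have hψne_mem : ∀ D ∈ ψ, D.Nonempty := by
      rintro D ⟨P, hP, r, hr, hsub⟩
      obtain ⟨x, hxP, hfx⟩ := hmeet P hP
      exact ⟨x, hsub ⟨hxP, by simp [XSet, hfx, hr.le]⟩⟩
    have hψ_filter : IsSetFilter ψ := by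
      refine ⟨⟨Set.univ, hpsub huniv⟩, ?_, ?_, ?_⟩
      · rintro D₁ ⟨P₁, hP₁, r₁, hr₁, hs₁⟩ D₂ ⟨P₂, hP₂, r₂, hr₂, hs₂⟩
        refine ⟨P₁ ∩ P₂, hpinter P₁ hP₁ P₂ hP₂, min r₁ r₂, lt_min hr₁ hr₂, ?_⟩
        rintro x ⟨⟨hx₁, hx₂⟩, hxr⟩
        have hxr' : ‖f x‖ ≤ min r₁ r₂ := by simpa [XSet] using hxr
        exact ⟨hs₁ ⟨hx₁, le_trans hxr' (min_le_left _ _)⟩,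
          hs₂ ⟨hx₂, le_trans hxr' (min_le_right _ _)⟩⟩
      · rintro D ⟨P, hP, r, hr, hs⟩ D' hDD'
        exact ⟨P, hP, r, hr, hs.trans hDD'⟩
      · intro h
        obtain ⟨x, hx⟩ := hψne_mem ∅ h
        exact hx
    have hψ_family : FFamily F ψ := by
      refine ⟨⟨Set.univ, hpsub huniv⟩, hψne_mem, ?_⟩
      rintro D ⟨P, hP, r, hr, hPD⟩ hDuniv
      obtain ⟨g₂, hg₂F, hg₂⟩ := comp_mem_of_closed F hF hfF
        (fun z => ((min 1 (max 0 (2 * ‖z‖ / r - 1)) : ℝ) : ℂ))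
        (Complex.continuous_ofReal.comp
          (continuous_const.min (continuous_const.max
            (((continuous_const.mul continuous_norm).div_const r).sub continuous_const))))
      have hg₂0 : ∀ x : X, ‖f x‖ ≤ r / 2 → g₂ x = 0 := by
        intro x hx
        rw [hg₂ x]
        have h1 : 2 * ‖f x‖ / r - 1 ≤ 0 := by
          rw [sub_nonpos, div_le_one hr]
          linarith
        rw [max_eq_left h1, min_eq_right zero_le_one]
        simp
      have hg₂1 : ∀ x : X, r < ‖f x‖ → g₂ x = 1 := by
        intro x hx
        rw [hg₂ x]
        have h1 : (1 : ℝ) ≤ 2 * ‖f x‖ / r - 1 := by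
          rw [le_sub_iff_add_le, le_div_iff₀ hr]
          linarith
        rw [max_eq_right (le_trans zero_le_one h1), min_eq_left h1]
        simp
      obtain ⟨B₁, hB₁p, g₁, hg₁F, hg₁B, hg₁1⟩ :
          ∃ B₁ ∈ p.1, ∃ g₁ ∈ F, (∀ x ∈ B₁, g₁ x = 0) ∧ ∀ x ∉ P, g₁ x = 1 := by
        by_cases hPuniv : P = Set.univ
        · exact ⟨Set.univ, huniv, 0, zero_mem F, fun x _ => rfl,
            fun x hx => absurd (hPuniv ▸ Set.mem_univ x) hx⟩
        · exact hpfam P hP hPuniv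
      refine ⟨B₁ ∩ XSet f (r / 2), base_mem B₁ hB₁p (r / 2) (half_pos hr),
        g₁ + g₂ - g₁ * g₂,
        sub_mem (add_mem hg₁F hg₂F) (mul_mem hg₁F hg₂F), ?_, ?_⟩
      · rintro x ⟨hxB₁, hxr⟩
        have h1 : g₁ x = 0 := hg₁B x hxB₁
        have h2 : g₂ x = 0 := hg₂0 x (by simpa [XSet] using hxr)
        simp [h1, h2]
      · intro x hxD
        have hxPX : x ∉ P ∩ XSet f r := fun h => hxD (hPD h)
        have heval : (g₁ + g₂ - g₁ * g₂) x = g₁ x + g₂ x - g₁ x * g₂ x := by simp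
        rw [heval]
        by_cases hxP : x ∈ P
        · have hxX : x ∉ XSet f r := fun h => hxPX ⟨hxP, h⟩
          have hrx : r < ‖f x‖ := by
            by_contra h
            exact hxX (by simpa [XSet] using not_lt.mp h)
          rw [hg₂1 x hrx]; ring
        · rw [hg₁1 x hxP]; ring
    have hψeq : ψ = p.1 := hpmax ψ ⟨hψ_filter, hψ_family⟩ hpsub
    have hXp : XSet f (1 / 2) ∈ p.1 := by
      rw [← hψeq]
      exact ⟨Set.univ, huniv, 1 / 2, by norm_num, Set.inter_subset_right⟩
    refine hpup _ hXp A ?_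
    intro x hx
    by_contra hxA
    have hfx : f x = 1 := hf1 x hxA
    have hxn : ‖f x‖ ≤ 1 / 2 := by simpa [XSet] using hx
    rw [hfx, norm_one] at hxn
    norm_num at hxn
end

section
/- If C is a non-empty, closed subset of δX, then there exists a unique F-filter φ on X such that φ̂ = C. -/
open Set

variable {X : Type*} [Nonempty X] [TopologicalSpace X] [DiscreteTopology X]

set_option linter.unusedSectionVars false
set_option linter.unusedVariables false

namespace Stmt12

open BoundedContinuousFunction

variable {X : Type*} [Nonempty X] [TopologicalSpace X] [DiscreteTopology X]
variable {F : StarSubalgebra ℂ (BoundedContinuousFunction X ℂ)}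

/-! ### Basic filter lemmas -/

lemma univ_mem {φ : Set (Set X)} (h : IsSetFilter φ) : Set.univ ∈ φ := by
  obtain ⟨A, hA⟩ := h.1
  exact h.2.2.1 A hA _ (Set.subset_univ A)

lemma inter_mem {φ : Set (Set X)} (h : IsSetFilter φ) {A B : Set X} (hA : A ∈ φ) (hB : B ∈ φ) :
    A ∩ B ∈ φ := h.2.1 A hA B hB

lemma superset_mem {φ : Set (Set X)} (h : IsSetFilter φ) {A B : Set X} (hA : A ∈ φ)
    (hAB : A ⊆ B) : B ∈ φ := h.2.2.1 A hA B hAB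

lemma nonempty_of_mem {φ : Set (Set X)} (h : FFilter F φ) {A : Set X} (hA : A ∈ φ) :
    A.Nonempty := h.2.2.1 A hA

/-- Witness lemma: for any member `A` of an `F`-filter there are `B ∈ φ` and `f ∈ F`
with `f = 0` on `B` and `f = 1` off `A` (also when `A = univ`). -/
lemma witness {φ : Set (Set X)} (h : FFilter F φ) {A : Set X} (hA : A ∈ φ) :
    ∃ B ∈ φ, ∃ f ∈ F, (∀ x ∈ B, f x = 0) ∧ ∀ x ∉ A, f x = 1 := by
  by_cases hu : A = Set.univ
  · refine ⟨Set.univ, univ_mem h.1, 0, zero_mem F, fun x _ => rfl, fun x hx => ?_⟩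
    exact absurd (by simp [hu]) hx
  · exact h.2.2.2 A hA hu

/-! ### Evaluation as an algebra homomorphism -/

/-- Evaluation at a point as an algebra homomorphism. -/
noncomputable def evalAlgHom (x : X) : BoundedContinuousFunction X ℂ →ₐ[ℂ] ℂ where
  toFun f := f x
  map_one' := rfl
  map_mul' f g := rfl
  map_zero' := rfl
  map_add' f g := rfl
  commutes' c := rfl

@[simp] lemma evalAlgHom_apply (x : X) (f : BoundedContinuousFunction X ℂ) :
    evalAlgHom x f = f x := rfl

lemma coe_prod_apply {ι : Type*} (t : Finset ι) (f : ι → BoundedContinuousFunction X ℂ) (x : X) :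
    (∏ i ∈ t, f i) x = ∏ i ∈ t, f i x :=
  map_prod (evalAlgHom (X := X) x) f t

/-! ### Functional calculus via Stone–Weierstrass -/

lemma star_mul_self_apply (h : BoundedContinuousFunction X ℂ) (x : X) :
    (star h * h) x = ((‖h x‖ ^ 2 : ℝ) : ℂ) := by
  have h1 : (star h * h) x = star (h x) * h x := rfl
  rw [h1, Complex.star_def, Complex.conj_mul']
  norm_cast

/-- Continuous functional calculus for pointwise-real elements of the closed
star subalgebra `F`. -/
lemma fc1 (hF : IsClosed (F : Set (BoundedContinuousFunction X ℂ)))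
    {a : BoundedContinuousFunction X ℂ} (ha : a ∈ F) (u : X → ℝ)
    (hu : ∀ x, a x = (u x : ℂ)) (θ : ℝ → ℝ) (hθ : Continuous θ) :
    ∃ g ∈ F, ∀ x, g x = ((θ (u x) : ℝ) : ℂ) := by
  classical
  set M : ℝ := ‖a‖ with hM
  have huM : ∀ x, u x ∈ Set.Icc (-M) M := by
    intro x
    have h1 : ‖a x‖ ≤ M := a.norm_coe_le_norm x
    rw [hu x, Complex.norm_real] at h1
    exact abs_le.1 h1
  have hbdd : ∃ Cb : ℝ, ∀ x y : X, dist ((θ (u x) : ℝ) : ℂ) ((θ (u y) : ℝ) : ℂ) ≤ Cb := by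
    obtain ⟨Cb, hCb⟩ := (isCompact_Icc (a := -M) (b := M)).exists_bound_of_continuousOn
      hθ.continuousOn
    refine ⟨2 * Cb, fun x y => ?_⟩
    calc dist ((θ (u x) : ℝ) : ℂ) ((θ (u y) : ℝ) : ℂ)
        ≤ ‖((θ (u x) : ℝ) : ℂ)‖ + ‖((θ (u y) : ℝ) : ℂ)‖ := dist_le_norm_add_norm _ _
      _ ≤ Cb + Cb := by
          rw [Complex.norm_real, Complex.norm_real]
          exact add_le_add (by simpa using hCb _ (huM x)) (by simpa using hCb _ (huM y))
      _ = 2 * Cb := by ring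
  set gt : BoundedContinuousFunction X ℂ :=
    ⟨⟨fun x => ((θ (u x) : ℝ) : ℂ), continuous_of_discreteTopology⟩, hbdd⟩ with hgt
  refine ⟨gt, ?_, fun x => rfl⟩
  have hclose : gt ∈ closure (F : Set (BoundedContinuousFunction X ℂ)) := by
    rw [Metric.mem_closure_iff]
    intro ε hε
    have htop := polynomialFunctions_closure_eq_top (-M) M
    set θc : C(Set.Icc (-M) M, ℝ) := ⟨fun v => θ v.1, hθ.comp continuous_subtype_val⟩ with hθc
    have hmem : θc ∈ closure ((polynomialFunctions (Set.Icc (-M) M)) :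
        Set C(Set.Icc (-M) M, ℝ)) := by
      rw [← Subalgebra.topologicalClosure_coe, htop]
      simp
    rw [Metric.mem_closure_iff] at hmem
    obtain ⟨q, hqmem, hq⟩ := hmem (ε / 2) (by positivity)
    rw [polynomialFunctions_coe] at hqmem
    obtain ⟨p, hp⟩ := hqmem
    set pc : Polynomial ℂ := p.map (algebraMap ℝ ℂ) with hpc
    have hptF : Polynomial.aeval a pc ∈ F := by
      have h1 : Polynomial.aeval a pc ∈ Algebra.adjoin ℂ {a} :=
        Polynomial.aeval_mem_adjoin_singleton ℂ a
      have h2 : Algebra.adjoin ℂ {a} ≤ F.toSubalgebra :=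
        Algebra.adjoin_le (by simpa using ha)
      exact h2 h1
    have hptw : ∀ x : X, (Polynomial.aeval a pc) x = ((p.eval (u x) : ℝ) : ℂ) := by
      intro x
      have h1 : (Polynomial.aeval a pc) x = Polynomial.aeval (a x) pc := by
        have := Polynomial.aeval_algHom_apply (evalAlgHom x) a pc
        rw [evalAlgHom_apply] at this
        exact this.symm
      rw [h1, hpc, Polynomial.aeval_map_algebraMap, hu x]
      have h2 : ((u x : ℝ) : ℂ) = algebraMap ℝ ℂ (u x) := rfl
      rw [h2, Polynomial.aeval_algebraMap_apply_eq_algebraMap_eval]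
      rfl
    refine ⟨Polynomial.aeval a pc, hptF, ?_⟩
    have hd : dist gt (Polynomial.aeval a pc) ≤ ε / 2 := by
      rw [BoundedContinuousFunction.dist_le (by positivity)]
      intro x
      have h3 : gt x = ((θ (u x) : ℝ) : ℂ) := rfl
      rw [h3, hptw x, Complex.isometry_ofReal.dist_eq]
      have h4 : q ⟨u x, huM x⟩ = p.eval (u x) := by
        rw [← hp]; rfl
      have h5 : θc ⟨u x, huM x⟩ = θ (u x) := rfl
      calc dist (θ (u x)) (p.eval (u x)) = dist (θc ⟨u x, huM x⟩) (q ⟨u x, huM x⟩) := by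
            rw [h4, h5]
        _ ≤ dist θc q := ContinuousMap.dist_apply_le_dist _
        _ ≤ ε / 2 := hq.le
    linarith
  rw [hF.closure_eq] at hclose
  exact hclose


/-! ### Step functions -/

/-- A continuous function which is `0` on `(-∞, s]` and `1` on `[t, ∞)` (when `s < t`). -/
noncomputable def stepF (s t v : ℝ) : ℝ := max 0 (min 1 ((v - s) / (t - s)))

lemma stepF_nonneg (s t v : ℝ) : 0 ≤ stepF s t v := le_max_left _ _

lemma stepF_le_one (s t v : ℝ) : stepF s t v ≤ 1 :=
  max_le zero_le_one (min_le_left _ _)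

lemma continuous_stepF (s t : ℝ) : Continuous (stepF s t) := by
  unfold stepF
  fun_prop

lemma stepF_of_le {s t v : ℝ} (hst : s < t) (hv : v ≤ s) : stepF s t v = 0 := by
  have h1 : (v - s) / (t - s) ≤ 0 :=
    div_nonpos_iff.2 (Or.inr ⟨by linarith, by linarith⟩)
  have h2 : min 1 ((v - s) / (t - s)) ≤ 0 := le_trans (min_le_right _ _) h1
  unfold stepF
  rw [max_eq_left h2]

lemma stepF_of_ge {s t v : ℝ} (hst : s < t) (hv : t ≤ v) : stepF s t v = 1 := by
  have h1 : (1 : ℝ) ≤ (v - s) / (t - s) := by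
    rw [le_div_iff₀ (by linarith)]
    linarith
  unfold stepF
  rw [min_eq_left h1, max_eq_right zero_le_one]

lemma stepF_of_ge' {s t v : ℝ} (hst : t < s) (hv : s ≤ v) : stepF s t v = 0 := by
  have h1 : (v - s) / (t - s) ≤ 0 :=
    div_nonpos_iff.2 (Or.inl ⟨by linarith, by linarith⟩)
  have h2 : min 1 ((v - s) / (t - s)) ≤ 0 := le_trans (min_le_right _ _) h1
  unfold stepF
  rw [max_eq_left h2]

lemma stepF_of_le' {s t v : ℝ} (hst : t < s) (hv : v ≤ t) : stepF s t v = 1 := by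
  have h1 : (1 : ℝ) ≤ (v - s) / (t - s) := by
    rw [le_div_iff_of_neg (by linarith)]
    linarith
  unfold stepF
  rw [min_eq_left h1, max_eq_right zero_le_one]

/-! ### Normalized witnesses -/

/-- Normalized witness: for `A` in an `F`-filter `φ` there is `f ∈ F` taking values in `[0,1]`
(real), equal to `1` off `A`, with all sets `X(f,r)` in `φ`. -/
lemma normWitness (hF : IsClosed (F : Set (BoundedContinuousFunction X ℂ)))
    {φ : Set (Set X)} (h : FFilter F φ) {A : Set X} (hA : A ∈ φ) :
    ∃ f ∈ F, ∃ u : X → ℝ, (∀ x, f x = (u x : ℂ)) ∧ (∀ x, 0 ≤ u x ∧ u x ≤ 1) ∧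
      (∀ x ∉ A, f x = 1) ∧ ∀ r : ℝ, 0 < r → XSet f r ∈ φ := by
  obtain ⟨B, hB, f₀, hf₀F, hf₀0, hf₀1⟩ := witness h hA
  have haF : star f₀ * f₀ ∈ F := mul_mem (star_mem hf₀F) hf₀F
  obtain ⟨g, hgF, hg⟩ := fc1 hF haF (fun x => ‖f₀ x‖ ^ 2)
    (fun x => star_mul_self_apply f₀ x) (stepF 0 1) (continuous_stepF 0 1)
  refine ⟨g, hgF, fun x => stepF 0 1 (‖f₀ x‖ ^ 2), hg,
    fun x => ⟨stepF_nonneg _ _ _, stepF_le_one _ _ _⟩, ?_, ?_⟩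
  · intro x hx
    rw [hg x, stepF_of_ge one_pos (by rw [hf₀1 x hx]; norm_num)]
    norm_num
  · intro r hr
    refine superset_mem h.1 hB ?_
    intro x hx
    have h0 : ‖f₀ x‖ ^ 2 ≤ 0 := by rw [hf₀0 x hx]; norm_num
    show ‖g x‖ ≤ r
    rw [hg x, stepF_of_le one_pos h0]
    simpa using hr.le

/-! ### The extension lemma -/

lemma extension (hF : IsClosed (F : Set (BoundedContinuousFunction X ℂ)))
    {φ : Set (Set X)} (h : FFilter F φ) {f : BoundedContinuousFunction X ℂ} (hf : f ∈ F)
    (hmeet : ∀ B ∈ φ, ∀ r : ℝ, 0 < r → (B ∩ XSet f r).Nonempty) :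
    ∃ φ' : Set (Set X), FFilter F φ' ∧ φ ⊆ φ' ∧ ∀ r : ℝ, 0 < r → XSet f r ∈ φ' := by
  set φ' : Set (Set X) := {S | ∃ B ∈ φ, ∃ r : ℝ, 0 < r ∧ B ∩ XSet f r ⊆ S} with hφ'
  have hXmono : ∀ {r₁ r₂ : ℝ}, r₁ ≤ r₂ → XSet f r₁ ⊆ XSet f r₂ := by
    intro r₁ r₂ h12 x hx
    exact le_trans hx h12
  have hsub : φ ⊆ φ' := fun B hB =>
    ⟨B, hB, 1, one_pos, Set.inter_subset_left⟩
  have hXmem : ∀ r : ℝ, 0 < r → XSet f r ∈ φ' := fun r hr =>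
    ⟨Set.univ, univ_mem h.1, r, hr, fun x hx => hx.2⟩
  have hne' : ∀ S ∈ φ', S.Nonempty := by
    rintro S ⟨B, hB, r, hr, hBr⟩
    exact (hmeet B hB r hr).mono hBr
  refine ⟨φ', ⟨⟨⟨Set.univ, hsub (univ_mem h.1)⟩, ?_, fun S hS T hST => ?_, ?_⟩, ?_⟩,
    hsub, hXmem⟩
  · -- intersection
    rintro S ⟨B, hB, r, hr, hBr⟩ T ⟨B', hB', r', hr', hBr'⟩
    refine ⟨B ∩ B', inter_mem h.1 hB hB', min r r', lt_min hr hr', ?_⟩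
    rintro x ⟨⟨hxB, hxB'⟩, hxX⟩
    exact ⟨hBr ⟨hxB, hXmono (min_le_left _ _) hxX⟩, hBr' ⟨hxB', hXmono (min_le_right _ _) hxX⟩⟩
  · obtain ⟨B, hB, r, hr, hBr⟩ := hS
    exact ⟨B, hB, r, hr, hBr.trans hST⟩
  · -- the empty set is not a member
    intro hempty
    obtain ⟨x, hx⟩ := hne' ∅ hempty
    exact hx
  · -- F-family
    refine ⟨⟨Set.univ, hsub (univ_mem h.1)⟩, hne', ?_⟩
    rintro S ⟨B, hB, r, hr, hBr⟩ _
    have hr0 : r ≠ 0 := ne_of_gt hr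
    obtain ⟨B₁, hB₁, h₁, hh₁F, hh₁0, hh₁1⟩ := witness h hB
    set a : BoundedContinuousFunction X ℂ :=
      star h₁ * h₁ + ((((r ^ 2)⁻¹ : ℝ) : ℂ)) • (star f * f) with ha
    have haF : a ∈ F := add_mem (mul_mem (star_mem hh₁F) hh₁F)
      (SMulMemClass.smul_mem _ (mul_mem (star_mem hf) hf))
    set ua : X → ℝ := fun x => ‖h₁ x‖ ^ 2 + (r ^ 2)⁻¹ * ‖f x‖ ^ 2 with hua
    have hap : ∀ x, a x = ((ua x : ℝ) : ℂ) := by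
      intro x
      have h1 : a x = (star h₁ * h₁) x + (((r ^ 2)⁻¹ : ℝ) : ℂ) * ((star f * f) x) := rfl
      rw [h1, star_mul_self_apply, star_mul_self_apply]
      show _ = ((‖h₁ x‖ ^ 2 + (r ^ 2)⁻¹ * ‖f x‖ ^ 2 : ℝ) : ℂ)
      push_cast
      ring
    obtain ⟨g, hgF, hg⟩ := fc1 hF haF ua hap (stepF 4⁻¹ 1) (continuous_stepF _ _)
    refine ⟨B₁ ∩ XSet f (r / 2), ⟨B₁, hB₁, r / 2, by linarith, subset_rfl⟩, g, hgF, ?_, ?_⟩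
    · rintro x ⟨hxB₁, hxX⟩
      have hxX' : ‖f x‖ ≤ r / 2 := hxX
      have hn0 : (0 : ℝ) ≤ ‖f x‖ := norm_nonneg _
      have h1 : ua x ≤ 4⁻¹ := by
        have e1 : ‖h₁ x‖ = 0 := by rw [hh₁0 x hxB₁]; simp
        have e4 : (r ^ 2)⁻¹ * (r / 2) ^ 2 = 4⁻¹ := by
          field_simp
          ring
        have e2 : (r ^ 2)⁻¹ * ‖f x‖ ^ 2 ≤ (r ^ 2)⁻¹ * (r / 2) ^ 2 :=
          mul_le_mul_of_nonneg_left (by nlinarith) (by positivity)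
        show ‖h₁ x‖ ^ 2 + (r ^ 2)⁻¹ * ‖f x‖ ^ 2 ≤ 4⁻¹
        rw [e1]
        rw [e4] at e2
        nlinarith
      rw [hg x, stepF_of_le (by norm_num) h1]
      norm_num
    · intro x hxS
      have h1 : 1 ≤ ua x := by
        by_cases hxB : x ∈ B
        · have hxX : x ∉ XSet f r := fun hxX => hxS (hBr ⟨hxB, hxX⟩)
          have h2 : r < ‖f x‖ := lt_of_not_ge hxX
          have h3 : 1 ≤ (r ^ 2)⁻¹ * ‖f x‖ ^ 2 := by
            rw [inv_mul_eq_div, le_div_iff₀ (by positivity)]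
            nlinarith
          have h4 := sq_nonneg ‖h₁ x‖
          show (1 : ℝ) ≤ ‖h₁ x‖ ^ 2 + (r ^ 2)⁻¹ * ‖f x‖ ^ 2
          linarith
        · have e1 : ‖h₁ x‖ = 1 := by rw [hh₁1 x hxB]; simp
          have e2 : 0 ≤ (r ^ 2)⁻¹ * ‖f x‖ ^ 2 := by positivity
          show (1 : ℝ) ≤ ‖h₁ x‖ ^ 2 + (r ^ 2)⁻¹ * ‖f x‖ ^ 2
          rw [e1]
          linarith
      rw [hg x, stepF_of_ge (by norm_num) h1]
      norm_num

/-! ### Zorn: every F-filter extends to an F-ultrafilter -/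

lemma exists_ultra {φ : Set (Set X)} (hφ : FFilter F φ) :
    ∃ p : Set (Set X), FUltrafilter F p ∧ φ ⊆ p := by
  set S : Set (Set (Set X)) := {ψ | FFilter F ψ ∧ φ ⊆ ψ} with hS
  have hchain : ∀ c ⊆ S, IsChain (· ⊆ ·) c → c.Nonempty →
      ∃ ub ∈ S, ∀ s ∈ c, s ⊆ ub := by
    intro c hcS hchain ⟨ψ₀, hψ₀⟩
    have hψ₀S := hcS hψ₀
    refine ⟨⋃₀ c, ⟨⟨⟨⟨Set.univ, Set.mem_sUnion.2 ⟨ψ₀, hψ₀, univ_mem (hψ₀S.1).1⟩⟩, ?_, ?_, ?_⟩,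
      ⟨Set.univ, Set.mem_sUnion.2 ⟨ψ₀, hψ₀, univ_mem (hψ₀S.1).1⟩⟩, ?_, ?_⟩,
      fun A hA => Set.mem_sUnion.2 ⟨ψ₀, hψ₀, hψ₀S.2 hA⟩⟩, fun s hs => Set.subset_sUnion_of_mem hs⟩
    · rintro A ⟨ψ₁, hψ₁, hA⟩ B ⟨ψ₂, hψ₂, hB⟩
      rcases hchain.total hψ₁ hψ₂ with h12 | h21
      · exact Set.mem_sUnion.2 ⟨ψ₂, hψ₂, inter_mem ((hcS hψ₂).1).1 (h12 hA) hB⟩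
      · exact Set.mem_sUnion.2 ⟨ψ₁, hψ₁, inter_mem ((hcS hψ₁).1).1 hA (h21 hB)⟩
    · rintro A ⟨ψ₁, hψ₁, hA⟩ B hAB
      exact Set.mem_sUnion.2 ⟨ψ₁, hψ₁, superset_mem ((hcS hψ₁).1).1 hA hAB⟩
    · rintro ⟨ψ₁, hψ₁, hempty⟩
      exact ((hcS hψ₁).1).1.2.2.2 hempty
    · rintro A ⟨ψ₁, hψ₁, hA⟩
      exact nonempty_of_mem (hcS hψ₁).1 hA
    · rintro A ⟨ψ₁, hψ₁, hA⟩ hAuniv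
      obtain ⟨B, hB, f, hfF, h0, h1⟩ := ((hcS hψ₁).1).2.2.2 A hA hAuniv
      exact ⟨B, Set.mem_sUnion.2 ⟨ψ₁, hψ₁, hB⟩, f, hfF, h0, h1⟩
  obtain ⟨m, hφm, hmax⟩ := zorn_subset_nonempty S hchain φ ⟨hφ, subset_rfl⟩
  refine ⟨m, ⟨hmax.1.1, fun ψ hψ hmψ => ?_⟩, hφm⟩
  exact Set.Subset.antisymm (hmax.2 ⟨hψ, hφm.trans hmψ⟩ hmψ) hmψ

/-! ### Dichotomy -/

lemma dichotomy (hF : IsClosed (F : Set (BoundedContinuousFunction X ℂ)))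
    {p : Set (Set X)} (hp : FUltrafilter F p) {f : BoundedContinuousFunction X ℂ} (hf : f ∈ F)
    (hmeet : ∀ B ∈ p, ∀ r : ℝ, 0 < r → (B ∩ XSet f r).Nonempty) :
    ∀ r : ℝ, 0 < r → XSet f r ∈ p := by
  obtain ⟨φ', hφ', hsub, hX⟩ := extension hF hp.1 hf hmeet
  have heq : φ' = p := hp.2 φ' hφ' hsub
  intro r hr
  rw [← heq]
  exact hX r hr


/-! ### The basis of the topology on δX -/

lemma isBasis :
    TopologicalSpace.IsTopologicalBasis {S : Set (Delta F) | ∃ A : Set X, S = hatSet F A} := by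
  refine ⟨?_, ?_, rfl⟩
  · rintro t₁ ⟨A, rfl⟩ t₂ ⟨B, rfl⟩ p ⟨hpA, hpB⟩
    refine ⟨hatSet F (A ∩ B), ⟨A ∩ B, rfl⟩, inter_mem p.2.1.1 hpA hpB, ?_⟩
    rintro q hq
    exact ⟨superset_mem q.2.1.1 hq Set.inter_subset_left,
      superset_mem q.2.1.1 hq Set.inter_subset_right⟩
  · apply Set.eq_univ_of_forall
    intro p
    exact ⟨hatSet F Set.univ, ⟨Set.univ, rfl⟩, univ_mem p.2.1.1⟩

/-! ### Limits along F-ultrafilters -/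

/-- `c` is the limit of `f` along the `F`-ultrafilter `p`. -/
def wl (p : Delta F) (f : BoundedContinuousFunction X ℂ) (c : ℂ) : Prop :=
  ∀ r : ℝ, 0 < r → {x | ‖f x - c‖ ≤ r} ∈ p.1

lemma sub_const_apply (f : BoundedContinuousFunction X ℂ) (c : ℂ) (x : X) :
    (f - c • 1) x = f x - c := by
  simp

lemma finset_inter_mem {ι : Type*} {φ : Set (Set X)} (h : IsSetFilter φ)
    (A : ι → Set X) (t : Finset ι) :
    t.Nonempty → (∀ i ∈ t, A i ∈ φ) → (⋂ i ∈ t, A i) ∈ φ := by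
  classical
  induction t using Finset.induction_on with
  | empty => intro htne _; simp at htne
  | @insert a s ha ih =>
    intro _ hA
    by_cases hs : s.Nonempty
    · have h1 := ih hs (fun i hi => hA i (Finset.mem_insert_of_mem hi))
      have h2 := hA a (Finset.mem_insert_self a s)
      refine superset_mem h (inter_mem h h2 h1) ?_
      intro x hx
      simp only [Set.mem_iInter, Finset.mem_insert]
      rintro i (rfl | hi')
      · exact hx.1
      · exact Set.mem_iInter.1 (Set.mem_iInter.1 hx.2 i) hi'
    · obtain rfl : s = ∅ := Finset.not_nonempty_iff_eq_empty.1 hs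
      refine superset_mem h (hA a (Finset.mem_insert_self a ∅)) ?_
      intro x hx
      simp only [Set.mem_iInter, Finset.mem_insert]
      rintro i (rfl | hi)
      · exact hx
      · simp at hi

lemma wl_exists (hF : IsClosed (F : Set (BoundedContinuousFunction X ℂ)))
    (p : Delta F) {f : BoundedContinuousFunction X ℂ} (hf : f ∈ F) :
    ∃ c : ℂ, wl p f c := by
  classical
  set K : Set ℂ := Metric.closedBall 0 ‖f‖ with hK
  have hkey : ∃ c ∈ K, ∀ B ∈ p.1, ∀ r : ℝ, 0 < r → (B ∩ XSet (f - c • 1) r).Nonempty := by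
    by_contra hcon
    push_neg at hcon
    have hcon2 : ∀ c : ℂ, ∃ B : Set X, ∃ r : ℝ,
        c ∈ K → B ∈ p.1 ∧ 0 < r ∧ B ∩ XSet (f - c • 1) r = ∅ := by
      intro c
      by_cases hc : c ∈ K
      · obtain ⟨B, hB, r, hr, hBr⟩ := hcon c hc
        refine ⟨B, r, fun _ => ⟨hB, hr, ?_⟩⟩
        first
        | exact hBr
        | exact Set.not_nonempty_iff_eq_empty.1 hBr
      · exact ⟨Set.univ, 1, fun h => absurd h hc⟩
    choose B r hBr using hcon2
    obtain ⟨t, hcov⟩ := (isCompact_closedBall (0 : ℂ) ‖f‖).elim_nhds_subcover'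
      (fun c _ => Metric.ball c (r c))
      (fun c hc => Metric.ball_mem_nhds c (hBr c hc).2.1)
    have h0K : (0 : ℂ) ∈ K := Metric.mem_closedBall_self (norm_nonneg f)
    have htne : t.Nonempty := by
      have h0 := hcov h0K
      rw [Set.mem_iUnion₂] at h0
      obtain ⟨c, hc, -⟩ := h0
      exact ⟨c, hc⟩
    have hBB : (⋂ c ∈ t, B c.1) ∈ p.1 :=
      finset_inter_mem p.2.1.1 _ t htne (fun c _ => (hBr c.1 c.2).1)
    obtain ⟨x, hx⟩ := nonempty_of_mem p.2.1 hBB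
    have hfx : f x ∈ K := by
      simp only [hK, Metric.mem_closedBall, dist_zero_right]
      exact f.norm_coe_le_norm x
    have hfx2 := hcov hfx
    rw [Set.mem_iUnion₂] at hfx2
    obtain ⟨c, hct, hxball⟩ := hfx2
    have hxB : x ∈ B c.1 := Set.mem_iInter.1 (Set.mem_iInter.1 hx c) hct
    have hxX : x ∈ XSet (f - c.1 • 1) (r c.1) := by
      show ‖(f - c.1 • 1) x‖ ≤ r c.1
      rw [sub_const_apply]
      rw [Metric.mem_ball, dist_eq_norm] at hxball
      exact hxball.le
    have hd := (hBr c.1 c.2).2.2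
    rw [Set.eq_empty_iff_forall_notMem] at hd
    exact hd x ⟨hxB, hxX⟩
  obtain ⟨c, hcK, hmeet⟩ := hkey
  have hcF : f - c • 1 ∈ F := sub_mem hf (SMulMemClass.smul_mem c (one_mem F))
  have hX := dichotomy hF p.2 hcF hmeet
  refine ⟨c, fun s hs => ?_⟩
  have h1 := hX s hs
  have h2 : XSet (f - c • 1) s = {x | ‖f x - c‖ ≤ s} := by
    ext x
    show ‖(f - c • 1) x‖ ≤ s ↔ _
    rw [sub_const_apply]
    rfl
  rwa [h2] at h1

lemma wl_unique (p : Delta F) {f : BoundedContinuousFunction X ℂ} {c c' : ℂ}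
    (h : wl p f c) (h' : wl p f c') : c = c' := by
  by_contra hne
  have hd : 0 < ‖c - c'‖ := by
    simpa [sub_eq_zero] using hne
  have h1 := h (‖c - c'‖ / 3) (by positivity)
  have h2 := h' (‖c - c'‖ / 3) (by positivity)
  obtain ⟨x, hx1, hx2⟩ := nonempty_of_mem p.2.1 (inter_mem p.2.1.1 h1 h2)
  have : ‖c - c'‖ ≤ ‖f x - c‖ + ‖f x - c'‖ := by
    have := norm_sub_le (f x - c') (f x - c)
    calc ‖c - c'‖ = ‖(f x - c') - (f x - c)‖ := by ring_nf
      _ ≤ ‖f x - c'‖ + ‖f x - c‖ := norm_sub_le _ _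
      _ = ‖f x - c‖ + ‖f x - c'‖ := by ring
  have hx1' : ‖f x - c‖ ≤ ‖c - c'‖ / 3 := hx1
  have hx2' : ‖f x - c'‖ ≤ ‖c - c'‖ / 3 := hx2
  linarith

lemma wl_norm_le (p : Delta F) {f : BoundedContinuousFunction X ℂ} {c : ℂ}
    (h : wl p f c) : ‖c‖ ≤ ‖f‖ := by
  refine le_of_forall_pos_le_add (fun ε hε => ?_)
  obtain ⟨x, hx⟩ := nonempty_of_mem p.2.1 (h ε hε)
  have hx' : ‖f x - c‖ ≤ ε := hx
  calc ‖c‖ = ‖f x - (f x - c)‖ := by ring_nf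
    _ ≤ ‖f x‖ + ‖f x - c‖ := norm_sub_le _ _
    _ ≤ ‖f‖ + ε := add_le_add (f.norm_coe_le_norm x) hx'

lemma wl_add (p : Delta F) {f g : BoundedContinuousFunction X ℂ} {a b : ℂ}
    (hf : wl p f a) (hg : wl p g b) : wl p (f + g) (a + b) := by
  intro r hr
  refine superset_mem p.2.1.1 (inter_mem p.2.1.1 (hf (r / 2) (by linarith))
    (hg (r / 2) (by linarith))) ?_
  rintro x ⟨hx1, hx2⟩
  have hx1' : ‖f x - a‖ ≤ r / 2 := hx1
  have hx2' : ‖g x - b‖ ≤ r / 2 := hx2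
  show ‖(f + g) x - (a + b)‖ ≤ r
  have he : (f + g) x = f x + g x := rfl
  calc ‖(f + g) x - (a + b)‖ = ‖(f x - a) + (g x - b)‖ := by rw [he]; ring_nf
    _ ≤ ‖f x - a‖ + ‖g x - b‖ := norm_add_le _ _
    _ ≤ r := by linarith

lemma wl_mul (p : Delta F) {f g : BoundedContinuousFunction X ℂ} {a b : ℂ}
    (hf : wl p f a) (hg : wl p g b) : wl p (f * g) (a * b) := by
  intro r hr
  set δ : ℝ := min 1 (r / (‖f‖ + ‖b‖ + 1)) with hδ
  have hδpos : 0 < δ := lt_min one_pos (by positivity)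
  refine superset_mem p.2.1.1 (inter_mem p.2.1.1 (hf δ hδpos) (hg δ hδpos)) ?_
  rintro x ⟨hx1, hx2⟩
  have hx1' : ‖f x - a‖ ≤ δ := hx1
  have hx2' : ‖g x - b‖ ≤ δ := hx2
  show ‖(f * g) x - a * b‖ ≤ r
  have he : (f * g) x = f x * g x := rfl
  have hnf : ‖f x‖ ≤ ‖f‖ := f.norm_coe_le_norm x
  have key : ‖(f * g) x - a * b‖ ≤ (‖f‖ + ‖b‖) * δ := by
    calc ‖(f * g) x - a * b‖ = ‖f x * (g x - b) + (f x - a) * b‖ := by rw [he]; ring_nf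
      _ ≤ ‖f x * (g x - b)‖ + ‖(f x - a) * b‖ := norm_add_le _ _
      _ = ‖f x‖ * ‖g x - b‖ + ‖f x - a‖ * ‖b‖ := by rw [norm_mul, norm_mul]
      _ ≤ ‖f‖ * δ + δ * ‖b‖ := by
          have h1 : ‖f x‖ * ‖g x - b‖ ≤ ‖f‖ * δ :=
            mul_le_mul hnf hx2' (norm_nonneg _) (norm_nonneg f)
          have h2 : ‖f x - a‖ * ‖b‖ ≤ δ * ‖b‖ :=
            mul_le_mul_of_nonneg_right hx1' (norm_nonneg b)
          linarith
      _ = (‖f‖ + ‖b‖) * δ := by ring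
  have hδle : δ ≤ r / (‖f‖ + ‖b‖ + 1) := min_le_right _ _
  have hpos : (0:ℝ) < ‖f‖ + ‖b‖ + 1 := by positivity
  have h3 : (‖f‖ + ‖b‖) * δ ≤ (‖f‖ + ‖b‖ + 1) * (r / (‖f‖ + ‖b‖ + 1)) := by
    apply mul_le_mul (by linarith) hδle hδpos.le (by positivity)
  rw [mul_div_cancel₀ _ (ne_of_gt hpos)] at h3
  linarith

lemma wl_star (p : Delta F) {f : BoundedContinuousFunction X ℂ} {a : ℂ}
    (hf : wl p f a) : wl p (star f) (starRingEnd ℂ a) := by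
  intro r hr
  refine superset_mem p.2.1.1 (hf r hr) ?_
  intro x hx
  have hx' : ‖f x - a‖ ≤ r := hx
  show ‖(star f) x - (starRingEnd ℂ) a‖ ≤ r
  rw [show ((star f) x : ℂ) = (starRingEnd ℂ) (f x) from rfl, ← map_sub, RCLike.norm_conj]
  exact hx'

lemma wl_const (p : Delta F) (c : ℂ) : wl p (c • 1) c := by
  intro r hr
  refine superset_mem p.2.1.1 (univ_mem p.2.1.1) ?_
  intro x _
  show ‖(c • (1 : BoundedContinuousFunction X ℂ)) x - c‖ ≤ r
  have : (c • (1 : BoundedContinuousFunction X ℂ)) x = c := by simp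
  rw [this]
  simpa using hr.le

/-- The limit of `f` along `p`. -/
noncomputable def Kap (p : Delta F) (f : BoundedContinuousFunction X ℂ) : ℂ :=
  Classical.epsilon (wl p f)

lemma Kap_spec (hF : IsClosed (F : Set (BoundedContinuousFunction X ℂ))) (p : Delta F)
    {f : BoundedContinuousFunction X ℂ} (hf : f ∈ F) : wl p f (Kap p f) :=
  Classical.epsilon_spec (wl_exists hF p hf)



/-! ### Limits along an ultrafilter on δX -/

open Filter in
lemma kap_tendsto_exists (hF : IsClosed (F : Set (BoundedContinuousFunction X ℂ)))
    (𝒰 : Ultrafilter (Delta F)) {f : BoundedContinuousFunction X ℂ} (hf : f ∈ F) :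
    ∃ c : ℂ, Tendsto (fun p => Kap p f) (𝒰 : Filter (Delta F)) (nhds c) := by
  have hb : ∀ p : Delta F, Kap p f ∈ Metric.closedBall (0 : ℂ) ‖f‖ := by
    intro p
    rw [Metric.mem_closedBall, dist_zero_right]
    exact wl_norm_le p (Kap_spec hF p hf)
  have hle : ↑(𝒰.map (fun p => Kap p f)) ≤ Filter.principal (Metric.closedBall (0 : ℂ) ‖f‖) := by
    rw [Ultrafilter.coe_map, Filter.le_principal_iff, Filter.mem_map]
    exact Filter.univ_mem' hb
  obtain ⟨c, _, hc⟩ := (isCompact_closedBall (0 : ℂ) ‖f‖).ultrafilter_le_nhds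
    (𝒰.map (fun p => Kap p f)) hle
  rw [Ultrafilter.coe_map] at hc
  exact ⟨c, hc⟩

/-- The limit character along an ultrafilter on `δX`. -/
noncomputable def kinf (𝒰 : Ultrafilter (Delta F)) (f : BoundedContinuousFunction X ℂ) : ℂ :=
  Classical.epsilon fun c => Filter.Tendsto (fun p => Kap p f) (𝒰 : Filter (Delta F)) (nhds c)

lemma kinf_spec (hF : IsClosed (F : Set (BoundedContinuousFunction X ℂ)))
    (𝒰 : Ultrafilter (Delta F)) {f : BoundedContinuousFunction X ℂ} (hf : f ∈ F) :
    Filter.Tendsto (fun p => Kap p f) (𝒰 : Filter (Delta F)) (nhds (kinf 𝒰 f)) :=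
  Classical.epsilon_spec (kap_tendsto_exists hF 𝒰 hf)

lemma kinf_add (hF : IsClosed (F : Set (BoundedContinuousFunction X ℂ)))
    (𝒰 : Ultrafilter (Delta F)) {f g : BoundedContinuousFunction X ℂ}
    (hf : f ∈ F) (hg : g ∈ F) : kinf 𝒰 (f + g) = kinf 𝒰 f + kinf 𝒰 g := by
  have h1 := kinf_spec hF 𝒰 (add_mem hf hg)
  have h2 := (kinf_spec hF 𝒰 hf).add (kinf_spec hF 𝒰 hg)
  refine tendsto_nhds_unique h1 (h2.congr fun p => ?_)
  exact wl_unique p (wl_add p (Kap_spec hF p hf) (Kap_spec hF p hg))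
    (Kap_spec hF p (add_mem hf hg))

lemma kinf_mul (hF : IsClosed (F : Set (BoundedContinuousFunction X ℂ)))
    (𝒰 : Ultrafilter (Delta F)) {f g : BoundedContinuousFunction X ℂ}
    (hf : f ∈ F) (hg : g ∈ F) : kinf 𝒰 (f * g) = kinf 𝒰 f * kinf 𝒰 g := by
  have h1 := kinf_spec hF 𝒰 (mul_mem hf hg)
  have h2 := (kinf_spec hF 𝒰 hf).mul (kinf_spec hF 𝒰 hg)
  refine tendsto_nhds_unique h1 (h2.congr fun p => ?_)
  exact wl_unique p (wl_mul p (Kap_spec hF p hf) (Kap_spec hF p hg))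
    (Kap_spec hF p (mul_mem hf hg))

lemma kinf_star (hF : IsClosed (F : Set (BoundedContinuousFunction X ℂ)))
    (𝒰 : Ultrafilter (Delta F)) {f : BoundedContinuousFunction X ℂ} (hf : f ∈ F) :
    kinf 𝒰 (star f) = (starRingEnd ℂ) (kinf 𝒰 f) := by
  have h1 := kinf_spec hF 𝒰 (star_mem hf)
  have h2 : Filter.Tendsto (fun p => (starRingEnd ℂ) (Kap p f)) (𝒰 : Filter (Delta F))
      (nhds ((starRingEnd ℂ) (kinf 𝒰 f))) :=
    (Complex.continuous_conj.tendsto _).comp (kinf_spec hF 𝒰 hf)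
  refine tendsto_nhds_unique h1 (h2.congr fun p => ?_)
  exact wl_unique p (wl_star p (Kap_spec hF p hf)) (Kap_spec hF p (star_mem hf))

lemma kinf_const (hF : IsClosed (F : Set (BoundedContinuousFunction X ℂ)))
    (𝒰 : Ultrafilter (Delta F)) (c : ℂ) :
    kinf 𝒰 (c • (1 : BoundedContinuousFunction X ℂ)) = c := by
  have hcF : c • (1 : BoundedContinuousFunction X ℂ) ∈ F := SMulMemClass.smul_mem c (one_mem F)
  have h1 := kinf_spec hF 𝒰 hcF
  have h2 : Filter.Tendsto (fun _ : Delta F => c) (𝒰 : Filter (Delta F)) (nhds c) :=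
    tendsto_const_nhds
  refine tendsto_nhds_unique h1 (h2.congr fun p => ?_)
  exact wl_unique p (wl_const p c) (Kap_spec hF p hcF)

lemma kinf_zero (hF : IsClosed (F : Set (BoundedContinuousFunction X ℂ)))
    (𝒰 : Ultrafilter (Delta F)) : kinf 𝒰 (0 : BoundedContinuousFunction X ℂ) = 0 := by
  have := kinf_const hF 𝒰 0
  rwa [zero_smul] at this

lemma kinf_nonempty (hF : IsClosed (F : Set (BoundedContinuousFunction X ℂ)))
    (𝒰 : Ultrafilter (Delta F)) {f : BoundedContinuousFunction X ℂ} (hf : f ∈ F)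
    {r : ℝ} (hr : 0 < r) : {x : X | ‖f x - kinf 𝒰 f‖ ≤ r}.Nonempty := by
  have h1 := kinf_spec hF 𝒰 hf
  have h2 : {p : Delta F | dist (Kap p f) (kinf 𝒰 f) < r / 2} ∈ (𝒰 : Filter (Delta F)) :=
    h1 (Metric.ball_mem_nhds _ (by linarith))
  obtain ⟨p, hp⟩ := Ultrafilter.nonempty_of_mem h2
  obtain ⟨x, hx⟩ := nonempty_of_mem p.2.1 (Kap_spec hF p hf (r / 2) (by linarith))
  have hx' : ‖f x - Kap p f‖ ≤ r / 2 := hx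
  have hp' : ‖Kap p f - kinf 𝒰 f‖ < r / 2 := by simpa [dist_eq_norm] using hp
  refine ⟨x, ?_⟩
  show ‖f x - kinf 𝒰 f‖ ≤ r
  calc ‖f x - kinf 𝒰 f‖ = ‖(f x - Kap p f) + (Kap p f - kinf 𝒰 f)‖ := by ring_nf
    _ ≤ ‖f x - Kap p f‖ + ‖Kap p f - kinf 𝒰 f‖ := norm_add_le _ _
    _ ≤ r := by linarith

/-! ### The limit ultrafilter -/

/-- The F-ultrafilter associated to the limit character `kinf 𝒰`. -/
def PK (𝒰 : Ultrafilter (Delta F)) : Set (Set X) :=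
  {A : Set X | ∃ f ∈ F, kinf 𝒰 f = 0 ∧ ∃ r : ℝ, 0 < r ∧ XSet f r ⊆ A}

lemma PK_filter (hF : IsClosed (F : Set (BoundedContinuousFunction X ℂ)))
    (𝒰 : Ultrafilter (Delta F)) : FFilter F (PK 𝒰) := by
  have hne : ∀ S ∈ PK 𝒰, S.Nonempty := by
    rintro S ⟨f, hfF, hk, r, hr, hXS⟩
    refine ((kinf_nonempty hF 𝒰 hfF hr).mono ?_).mono hXS
    intro x hx
    show ‖f x‖ ≤ r
    have hx' : ‖f x - kinf 𝒰 f‖ ≤ r := hx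
    rwa [hk, sub_zero] at hx'
  have huniv : Set.univ ∈ PK 𝒰 :=
    ⟨0, zero_mem F, kinf_zero hF 𝒰, 1, one_pos, Set.subset_univ _⟩
  refine ⟨⟨⟨Set.univ, huniv⟩, ?_, ?_, ?_⟩, ⟨Set.univ, huniv⟩, hne, ?_⟩
  · -- intersections
    rintro S ⟨f, hfF, hkf, r, hr, hXS⟩ T ⟨g, hgF, hkg, s, hs, hXT⟩
    set h : BoundedContinuousFunction X ℂ := star f * f + star g * g with hh
    have hhF : h ∈ F := add_mem (mul_mem (star_mem hfF) hfF) (mul_mem (star_mem hgF) hgF)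
    have hkh : kinf 𝒰 h = 0 := by
      rw [hh, kinf_add hF 𝒰 (mul_mem (star_mem hfF) hfF) (mul_mem (star_mem hgF) hgF),
        kinf_mul hF 𝒰 (star_mem hfF) hfF, kinf_mul hF 𝒰 (star_mem hgF) hgF,
        kinf_star hF 𝒰 hfF, kinf_star hF 𝒰 hgF, hkf, hkg]
      simp
    refine ⟨h, hhF, hkh, (min r s) ^ 2, by positivity, ?_⟩
    intro x hx
    have hhx : h x = ((‖f x‖ ^ 2 + ‖g x‖ ^ 2 : ℝ) : ℂ) := by
      have e : h x = (star f * f) x + (star g * g) x := rfl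
      rw [e, star_mul_self_apply, star_mul_self_apply]
      push_cast
      ring
    have hx' : ‖h x‖ ≤ (min r s) ^ 2 := hx
    rw [hhx, Complex.norm_real] at hx'
    have habs : ‖f x‖ ^ 2 + ‖g x‖ ^ 2 ≤ (min r s) ^ 2 := by
      have h0 : (0:ℝ) ≤ ‖f x‖ ^ 2 + ‖g x‖ ^ 2 := by positivity
      rwa [Real.norm_of_nonneg h0] at hx'
    have hfr : ‖f x‖ ≤ r := by
      have h1 : ‖f x‖ ^ 2 ≤ (min r s) ^ 2 := by nlinarith
      have h2 : ‖f x‖ ≤ min r s := by nlinarith [norm_nonneg (f x), lt_min hr hs]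
      exact h2.trans (min_le_left _ _)
    have hgs : ‖g x‖ ≤ s := by
      have h1 : ‖g x‖ ^ 2 ≤ (min r s) ^ 2 := by nlinarith
      have h2 : ‖g x‖ ≤ min r s := by nlinarith [norm_nonneg (g x), lt_min hr hs]
      exact h2.trans (min_le_right _ _)
    exact ⟨hXS hfr, hXT hgs⟩
  · -- upward closure
    rintro S ⟨f, hfF, hkf, r, hr, hXS⟩ T hST
    exact ⟨f, hfF, hkf, r, hr, hXS.trans hST⟩
  · -- no empty set
    intro hempty
    obtain ⟨x, hx⟩ := hne ∅ hempty
    exact hx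
  · -- F-family condition
    rintro S ⟨f, hfF, hkf, r, hr, hXS⟩ _
    have hr0 : r ≠ 0 := ne_of_gt hr
    set a : BoundedContinuousFunction X ℂ := (((r ^ 2)⁻¹ : ℝ) : ℂ) • (star f * f) with ha
    have haF : a ∈ F := SMulMemClass.smul_mem _ (mul_mem (star_mem hfF) hfF)
    set ua : X → ℝ := fun x => (r ^ 2)⁻¹ * ‖f x‖ ^ 2 with hua
    have hap : ∀ x, a x = ((ua x : ℝ) : ℂ) := by
      intro x
      have e : a x = (((r ^ 2)⁻¹ : ℝ) : ℂ) * ((star f * f) x) := rfl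
      rw [e, star_mul_self_apply]
      norm_cast
    obtain ⟨g, hgF, hg⟩ := fc1 hF haF ua hap (stepF 4⁻¹ 1) (continuous_stepF _ _)
    refine ⟨XSet f (r / 2), ⟨f, hfF, hkf, r / 2, by linarith, subset_rfl⟩, g, hgF, ?_, ?_⟩
    · intro x hx
      have hx' : ‖f x‖ ≤ r / 2 := hx
      have h1 : ua x ≤ 4⁻¹ := by
        have e4 : (r ^ 2)⁻¹ * (r / 2) ^ 2 = 4⁻¹ := by
          field_simp
          ring
        have e2 : (r ^ 2)⁻¹ * ‖f x‖ ^ 2 ≤ (r ^ 2)⁻¹ * (r / 2) ^ 2 :=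
          mul_le_mul_of_nonneg_left (by nlinarith [norm_nonneg (f x)]) (by positivity)
        rw [e4] at e2
        exact e2
      rw [hg x, stepF_of_le (by norm_num) h1]
      norm_num
    · intro x hxS
      have hxX : x ∉ XSet f r := fun hxX => hxS (hXS hxX)
      have h2 : r < ‖f x‖ := lt_of_not_ge hxX
      have h1 : 1 ≤ ua x := by
        rw [hua]
        show (1:ℝ) ≤ (r ^ 2)⁻¹ * ‖f x‖ ^ 2
        rw [inv_mul_eq_div, le_div_iff₀ (by positivity)]
        nlinarith
      rw [hg x, stepF_of_ge (by norm_num) h1]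
      norm_num

lemma PK_ultra (hF : IsClosed (F : Set (BoundedContinuousFunction X ℂ)))
    (𝒰 : Ultrafilter (Delta F)) : FUltrafilter F (PK 𝒰) := by
  refine ⟨PK_filter hF 𝒰, fun ψ hψ hsub => ?_⟩
  refine Set.Subset.antisymm ?_ hsub
  intro A hA
  obtain ⟨g, hgF, u, hgu, hu01, hg1, hgX⟩ := normWitness hF hψ hA
  set c : ℂ := kinf 𝒰 g with hc
  have hgcF : g - c • 1 ∈ F := sub_mem hgF (SMulMemClass.smul_mem c (one_mem F))
  set f₀ : BoundedContinuousFunction X ℂ := star (g - c • 1) * (g - c • 1) with hf₀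
  have hf₀F : f₀ ∈ F := mul_mem (star_mem hgcF) hgcF
  have hkgc : kinf 𝒰 (g - c • 1) = 0 := by
    have e : g - c • 1 = g + (-c) • (1 : BoundedContinuousFunction X ℂ) := by
      rw [neg_smul, ← sub_eq_add_neg]
    rw [e, kinf_add hF 𝒰 hgF (SMulMemClass.smul_mem _ (one_mem F)), kinf_const hF 𝒰, hc]
    ring
  have hkf₀ : kinf 𝒰 f₀ = 0 := by
    rw [hf₀, kinf_mul hF 𝒰 (star_mem hgcF) hgcF, kinf_star hF 𝒰 hgcF, hkgc]
    simp
  have hcz : c = 0 := by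
    have hkey : ∀ ε : ℝ, 0 < ε → ‖c‖ ≤ 2 * ε := by
      intro ε hε
      have h1 : XSet f₀ (ε ^ 2) ∈ PK 𝒰 := ⟨f₀, hf₀F, hkf₀, ε ^ 2, by positivity, subset_rfl⟩
      have h2 : XSet g ε ∈ ψ := hgX ε hε
      obtain ⟨x, hx1, hx2⟩ := nonempty_of_mem hψ (inter_mem hψ.1 (hsub h1) h2)
      have hx1' : ‖f₀ x‖ ≤ ε ^ 2 := hx1
      have hx2' : ‖g x‖ ≤ ε := hx2
      have hfx : f₀ x = ((‖(g - c • 1) x‖ ^ 2 : ℝ) : ℂ) := star_mul_self_apply _ x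
      rw [hfx, Complex.norm_real] at hx1'
      have h3 : ‖(g - c • 1) x‖ ^ 2 ≤ ε ^ 2 := by
        have h0 : (0:ℝ) ≤ ‖(g - c • 1) x‖ ^ 2 := by positivity
        rwa [Real.norm_of_nonneg h0] at hx1'
      have h4 : ‖g x - c‖ ≤ ε := by
        have e : (g - c • 1) x = g x - c := sub_const_apply g c x
        rw [e] at h3
        nlinarith [norm_nonneg (g x - c)]
      calc ‖c‖ = ‖g x - (g x - c)‖ := by ring_nf
        _ ≤ ‖g x‖ + ‖g x - c‖ := norm_sub_le _ _
        _ ≤ 2 * ε := by linarith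
    have : ‖c‖ ≤ 0 := by
      refine le_of_forall_pos_le_add (fun ε hε => ?_)
      have := hkey (ε / 2) (by linarith)
      linarith
    simpa using le_antisymm this (norm_nonneg c)
  refine ⟨g, hgF, by rw [← hc, hcz], 2⁻¹, by norm_num, ?_⟩
  intro x hx
  by_contra hxA
  have : g x = 1 := hg1 x hxA
  have hx' : ‖g x‖ ≤ 2⁻¹ := hx
  rw [this] at hx'
  norm_num at hx'

/-! ### Compactness of δX -/

lemma compactSpace_delta (hF : IsClosed (F : Set (BoundedContinuousFunction X ℂ))) :
    CompactSpace (Delta F) := by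
  rw [← isCompact_univ_iff, isCompact_iff_ultrafilter_le_nhds]
  intro 𝒰 _
  refine ⟨⟨PK 𝒰, PK_ultra hF 𝒰⟩, Set.mem_univ _, ?_⟩
  set q : Delta F := ⟨PK 𝒰, PK_ultra hF 𝒰⟩ with hq
  rw [(isBasis (F := F)).nhds_hasBasis.ge_iff]
  rintro S ⟨⟨A, rfl⟩, hqS⟩
  have hqA : A ∈ PK 𝒰 := hqS
  obtain ⟨f, hfF, hk0, r, hr, hXA⟩ := hqA
  have hsub : {p : Delta F | dist (Kap p f) (0 : ℂ) ≤ r / 2} ⊆ hatSet F A := by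
    intro p hp
    have hp' : ‖Kap p f‖ ≤ r / 2 := by simpa [dist_zero_right] using hp
    have h1 : {x : X | ‖f x - Kap p f‖ ≤ r / 2} ∈ p.1 := Kap_spec hF p hfF (r / 2) (by linarith)
    have h2 : XSet f r ∈ p.1 := by
      refine superset_mem p.2.1.1 h1 ?_
      intro x hx
      have hx' : ‖f x - Kap p f‖ ≤ r / 2 := hx
      show ‖f x‖ ≤ r
      calc ‖f x‖ = ‖(f x - Kap p f) + Kap p f‖ := by ring_nf
        _ ≤ ‖f x - Kap p f‖ + ‖Kap p f‖ := norm_add_le _ _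
        _ ≤ r := by linarith
    exact superset_mem p.2.1.1 h2 hXA
  have hmem : {p : Delta F | dist (Kap p f) (0 : ℂ) ≤ r / 2} ∈ (𝒰 : Filter (Delta F)) := by
    have h1 := kinf_spec hF 𝒰 hfF
    rw [hk0] at h1
    exact h1 (Metric.closedBall_mem_nhds _ (by linarith))
  exact Filter.mem_of_superset hmem hsub



/-! ### The key lemma: membership in an F-filter is determined by its ultrafilter extensions -/

lemma mem_of_forall_ultra (hF : IsClosed (F : Set (BoundedContinuousFunction X ℂ)))
    {ψ : Set (Set X)} (hψ : FFilter F ψ) {A : Set X}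
    {f₀ : BoundedContinuousFunction X ℂ} {u₀ : X → ℝ} (hf₀F : f₀ ∈ F)
    (hf₀u : ∀ x, f₀ x = ((u₀ x : ℝ) : ℂ)) (hu₀01 : ∀ x, 0 ≤ u₀ x ∧ u₀ x ≤ 1)
    (hf₀1 : ∀ x ∉ A, f₀ x = 1)
    (hall : ∀ q : Set (Set X), FUltrafilter F q → ψ ⊆ q → A ∈ q) : A ∈ ψ := by
  classical
  -- the predicate of normalized witnesses for `A`
  set P : BoundedContinuousFunction X ℂ → (X → ℝ) → Prop := fun f u =>
    f ∈ F ∧ (∀ x, f x = ((u x : ℝ) : ℂ)) ∧ (∀ x, 0 ≤ u x ∧ u x ≤ 1) ∧ ∀ x ∉ A, f x = 1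
    with hP
  have hP₀ : P f₀ u₀ := ⟨hf₀F, hf₀u, hu₀01, hf₀1⟩
  have hnorm : ∀ {f : BoundedContinuousFunction X ℂ} {u : X → ℝ}, P f u →
      ∀ x : X, ‖f x‖ = u x := by
    intro f u hPf x
    rw [hPf.2.1 x, Complex.norm_real, Real.norm_of_nonneg (hPf.2.2.1 x).1]
  by_cases hcase : ∃ E ∈ ψ, ∃ f u, ∃ t : ℝ, P f u ∧ 0 < t ∧ t < 1 ∧ E ⊆ XSet f t
  · -- then `E ⊆ A` and we are done
    obtain ⟨E, hE, f, u, t, hPf, ht0, ht1, hEX⟩ := hcase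
    refine superset_mem hψ.1 hE ?_
    intro x hxE
    by_contra hxA
    have h1 : ‖f x‖ ≤ t := hEX hxE
    rw [hPf.2.2.2 x hxA] at h1
    rw [norm_one] at h1
    linarith
  · exfalso
    push_neg at hcase
    have hne2 : ∀ E ∈ ψ, ∀ (f : BoundedContinuousFunction X ℂ) (u : X → ℝ) (t : ℝ),
        P f u → 0 < t → t < 1 → (E ∩ (XSet f t)ᶜ).Nonempty := by
      intro E hE f u t hPf ht0 ht1
      obtain ⟨x, hxE, hxX⟩ := Set.not_subset.1 (hcase E hE f u t hPf ht0 ht1)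
      exact ⟨x, hxE, hxX⟩
    set χ : Set (Set X) := {S | ∃ E ∈ ψ, ∃ f u, ∃ t : ℝ,
      P f u ∧ 0 < t ∧ t < 1 ∧ E ∩ (XSet f t)ᶜ ⊆ S} with hχ
    have hχne : ∀ S ∈ χ, S.Nonempty := by
      rintro S ⟨E, hE, f, u, t, hPf, ht0, ht1, hsub⟩
      exact (hne2 E hE f u t hPf ht0 ht1).mono hsub
    have huniv : Set.univ ∈ χ :=
      ⟨Set.univ, univ_mem hψ.1, f₀, u₀, 2⁻¹, hP₀, by norm_num, by norm_num, Set.subset_univ _⟩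
    have hψχ : ψ ⊆ χ := by
      intro E hE
      exact ⟨E, hE, f₀, u₀, 2⁻¹, hP₀, by norm_num, by norm_num,
        fun x hx => hx.1⟩
    have hχF : FFilter F χ := by
      refine ⟨⟨⟨Set.univ, huniv⟩, ?_, ?_, ?_⟩, ⟨Set.univ, huniv⟩, hχne, ?_⟩
      · -- intersections
        rintro S ⟨E, hE, f, u, t, hPf, ht0, ht1, hsub⟩ T ⟨E', hE', f', u', t', hPf', ht0', ht1', hsub'⟩
        refine ⟨E ∩ E', inter_mem hψ.1 hE hE', f * f', fun x => u x * u' x, max t t',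
          ⟨mul_mem hPf.1 hPf'.1, ?_, ?_, ?_⟩, lt_max_of_lt_left ht0, max_lt ht1 ht1', ?_⟩
        · intro x
          have e : (f * f') x = f x * f' x := rfl
          rw [e, hPf.2.1 x, hPf'.2.1 x]
          norm_cast
        · intro x
          exact ⟨mul_nonneg (hPf.2.2.1 x).1 (hPf'.2.2.1 x).1,
            mul_le_one₀ (hPf.2.2.1 x).2 (hPf'.2.2.1 x).1 (hPf'.2.2.1 x).2⟩
        · intro x hx
          have e : (f * f') x = f x * f' x := rfl
          rw [e, hPf.2.2.2 x hx, hPf'.2.2.2 x hx, one_mul]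
        · rintro x ⟨⟨hxE, hxE'⟩, hxX⟩
          have hxX' : ¬ ‖(f * f') x‖ ≤ max t t' := hxX
          have e : ‖(f * f') x‖ = u x * u' x := by
            have e2 : (f * f') x = f x * f' x := rfl
            rw [e2, norm_mul, hnorm hPf x, hnorm hPf' x]
          rw [e] at hxX'
          push_neg at hxX'
          have hu1 : u x * u' x ≤ u x := mul_le_of_le_one_right (hPf.2.2.1 x).1 (hPf'.2.2.1 x).2
          have hu2 : u x * u' x ≤ u' x := mul_le_of_le_one_left (hPf'.2.2.1 x).1 (hPf.2.2.1 x).2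
          refine ⟨hsub ⟨hxE, ?_⟩, hsub' ⟨hxE', ?_⟩⟩
          · show ¬ ‖f x‖ ≤ t
            rw [hnorm hPf x]
            push_neg
            calc t ≤ max t t' := le_max_left _ _
              _ < u x * u' x := hxX'
              _ ≤ u x := hu1
          · show ¬ ‖f' x‖ ≤ t'
            rw [hnorm hPf' x]
            push_neg
            calc t' ≤ max t t' := le_max_right _ _
              _ < u x * u' x := hxX'
              _ ≤ u' x := hu2
      · -- upward closure
        rintro S ⟨E, hE, f, u, t, hPf, ht0, ht1, hsub⟩ T hST
        exact ⟨E, hE, f, u, t, hPf, ht0, ht1, hsub.trans hST⟩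
      · -- empty set
        intro hempty
        obtain ⟨x, hx⟩ := hχne ∅ hempty
        exact hx
      · -- F-family property
        rintro S ⟨E, hE, f, u, t, hPf, ht0, ht1, hsub⟩ _
        set t' : ℝ := (1 + t) / 2 with ht'
        have htt' : t < t' := by rw [ht']; linarith
        have ht'1 : t' < 1 := by rw [ht']; linarith
        have ht'0 : 0 < t' := lt_trans ht0 htt'
        have htsq : t ^ 2 < t' ^ 2 := by nlinarith
        obtain ⟨E₁, hE₁, h₁, hh₁F, hh₁0, hh₁1⟩ := witness hψ hE
        -- ζ = θ₃(|f|²), 1 on X(f,t), 0 outside X(f,t')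
        obtain ⟨ζ, hζF, hζ⟩ := fc1 hF (mul_mem (star_mem hPf.1) hPf.1)
          (fun x => ‖f x‖ ^ 2) (fun x => star_mul_self_apply f x)
          (stepF (t' ^ 2) (t ^ 2)) (continuous_stepF _ _)
        set a : BoundedContinuousFunction X ℂ := star h₁ * h₁ + ζ with ha
        have haF : a ∈ F := add_mem (mul_mem (star_mem hh₁F) hh₁F) hζF
        set ua : X → ℝ := fun x => ‖h₁ x‖ ^ 2 + stepF (t' ^ 2) (t ^ 2) (‖f x‖ ^ 2) with hua
        have hap : ∀ x, a x = ((ua x : ℝ) : ℂ) := by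
          intro x
          have e : a x = (star h₁ * h₁) x + ζ x := rfl
          rw [e, star_mul_self_apply, hζ x]
          norm_cast
        obtain ⟨g, hgF, hg⟩ := fc1 hF haF ua hap (stepF 4⁻¹ 1) (continuous_stepF _ _)
        refine ⟨E₁ ∩ (XSet f t')ᶜ,
          ⟨E₁, hE₁, f, u, t', hPf, ht'0, ht'1, subset_rfl⟩, g, hgF, ?_, ?_⟩
        · -- g = 0 on the small set
          rintro x ⟨hxE₁, hxX⟩
          have h1 : ‖h₁ x‖ ^ 2 = 0 := by rw [hh₁0 x hxE₁]; norm_num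
          have h2 : ¬ ‖f x‖ ≤ t' := hxX
          push_neg at h2
          have h3 : t' ^ 2 ≤ ‖f x‖ ^ 2 := by nlinarith
          have h4 : stepF (t' ^ 2) (t ^ 2) (‖f x‖ ^ 2) = 0 := stepF_of_ge' htsq h3
          have h5 : ua x ≤ 4⁻¹ := by
            show ‖h₁ x‖ ^ 2 + stepF (t' ^ 2) (t ^ 2) (‖f x‖ ^ 2) ≤ 4⁻¹
            rw [h1, h4]
            norm_num
          rw [hg x, stepF_of_le (by norm_num) h5]
          norm_num
        · -- g = 1 outside S
          intro x hxS
          have hx' : x ∉ E ∩ (XSet f t)ᶜ := fun hx => hxS (hsub hx)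
          have h5 : 1 ≤ ua x := by
            show (1:ℝ) ≤ ‖h₁ x‖ ^ 2 + stepF (t' ^ 2) (t ^ 2) (‖f x‖ ^ 2)
            by_cases hxE : x ∈ E
            · have hxX : x ∈ XSet f t := by
                by_contra hxX
                exact hx' ⟨hxE, hxX⟩
              have h6 : ‖f x‖ ≤ t := hxX
              have h7 : ‖f x‖ ^ 2 ≤ t ^ 2 := by nlinarith [norm_nonneg (f x)]
              have h8 : stepF (t' ^ 2) (t ^ 2) (‖f x‖ ^ 2) = 1 := stepF_of_le' htsq h7
              rw [h8]
              nlinarith [sq_nonneg ‖h₁ x‖]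
            · have h6 : ‖h₁ x‖ ^ 2 = 1 := by rw [hh₁1 x hxE]; norm_num
              rw [h6]
              nlinarith [stepF_nonneg (t' ^ 2) (t ^ 2) (‖f x‖ ^ 2)]
          rw [hg x, stepF_of_ge (by norm_num) h5]
          norm_num
    -- extend χ to an F-ultrafilter
    obtain ⟨q, hqu, hχq⟩ := exists_ultra hχF
    have hψq : ψ ⊆ q := hψχ.trans hχq
    have hAq : A ∈ q := hall q hqu hψq
    obtain ⟨f₁, hf₁F, u₁, hf₁u, hu₁01, hf₁1, hf₁X⟩ := normWitness hF hqu.1 hAq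
    have hYχ : (XSet f₁ 2⁻¹)ᶜ ∈ χ :=
      ⟨Set.univ, univ_mem hψ.1, f₁, u₁, 2⁻¹, ⟨hf₁F, hf₁u, hu₁01, hf₁1⟩, by norm_num, by norm_num,
        fun x hx => hx.2⟩
    have hY : (XSet f₁ 2⁻¹)ᶜ ∈ q := hχq hYχ
    have hX : XSet f₁ 2⁻¹ ∈ q := hf₁X 2⁻¹ (by norm_num)
    obtain ⟨x, hx1, hx2⟩ := nonempty_of_mem hqu.1 (inter_mem hqu.1.1 hX hY)
    exact hx2 hx1



end Stmt12

theorem stmt12 (F : StarSubalgebra ℂ (BoundedContinuousFunction X ℂ)) (hF : IsClosed (F : Set (BoundedContinuousFunction X ℂ)))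
    (C : Set (Delta F)) (hne : C.Nonempty) (hC : IsClosed C) :
    ∃! φ : Set (Set X), FFilter F φ ∧ hatF F φ = C := by
  classical
  obtain ⟨p₀, hp₀⟩ := hne
  set φ : Set (Set X) := {A : Set X | ∀ p : Delta F, p ∈ C → A ∈ p.1} with hφdef
  have hφuniv : Set.univ ∈ φ := fun p _ => Stmt12.univ_mem p.2.1.1
  have hfil : IsSetFilter φ :=
    ⟨⟨Set.univ, hφuniv⟩,
      fun A hA B hB p hp => Stmt12.inter_mem p.2.1.1 (hA p hp) (hB p hp),
      fun A hA B hAB p hp => Stmt12.superset_mem p.2.1.1 (hA p hp) hAB,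
      fun h => p₀.2.1.1.2.2.2 (h p₀ hp₀)⟩
  haveI hcompact : CompactSpace (Delta F) := Stmt12.compactSpace_delta hF
  have hfam : FFamily F φ := by
    refine ⟨⟨Set.univ, hφuniv⟩, fun A hA => Stmt12.nonempty_of_mem p₀.2.1 (hA p₀ hp₀), ?_⟩
    intro A hA _
    have hch : ∀ i : {p : Delta F // p ∈ C}, ∃ f, f ∈ F ∧ ∃ u : X → ℝ,
        (∀ x, f x = ((u x : ℝ) : ℂ)) ∧ (∀ x, 0 ≤ u x ∧ u x ≤ 1) ∧ (∀ x ∉ A, f x = 1) ∧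
        ∀ r : ℝ, 0 < r → XSet f r ∈ i.1.1 := by
      intro i
      obtain ⟨f, hfF, u, h1, h2, h3, h4⟩ := Stmt12.normWitness hF i.1.2.1 (hA i.1 i.2)
      exact ⟨f, hfF, u, h1, h2, h3, h4⟩
    choose fP hfPF uP hfu hu01 hf1 hfX using hch
    have hopen : ∀ i : {p : Delta F // p ∈ C}, IsOpen (hatSet F (XSet (fP i) 4⁻¹)) := fun i =>
      (Stmt12.isBasis).isOpen ⟨_, rfl⟩
    have hcov : C ⊆ ⋃ i : {p : Delta F // p ∈ C}, hatSet F (XSet (fP i) 4⁻¹) := by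
      intro p hp
      exact Set.mem_iUnion.2 ⟨⟨p, hp⟩, hfX ⟨p, hp⟩ 4⁻¹ (by norm_num)⟩
    obtain ⟨t, ht⟩ := (hC.isCompact).elim_finite_subcover _ hopen hcov
    set w : BoundedContinuousFunction X ℂ := ∏ i ∈ t, fP i with hw
    have hwF : w ∈ F := prod_mem fun i _ => hfPF i
    set uw : X → ℝ := fun x => ∏ i ∈ t, uP i x with huw
    have hwu : ∀ x, w x = ((uw x : ℝ) : ℂ) := by
      intro x
      rw [hw, Stmt12.coe_prod_apply, huw]
      push_cast
      exact Finset.prod_congr rfl fun i _ => hfu i x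
    obtain ⟨g, hgF, hg⟩ := Stmt12.fc1 hF hwF uw hwu (Stmt12.stepF 4⁻¹ 1)
      (Stmt12.continuous_stepF _ _)
    refine ⟨⋃ i ∈ t, XSet (fP i) 4⁻¹, ?_, g, hgF, ?_, ?_⟩
    · intro q hq
      have h1 := ht hq
      rw [Set.mem_iUnion₂] at h1
      obtain ⟨i, hit, hqi⟩ := h1
      refine Stmt12.superset_mem q.2.1.1 hqi ?_
      intro y hy
      rw [Set.mem_iUnion₂]
      exact ⟨i, hit, hy⟩
    · intro x hx
      rw [Set.mem_iUnion₂] at hx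
      obtain ⟨i, hit, hxi⟩ := hx
      have h2 : ‖fP i x‖ ≤ 4⁻¹ := hxi
      have h1 : uP i x ≤ 4⁻¹ := by
        rwa [hfu i x, Complex.norm_real, Real.norm_of_nonneg (hu01 i x).1] at h2
      have h3 : uw x ≤ 4⁻¹ := by
        rw [huw]
        calc ∏ j ∈ t, uP j x = uP i x * ∏ j ∈ t.erase i, uP j x :=
              (Finset.mul_prod_erase t _ hit).symm
          _ ≤ 4⁻¹ * 1 :=
              mul_le_mul h1
                (Finset.prod_le_one (fun j _ => (hu01 j x).1) (fun j _ => (hu01 j x).2))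
                (Finset.prod_nonneg fun j _ => (hu01 j x).1) (by norm_num)
          _ = 4⁻¹ := mul_one _
      rw [hg x, Stmt12.stepF_of_le (by norm_num) h3]
      norm_num
    · intro x hxA
      have h1 : ∀ i ∈ t, uP i x = 1 := by
        intro i _
        have h2 := hf1 i x hxA
        have e := hfu i x
        rw [h2] at e
        exact_mod_cast e.symm
      have h2 : uw x = 1 := by rw [huw]; exact Finset.prod_eq_one h1
      rw [hg x, h2, Stmt12.stepF_of_ge (by norm_num) le_rfl]
      norm_num
  have hFf : FFilter F φ := ⟨hfil, hfam⟩
  have hhat : hatF F φ = C := by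
    apply Set.Subset.antisymm
    · intro q hq
      by_contra hqC
      obtain ⟨S, hSmem, hqS, hSC⟩ :=
        (Stmt12.isBasis (F := F)).exists_subset_of_mem_open hqC hC.isOpen_compl
      obtain ⟨D, rfl⟩ := hSmem
      have hD : D ∈ q.1 := hqS
      obtain ⟨E, hE, f, hfF, hf0, hf1⟩ := Stmt12.witness q.2.1 hD
      have hSfmem : ∀ p : Delta F, p ∈ C → {x | f x ≠ 0} ∈ p.1 := by
        intro p hp
        have hDp : D ∉ p.1 := fun hDp => hSC hDp hp
        have hX12 : XSet f 2⁻¹ ∉ p.1 := by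
          intro hX
          apply hDp
          refine Stmt12.superset_mem p.2.1.1 hX ?_
          intro x hx
          by_contra hxD
          have h1 : f x = 1 := hf1 x hxD
          have hx' : ‖f x‖ ≤ 2⁻¹ := hx
          rw [h1, norm_one] at hx'
          norm_num at hx'
        have hnm : ¬ ∀ B ∈ p.1, ∀ r : ℝ, 0 < r → (B ∩ XSet f r).Nonempty := fun hmeet =>
          hX12 (Stmt12.dichotomy hF p.2 hfF hmeet 2⁻¹ (by norm_num))
        push_neg at hnm
        obtain ⟨B, hB, r, hr, hBr⟩ := hnm
        have hBr' : B ∩ XSet f r = ∅ := by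
          first
          | exact hBr
          | exact Set.not_nonempty_iff_eq_empty.1 hBr
        rw [Set.eq_empty_iff_forall_notMem] at hBr'
        refine Stmt12.superset_mem p.2.1.1 hB ?_
        intro x hx
        show f x ≠ 0
        intro h0
        have hxX : x ∈ XSet f r := by
          show ‖f x‖ ≤ r
          rw [h0, norm_zero]
          exact hr.le
        exact hBr' x ⟨hx, hxX⟩
      have hSfq : {x | f x ≠ 0} ∈ q.1 := hq hSfmem
      obtain ⟨x, hx1, hx2⟩ := Stmt12.nonempty_of_mem q.2.1 (Stmt12.inter_mem q.2.1.1 hE hSfq)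
      exact hx2 (hf0 x hx1)
    · intro p hp A hA
      exact hA p hp
  refine ⟨φ, ⟨hFf, hhat⟩, ?_⟩
  rintro ψ ⟨hψ, hψhat⟩
  apply Set.Subset.antisymm
  · intro A hA p hp
    have hmem : p ∈ hatF F ψ := by rw [hψhat]; exact hp
    exact hmem hA
  · intro A hA
    obtain ⟨f₀, hf₀F, u₀, h1, h2, h3, -⟩ := Stmt12.normWitness hF p₀.2.1 (hA p₀ hp₀)
    refine Stmt12.mem_of_forall_ultra hF hψ hf₀F h1 h2 h3 ?_
    intro q hqu hψq
    have hqC : (⟨q, hqu⟩ : Delta F) ∈ C := by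
      rw [← hψhat]
      exact hψq
    exact hA ⟨q, hqu⟩ hqC
end

section
/- For every f ∈ F there exists a unique continuous function f̂ : δX → ℂ such that f = f̂ ∘ e. -/
open Set

variable {X : Type*} [Nonempty X] [TopologicalSpace X] [DiscreteTopology X]

section Stmt13Aux
open Topology
variable {X : Type*} [Nonempty X] [TopologicalSpace X] [DiscreteTopology X]
variable {F : StarSubalgebra ℂ (BoundedContinuousFunction X ℂ)}

set_option linter.unusedSectionVars false

namespace Stmt13

/-- Composition of a member of a closed star subalgebra with a continuous function lands
in the subalgebra. -/
lemma comp_mem_of_closed (F : StarSubalgebra ℂ (BoundedContinuousFunction X ℂ))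
    (hF : IsClosed (F : Set (BoundedContinuousFunction X ℂ)))
    (f : BoundedContinuousFunction X ℂ) (hf : f ∈ F) (φ : ℂ → ℂ) (hφ : Continuous φ) :
    ∃ g ∈ F, ∀ x : X, g x = φ (f x) := by
  set s : Set ℂ := Metric.closedBall 0 ‖f‖ with hs
  haveI : CompactSpace s := isCompact_iff_compactSpace.mp (isCompact_closedBall (0:ℂ) ‖f‖)
  have hfm : ∀ x : X, f x ∈ s := by
    intro x
    simp only [hs, Metric.mem_closedBall, dist_zero_right]
    exact f.norm_coe_le_norm x
  set f' : X → s := fun x => ⟨f x, hfm x⟩ with hf'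
  have key : ∀ g : C(s, ℂ), ∃ G : BoundedContinuousFunction X ℂ,
      (∀ x : X, G x = g (f' x)) ∧ ‖G‖ ≤ ‖g‖ := by
    intro g
    refine ⟨BoundedContinuousFunction.ofNormedAddCommGroup (fun x => g (f' x))
      continuous_of_discreteTopology ‖g‖ (fun x => g.norm_coe_le_norm _), fun x => rfl, ?_⟩
    exact BoundedContinuousFunction.norm_ofNormedAddCommGroup_le _ (norm_nonneg g) _
  classical
  let Φ : C(s, ℂ) →⋆ₐ[ℂ] BoundedContinuousFunction X ℂ :=
  { toFun := fun g => BoundedContinuousFunction.ofNormedAddCommGroup (fun x => g (f' x))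
      continuous_of_discreteTopology ‖g‖ (fun x => g.norm_coe_le_norm _)
    map_one' := by ext x; simp
    map_mul' := by intro a b; ext x; simp
    map_zero' := by ext x; simp
    map_add' := by intro a b; ext x; simp
    commutes' := by intro c; ext x; simp
    map_star' := by intro a; ext x; simp }
  have hΦ : ∀ (g : C(s,ℂ)) (x : X), Φ g x = g (f' x) := fun g x => rfl
  have hΦc : Continuous Φ := by
    refine AddMonoidHomClass.continuous_of_bound Φ 1 (fun g => ?_)
    rw [one_mul]
    exact BoundedContinuousFunction.norm_ofNormedAddCommGroup_le _ (norm_nonneg g)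
      (fun x => g.norm_coe_le_norm _)
  have hmaps : ∀ q ∈ ((polynomialFunctions s).starClosure : Set C(s,ℂ)), Φ q ∈ (F : Set _) := by
    intro q hq
    rw [SetLike.mem_coe, polynomialFunctions.starClosure_eq_adjoin_X] at hq
    have hle : StarAlgebra.adjoin ℂ {Polynomial.toContinuousMapOnAlgHom s Polynomial.X}
        ≤ F.comap Φ := by
      apply StarAlgebra.adjoin_le
      rintro q hq
      rw [Set.mem_singleton_iff] at hq
      subst hq
      rw [SetLike.mem_coe, StarSubalgebra.mem_comap]
      have : Φ (Polynomial.toContinuousMapOnAlgHom s Polynomial.X) = f := by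
        ext x
        rw [hΦ]
        simp [f']
      rwa [this]
    have := hle hq
    rwa [StarSubalgebra.mem_comap] at this
  set g0 : C(s, ℂ) := ContinuousMap.restrict s ⟨φ, hφ⟩ with hg0
  have hg0m : g0 ∈ closure ((polynomialFunctions s).starClosure : Set C(s,ℂ)) := by
    have : g0 ∈ ((polynomialFunctions s).starClosure.topologicalClosure : Set C(s,ℂ)) := by
      rw [polynomialFunctions.starClosure_topologicalClosure]
      trivial
    exact this
  have : Φ g0 ∈ closure (F : Set (BoundedContinuousFunction X ℂ)) :=
    map_mem_closure hΦc hg0m hmaps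
  rw [hF.closure_eq] at this
  exact ⟨Φ g0, this, fun x => rfl⟩

lemma Delta.upward (p : Delta F) {A B : Set X} (hA : A ∈ p.1) (hAB : A ⊆ B) : B ∈ p.1 :=
  p.2.1.1.2.2.1 A hA B hAB

lemma Delta.inter_mem (p : Delta F) {A B : Set X} (hA : A ∈ p.1) (hB : B ∈ p.1) :
    A ∩ B ∈ p.1 :=
  p.2.1.1.2.1 A hA B hB

lemma Delta.univ_mem (p : Delta F) : Set.univ ∈ p.1 := by
  obtain ⟨A, hA⟩ := p.2.1.1.1
  exact Delta.upward p hA (Set.subset_univ A)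

lemma Delta.nonempty_of_mem (p : Delta F) {A : Set X} (hA : A ∈ p.1) : A.Nonempty :=
  p.2.1.2.2.1 A hA

/-- `c` is a cluster value of `f` along the ultrafilter `p`. -/
def IsClus (f : BoundedContinuousFunction X ℂ) (p : Delta F) (c : ℂ) : Prop :=
  ∀ P ∈ p.1, ∀ ε : ℝ, 0 < ε → ∃ x ∈ P, ‖f x - c‖ < ε

/-- The filter on `X` associated to an `F`-ultrafilter. -/
def Delta.filter (p : Delta F) : Filter X where
  sets := p.1
  univ_sets := Delta.univ_mem p
  sets_of_superset := fun h hsub => Delta.upward p h hsub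
  inter_sets := fun h h' => Delta.inter_mem p h h'

lemma Delta.filter_neBot (p : Delta F) : (Delta.filter p).NeBot := by
  rw [Filter.neBot_iff]
  intro h
  have h0 : ∅ ∈ Delta.filter p := h ▸ Filter.mem_bot
  exact absurd (Delta.nonempty_of_mem p h0) (by simp)

lemma exists_isClus (f : BoundedContinuousFunction X ℂ) (p : Delta F) :
    ∃ c, IsClus f p c := by
  haveI := Delta.filter_neBot p
  have hle : Filter.map (fun x => f x) (Delta.filter p) ≤ Filter.principal (Metric.closedBall 0 ‖f‖) := by
    rw [Filter.le_principal_iff, Filter.mem_map]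
    have : (fun x => f x) ⁻¹' Metric.closedBall 0 ‖f‖ = Set.univ := by
      ext x
      simp only [Set.mem_preimage, Metric.mem_closedBall, dist_zero_right, Set.mem_univ, iff_true]
      exact f.norm_coe_le_norm x
    rw [this]
    exact Delta.univ_mem p
  obtain ⟨c, -, hc⟩ := (isCompact_closedBall (0:ℂ) ‖f‖).exists_clusterPt hle
  refine ⟨c, fun P hP ε hε => ?_⟩
  have h1 : Metric.ball c ε ∈ nhds c := Metric.ball_mem_nhds c hε
  have h2 : (fun x => f x) '' P ∈ Filter.map (fun x => f x) (Delta.filter p) :=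
    Filter.image_mem_map hP
  have := hc.neBot
  obtain ⟨y, hy1, hy2⟩ := Filter.nonempty_of_mem
    (Filter.inter_mem (Filter.mem_inf_of_left h1) (Filter.mem_inf_of_right h2))
  obtain ⟨x, hx, rfl⟩ := hy2
  refine ⟨x, hx, ?_⟩
  rwa [Metric.mem_ball, dist_eq_norm] at hy1

/-- The key maximality argument: any cluster value is a limit along the ultrafilter. -/
lemma isClus_mem (hF : IsClosed (F : Set (BoundedContinuousFunction X ℂ)))
    (f : BoundedContinuousFunction X ℂ) (hf : f ∈ F) (p : Delta F) {c : ℂ}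
    (hc : IsClus f p c) : ∀ ε : ℝ, 0 < ε → {x : X | ‖f x - c‖ ≤ ε} ∈ p.1 := by
  set ψ : Set (Set X) :=
    {A | ∃ P ∈ p.1, ∃ r : ℝ, 0 < r ∧ P ∩ {x : X | ‖f x - c‖ ≤ r} ⊆ A} with hψ
  have hne : ∀ A ∈ ψ, A.Nonempty := by
    rintro A ⟨P, hP, r, hr, hsub⟩
    obtain ⟨x, hx, hlt⟩ := hc P hP r hr
    exact ⟨x, hsub ⟨hx, le_of_lt hlt⟩⟩
  have hmem : ∀ (P : Set X), P ∈ p.1 → ∀ r : ℝ, 0 < r →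
      P ∩ {x : X | ‖f x - c‖ ≤ r} ∈ ψ := by
    intro P hP r hr
    exact ⟨P, hP, r, hr, subset_rfl⟩
  have hsubp : p.1 ⊆ ψ := by
    intro A hA
    exact ⟨A, hA, 1, one_pos, Set.inter_subset_left⟩
  have hfilter : IsSetFilter ψ := by
    refine ⟨⟨Set.univ, hsubp (Delta.univ_mem p)⟩, ?_, ?_, ?_⟩
    · rintro A ⟨P, hP, r, hr, hsub⟩ B ⟨Q, hQ, r', hr', hsub'⟩
      refine ⟨P ∩ Q, Delta.inter_mem p hP hQ, min r r', lt_min hr hr', ?_⟩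
      rintro x ⟨⟨hxP, hxQ⟩, hxr⟩
      simp only [Set.mem_setOf_eq, le_min_iff] at hxr
      exact ⟨hsub ⟨hxP, hxr.1⟩, hsub' ⟨hxQ, hxr.2⟩⟩
    · rintro A hA B hAB
      obtain ⟨P, hP, r, hr, hsub⟩ := hA
      exact ⟨P, hP, r, hr, hsub.trans hAB⟩
    · intro h
      exact absurd (hne ∅ h) (by simp)
  have hfam : FFamily F ψ := by
    refine ⟨⟨Set.univ, hsubp (Delta.univ_mem p)⟩, hne, ?_⟩
    rintro A ⟨P, hP, r, hr, hsub⟩ hAne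
    obtain ⟨P', hP', h, hhF, hh0, hh1⟩ :
        ∃ P' ∈ p.1, ∃ h ∈ F, (∀ x ∈ P', h x = 0) ∧ ∀ x ∉ P, h x = 1 := by
      by_cases hPu : P = Set.univ
      · exact ⟨Set.univ, Delta.univ_mem p, 0, zero_mem F, by simp, by simp [hPu]⟩
      · exact p.2.1.2.2.2 P hP hPu
    set θ : ℂ → ℂ := fun z => ((min 1 (max 0 ((‖z - c‖ - r/2) * (2/r))) : ℝ) : ℂ) with hθ
    have hθc : Continuous θ := by
      apply Complex.continuous_ofReal.comp
      apply continuous_const.min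
      apply continuous_const.max
      exact (((continuous_id.sub continuous_const).norm).sub continuous_const).mul
        continuous_const
    have hθ0 : ∀ z : ℂ, ‖z - c‖ ≤ r/2 → θ z = 0 := by
      intro z hz
      have h1 : (‖z - c‖ - r/2) * (2/r) ≤ 0 :=
        mul_nonpos_of_nonpos_of_nonneg (by linarith) (by positivity)
      simp only [hθ]
      rw [max_eq_left h1, min_eq_right zero_le_one]
      norm_num
    have hθ1 : ∀ z : ℂ, r < ‖z - c‖ → θ z = 1 := by
      intro z hz
      have h1 : (1:ℝ) ≤ (‖z - c‖ - r/2) * (2/r) := by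
        rw [show (1:ℝ) = (r/2) * (2/r) by field_simp]
        apply mul_le_mul_of_nonneg_right (by linarith) (by positivity)
      simp only [hθ]
      rw [max_eq_right (le_trans zero_le_one h1), min_eq_left h1]
      norm_num
    obtain ⟨φf, hφfF, hφf⟩ := comp_mem_of_closed F hF f hf θ hθc
    refine ⟨P' ∩ {x : X | ‖f x - c‖ ≤ r/2}, hmem P' hP' (r/2) (by positivity),
      h + φf - h * φf, ?_, ?_, ?_⟩
    · exact sub_mem (add_mem hhF hφfF) (mul_mem hhF hφfF)
    · rintro x ⟨hx1, hx2⟩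
      simp only [BoundedContinuousFunction.coe_sub, BoundedContinuousFunction.coe_add,
        BoundedContinuousFunction.coe_mul, Pi.sub_apply, Pi.add_apply, Pi.mul_apply]
      rw [hh0 x hx1, hφf x, hθ0 (f x) hx2]
      ring
    · intro x hxA
      have hxPA : x ∉ P ∩ {x : X | ‖f x - c‖ ≤ r} := fun hx => hxA (hsub hx)
      simp only [BoundedContinuousFunction.coe_sub, BoundedContinuousFunction.coe_add,
        BoundedContinuousFunction.coe_mul, Pi.sub_apply, Pi.add_apply, Pi.mul_apply]
      by_cases hxP : x ∈ P
      · have hgt : r < ‖f x - c‖ := by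
          by_contra hle
          exact hxPA ⟨hxP, le_of_not_gt hle⟩
        rw [hφf x, hθ1 (f x) hgt]
        ring
      · rw [hh1 x hxP]
        ring
  have hup : ψ = p.1 := p.2.2 ψ ⟨hfilter, hfam⟩ hsubp
  intro ε hε
  rw [← hup]
  exact ⟨Set.univ, Delta.univ_mem p, ε, hε, fun x hx => hx.2⟩

lemma limit_unique (f : BoundedContinuousFunction X ℂ) (p : Delta F) {c c' : ℂ}
    (h1 : ∀ ε : ℝ, 0 < ε → {x : X | ‖f x - c‖ ≤ ε} ∈ p.1)
    (h2 : ∀ ε : ℝ, 0 < ε → {x : X | ‖f x - c'‖ ≤ ε} ∈ p.1) : c = c' := by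
  by_contra hne
  have hd : 0 < ‖c - c'‖ := by
    rw [norm_pos_iff, sub_ne_zero]
    exact hne
  obtain ⟨x, hx1, hx2⟩ := Delta.nonempty_of_mem p
    (Delta.inter_mem p (h1 (‖c - c'‖/3) (by positivity)) (h2 (‖c - c'‖/3) (by positivity)))
  simp only [Set.mem_setOf_eq] at hx1 hx2
  have : ‖c - c'‖ ≤ ‖f x - c‖ + ‖f x - c'‖ := by
    calc ‖c - c'‖ = ‖(f x - c') - (f x - c)‖ := by ring_nf
      _ ≤ ‖f x - c'‖ + ‖f x - c‖ := norm_sub_le _ _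
      _ = ‖f x - c‖ + ‖f x - c'‖ := by ring
  linarith

lemma Delta.upward' (p : Delta F) {A B : Set X} (hA : A ∈ p.1) (hAB : A ⊆ B) : B ∈ p.1 :=
  p.2.1.1.2.2.1 A hA B hAB
lemma Delta.inter_mem' (p : Delta F) {A B : Set X} (hA : A ∈ p.1) (hB : B ∈ p.1) :
    A ∩ B ∈ p.1 :=
  p.2.1.1.2.1 A hA B hB
lemma Delta.univ_mem' (p : Delta F) : Set.univ ∈ p.1 := by
  obtain ⟨A, hA⟩ := p.2.1.1.1
  exact Delta.upward' p hA (Set.subset_univ A)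
lemma Delta.nonempty_of_mem' (p : Delta F) {A : Set X} (hA : A ∈ p.1) : A.Nonempty :=
  p.2.1.2.2.1 A hA

lemma isOpen_hatSet (A : Set X) : IsOpen (hatSet F A) :=
  TopologicalSpace.isOpen_generateFrom_of_mem ⟨A, rfl⟩

lemma exists_hatSet_subset {U : Set (Delta F)} (hU : IsOpen U) :
    ∀ p ∈ U, ∃ A ∈ p.1, hatSet F A ⊆ U := by
  have hU' : TopologicalSpace.GenerateOpen {S | ∃ A : Set X, S = hatSet F A} U := hU
  clear hU
  induction hU' with
  | basic V hV =>
    obtain ⟨A, rfl⟩ := hV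
    exact fun p hp => ⟨A, hp, subset_rfl⟩
  | univ => exact fun p _ => ⟨Set.univ, Delta.univ_mem' p, Set.subset_univ _⟩
  | inter V W _ _ ihV ihW =>
    intro p hp
    obtain ⟨A, hA, hAs⟩ := ihV p hp.1
    obtain ⟨B, hB, hBs⟩ := ihW p hp.2
    refine ⟨A ∩ B, Delta.inter_mem' p hA hB, fun q hq => ?_⟩
    have hq' : A ∩ B ∈ q.1 := hq
    exact ⟨hAs (Delta.upward' q hq' Set.inter_subset_left),
      hBs (Delta.upward' q hq' Set.inter_subset_right)⟩
  | sUnion S _ ih =>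
    rintro p ⟨V, hVS, hpV⟩
    obtain ⟨A, hA, hs⟩ := ih V hVS p hpV
    exact ⟨A, hA, hs.trans (Set.subset_sUnion_of_mem hVS)⟩

lemma continuous_tauF (f : BoundedContinuousFunction X ℂ) (hf : f ∈ F) :
    @Continuous X ℂ (tauF F) _ (fun x => f x) := by
  rw [continuous_iff_le_induced]
  exact iInf₂_le (f : BoundedContinuousFunction X ℂ) hf

lemma mem_nhds_tauF_of_fun {A : Set X} {x : X} (h : BoundedContinuousFunction X ℂ)
    (hhF : h ∈ F) (hx : h x = 0) (hA : ∀ y ∉ A, h y = 1) :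
    A ∈ @nhds X (tauF F) x := by
  have hcont := continuous_tauF (F := F) h hhF
  have hopen : IsOpen[tauF F] ((fun y => h y) ⁻¹' Metric.ball 0 (1/2)) :=
    (continuous_def.mp hcont) _ Metric.isOpen_ball
  have hmem : (fun y => h y) ⁻¹' Metric.ball 0 (1/2) ∈ @nhds X (tauF F) x := by
    refine @IsOpen.mem_nhds X (tauF F) x _ hopen ?_
    simp only [Set.mem_preimage, Metric.mem_ball, hx, dist_self]
    norm_num
  refine Filter.mem_of_superset hmem ?_
  · intro y hy
    by_contra hyA
    have := hA y hyA
    simp only [Set.mem_preimage, Metric.mem_ball, this, dist_zero_left] at hy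
    norm_num at hy

lemma closedBall_mem_nhds_tauF (f : BoundedContinuousFunction X ℂ) (hf : f ∈ F) (x : X)
    {ε : ℝ} (hε : 0 < ε) : {y : X | ‖f y - f x‖ ≤ ε} ∈ @nhds X (tauF F) x := by
  have hcont := continuous_tauF (F := F) f hf
  have : {y : X | ‖f y - f x‖ ≤ ε} = (fun y => f y) ⁻¹' Metric.closedBall (f x) ε := by
    ext y
    simp [Metric.mem_closedBall, dist_eq_norm]
  rw [this]
  exact @ContinuousAt.preimage_mem_nhds X ℂ (tauF F) _ _ x _
    (@Continuous.continuousAt X ℂ (tauF F) _ _ x hcont)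
    (Metric.closedBall_mem_nhds _ hε)

lemma dense_range_e (e : X → Delta F)
    (he : ∀ x : X, (e x).1 = {A : Set X | A ∈ @nhds X (tauF F) x}) :
    Dense (Set.range e) := by
  rw [dense_iff_inter_open]
  rintro U hU ⟨p, hp⟩
  obtain ⟨A, hA, hs⟩ := exists_hatSet_subset hU p hp
  suffices h : ∃ x : X, A ∈ @nhds X (tauF F) x by
    obtain ⟨x, hx⟩ := h
    refine ⟨e x, hs ?_, ⟨x, rfl⟩⟩
    show A ∈ (e x).1
    rw [he x]
    exact hx
  by_cases hAu : A = Set.univ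
  · obtain ⟨x⟩ := (inferInstance : Nonempty X)
    exact ⟨x, by simp [hAu]⟩
  · obtain ⟨B, hB, h, hhF, hh0, hh1⟩ := p.2.1.2.2.2 A hA hAu
    obtain ⟨x, hxB⟩ := Delta.nonempty_of_mem' p hB
    exact ⟨x, mem_nhds_tauF_of_fun h hhF (hh0 x hxB) hh1⟩

lemma continuous_ghat {F : StarSubalgebra ℂ (BoundedContinuousFunction X ℂ)}
    (f : BoundedContinuousFunction X ℂ) (g : Delta F → ℂ)
    (hg : ∀ p : Delta F, ∀ ε : ℝ, 0 < ε → {x : X | ‖f x - g p‖ ≤ ε} ∈ p.1) :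
    Continuous g := by
  rw [continuous_iff_continuousAt]
  intro p
  rw [ContinuousAt, Metric.tendsto_nhds]
  intro ε hε
  have hA : {x : X | ‖f x - g p‖ ≤ ε/3} ∈ p.1 := hg p (ε/3) (by positivity)
  have hopen : IsOpen (hatSet F {x : X | ‖f x - g p‖ ≤ ε/3}) := isOpen_hatSet _
  refine Filter.eventually_of_mem (hopen.mem_nhds hA) ?_
  intro q hq
  have h1 : {x : X | ‖f x - g p‖ ≤ ε/3} ∈ q.1 := hq
  have h2 : {x : X | ‖f x - g q‖ ≤ ε/3} ∈ q.1 := hg q (ε/3) (by positivity)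
  obtain ⟨x, hx1, hx2⟩ := Delta.nonempty_of_mem' q (Delta.inter_mem' q h1 h2)
  simp only [Set.mem_setOf_eq] at hx1 hx2
  rw [dist_eq_norm]
  have : ‖g q - g p‖ ≤ ‖f x - g p‖ + ‖f x - g q‖ := by
    calc ‖g q - g p‖ = ‖(f x - g p) - (f x - g q)‖ := by ring_nf
      _ ≤ ‖f x - g p‖ + ‖f x - g q‖ := norm_sub_le _ _
  linarith

end Stmt13
end Stmt13Aux

theorem stmt13 (F : StarSubalgebra ℂ (BoundedContinuousFunction X ℂ)) (hF : IsClosed (F : Set (BoundedContinuousFunction X ℂ))) (e : X → Delta F) (he : ∀ x : X, (e x).1 = {A : Set X | A ∈ @nhds X (tauF F) x})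
    (f : BoundedContinuousFunction X ℂ) (hf : f ∈ F) :
    ∃! g : C(Delta F, ℂ), ∀ x : X, f x = g (e x) := by
  classical
  have hclus : ∀ p : Delta F, ∃ c, Stmt13.IsClus f p c := fun p => Stmt13.exists_isClus f p
  set g : Delta F → ℂ := fun p => Classical.choose (hclus p) with hgdef
  have hg : ∀ p : Delta F, ∀ ε : ℝ, 0 < ε → {x : X | ‖f x - g p‖ ≤ ε} ∈ p.1 :=
    fun p => Stmt13.isClus_mem hF f hf p (Classical.choose_spec (hclus p))
  have hgc : Continuous g := Stmt13.continuous_ghat f g hg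
  have hge : ∀ x : X, f x = g (e x) := by
    intro x
    refine Stmt13.limit_unique f (e x) ?_ (hg (e x))
    intro ε hε
    show {y : X | ‖f y - f x‖ ≤ ε} ∈ (e x).1
    rw [he x]
    exact Stmt13.closedBall_mem_nhds_tauF f hf x hε
  refine ⟨⟨g, hgc⟩, hge, ?_⟩
  intro g' hg'
  have hext : (g' : Delta F → ℂ) = g :=
    Continuous.ext_on (Stmt13.dense_range_e e he) g'.continuous hgc (by
      rintro _ ⟨x, rfl⟩
      exact (hg' x).symm.trans (hge x))
  ext p
  exact congrFun hext p
end

section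
/- The mapping Γ : F → C(δX) which sends each f ∈ F to its unique continuous extension f̂ (the unique continuous f̂ : δX → ℂ with f = f̂ ∘ e) is an isometric *-isomorphism of F onto the C*-algebra C(δX) of all continuous complex-valued functions on the compact Hausdorff space δX. -/
open Set

variable {X : Type*} [Nonempty X] [TopologicalSpace X] [DiscreteTopology X]

section Aux

variable {F : StarSubalgebra ℂ (BoundedContinuousFunction X ℂ)}

lemma FFilter.univ_mem' {p : Set (Set X)} (h : FFilter F p) : Set.univ ∈ p := by
  obtain ⟨A, hA⟩ := h.1.1
  exact h.1.2.2.1 A hA _ (subset_univ A)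

lemma Delta.univ_mem (p : Delta F) : Set.univ ∈ p.1 := p.2.1.univ_mem'

lemma Delta.inter_mem (p : Delta F) {A B : Set X} (hA : A ∈ p.1) (hB : B ∈ p.1) :
    A ∩ B ∈ p.1 := p.2.1.1.2.1 A hA B hB

lemma Delta.superset_mem (p : Delta F) {A B : Set X} (hA : A ∈ p.1) (hAB : A ⊆ B) :
    B ∈ p.1 := p.2.1.1.2.2.1 A hA B hAB

lemma Delta.nonempty_of_mem (p : Delta F) {A : Set X} (hA : A ∈ p.1) : A.Nonempty :=
  p.2.1.2.2.1 A hA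

/-- Evaluation at a point, as an algebra homomorphism on bounded functions. -/
noncomputable def evalA (x : X) : BoundedContinuousFunction X ℂ →ₐ[ℂ] ℂ where
  toFun f := f x
  map_one' := rfl
  map_mul' _ _ := rfl
  map_zero' := rfl
  map_add' _ _ := rfl
  commutes' _ := rfl

/-- A plateau function obtained from `u` by continuous functional calculus
(implemented via Weierstrass approximation). -/
lemma exists_plateau (F : StarSubalgebra ℂ (BoundedContinuousFunction X ℂ))
    (hF : IsClosed (F : Set (BoundedContinuousFunction X ℂ)))
    {u : BoundedContinuousFunction X ℂ} (hu : u ∈ F) {r s : ℝ} (hr : 0 < r) (hrs : r < s) :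
    ∃ h : BoundedContinuousFunction X ℂ, h ∈ F ∧ (∀ x, ‖u x‖ ≤ r → h x = 0) ∧
      (∀ x, s ≤ ‖u x‖ → h x = 1) := by
  have hr2s2 : r ^ 2 < s ^ 2 := by nlinarith
  set ψ : ℝ → ℝ := fun t => min 1 (max 0 ((t - r ^ 2) / (s ^ 2 - r ^ 2))) with hψdef
  have hψ0 : ∀ t ≤ r ^ 2, ψ t = 0 := by
    intro t ht
    have : (t - r ^ 2) / (s ^ 2 - r ^ 2) ≤ 0 :=
      div_nonpos_of_nonpos_of_nonneg (by linarith) (by linarith)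
    simp [hψdef, max_eq_left this, min_eq_right zero_le_one]
  have hψ1 : ∀ t, s ^ 2 ≤ t → ψ t = 1 := by
    intro t ht
    have h1 : (1 : ℝ) ≤ (t - r ^ 2) / (s ^ 2 - r ^ 2) :=
      (one_le_div (by linarith)).2 (by linarith)
    have : max 0 ((t - r ^ 2) / (s ^ 2 - r ^ 2)) = (t - r ^ 2) / (s ^ 2 - r ^ 2) :=
      max_eq_right (by linarith)
    simp [hψdef, this, min_eq_left h1]
  have hψmem : ∀ t, ψ t ∈ Set.Icc (0:ℝ) 1 :=
    fun t => ⟨le_min zero_le_one (le_max_left _ _), min_le_left _ _⟩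
  have hψcont : Continuous ψ := by
    apply Continuous.min continuous_const
    apply Continuous.max continuous_const
    exact (continuous_id.sub continuous_const).div_const _
  -- the candidate function
  set h : BoundedContinuousFunction X ℂ :=
    BoundedContinuousFunction.ofNormedAddCommGroup
      (fun x => ((ψ (‖u x‖ ^ 2) : ℝ) : ℂ)) continuous_of_discreteTopology 1
      (fun x => by
        rw [Complex.norm_real]
        exact abs_le.2 ⟨by linarith [(hψmem (‖u x‖ ^ 2)).1], (hψmem (‖u x‖ ^ 2)).2⟩) with hhdef
  have happ : ∀ x, h x = ((ψ (‖u x‖ ^ 2) : ℝ) : ℂ) := fun x => rfl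
  -- v = star u * u
  set v : BoundedContinuousFunction X ℂ := star u * u with hvdef
  have hvF : v ∈ F := mul_mem (star_mem hu) hu
  have hvx : ∀ x, v x = ((‖u x‖ ^ 2 : ℝ) : ℂ) := by
    intro x
    have : v x = star (u x) * u x := rfl
    rw [this]
    simp [Complex.star_def, Complex.conj_mul', Complex.normSq_eq_norm_sq]
  have hvbound : ∀ x, ‖u x‖ ^ 2 ∈ Set.Icc (0:ℝ) (‖u‖ ^ 2) := by
    intro x
    exact ⟨sq_nonneg _, by
      have := u.norm_coe_le_norm x
      nlinarith [norm_nonneg (u x)]⟩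
  -- h is in the closure of F
  have hmem : h ∈ closure (F : Set (BoundedContinuousFunction X ℂ)) := by
    rw [Metric.mem_closure_iff]
    intro ε hε
    obtain ⟨q, hq⟩ := exists_polynomial_near_of_continuousOn 0 (‖u‖ ^ 2) ψ
      hψcont.continuousOn (ε / 2) (by positivity)
    set g : BoundedContinuousFunction X ℂ :=
      Polynomial.aeval v (q.map (algebraMap ℝ ℂ)) with hgdef
    have hgF : g ∈ F := by
      have h1 : g ∈ Algebra.adjoin ℂ ({v} : Set (BoundedContinuousFunction X ℂ)) :=
        Polynomial.aeval_mem_adjoin_singleton ℂ v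
      have h2 : Algebra.adjoin ℂ ({v} : Set (BoundedContinuousFunction X ℂ)) ≤
          F.toSubalgebra := Algebra.adjoin_le (Set.singleton_subset_iff.2 hvF)
      exact h2 h1
    have hgx : ∀ x, g x = ((q.eval (‖u x‖ ^ 2) : ℝ) : ℂ) := by
      intro x
      have e1 : g x = evalA x g := rfl
      rw [e1, hgdef, ← Polynomial.aeval_algHom_apply (evalA x) v (q.map (algebraMap ℝ ℂ))]
      have e2 : evalA x v = ((‖u x‖ ^ 2 : ℝ) : ℂ) := hvx x
      rw [e2]
      rw [Polynomial.aeval_map_algebraMap]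
      have : ((‖u x‖ ^ 2 : ℝ) : ℂ) = algebraMap ℝ ℂ (‖u x‖ ^ 2) := rfl
      rw [this, Polynomial.aeval_algebraMap_apply]
      simp [Polynomial.coe_aeval_eq_eval]
    refine ⟨g, hgF, ?_⟩
    have : dist h g ≤ ε / 2 := by
      apply BoundedContinuousFunction.dist_le (by positivity) |>.2
      intro x
      rw [happ x, hgx x, dist_eq_norm, ← Complex.ofReal_sub, Complex.norm_real, Real.norm_eq_abs]
      have := hq (‖u x‖ ^ 2) (hvbound x)
      rw [abs_sub_comm] at this
      linarith [le_of_lt this]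
    linarith [this, hε]
  refine ⟨h, by have := hF.closure_eq ▸ hmem; exact this, ?_, ?_⟩
  · intro x hx
    rw [happ x, hψ0 _ (by nlinarith [norm_nonneg (u x)])]
    simp
  · intro x hx
    rw [happ x, hψ1 _ (by nlinarith [norm_nonneg (u x)])]
    simp

end Aux
section Aux2

variable {F : StarSubalgebra ℂ (BoundedContinuousFunction X ℂ)}

/-- Existence of a "limit value" of `f` along an `F`-ultrafilter, by compactness. -/
lemma exists_c (F : StarSubalgebra ℂ (BoundedContinuousFunction X ℂ))
    {p : Set (Set X)} (hp : FUltrafilter F p) (f : BoundedContinuousFunction X ℂ) :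
    ∃ c : ℂ, ∀ A ∈ p, ∀ r : ℝ, 0 < r → (A ∩ {x | ‖f x - c‖ ≤ r}).Nonempty := by
  have hne : p.Nonempty := hp.1.1.1
  haveI : Nonempty p := hne.to_subtype
  set K : p → Set ℂ := fun A => closure (f '' A.1) with hK
  have hdir : Directed (· ⊇ ·) K := by
    intro A B
    refine ⟨⟨A.1 ∩ B.1, hp.1.1.2.1 _ A.2 _ B.2⟩, ?_, ?_⟩
    · exact closure_mono (image_mono (fun x hx => hx.1))
    · exact closure_mono (image_mono (fun x hx => hx.2))
  have hKn : ∀ A, (K A).Nonempty := fun A =>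
    ((hp.1.2.2.1 _ A.2).image f).closure
  have hKcl : ∀ A, IsClosed (K A) := fun A => isClosed_closure
  have hKc : ∀ A, IsCompact (K A) := by
    intro A
    apply (isCompact_closedBall (0:ℂ) ‖f‖).of_isClosed_subset isClosed_closure
    apply closure_minimal _ Metric.isClosed_closedBall
    rintro y ⟨x, _, rfl⟩
    simpa [mem_closedBall_zero_iff] using f.norm_coe_le_norm x
  obtain ⟨c, hc⟩ := IsCompact.nonempty_iInter_of_directed_nonempty_isCompact_isClosed
    K hdir hKn hKc hKcl
  refine ⟨c, ?_⟩
  intro A hA r hr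
  have hcA : c ∈ K ⟨A, hA⟩ := by
    have := mem_iInter.1 hc ⟨A, hA⟩
    exact this
  rw [Metric.mem_closure_iff] at hcA
  obtain ⟨y, ⟨x, hxA, rfl⟩, hy⟩ := hcA r hr
  exact ⟨x, hxA, by rw [mem_setOf_eq, ← dist_eq_norm, dist_comm]; exact hy.le⟩

/-- Maximality: a compatible limit candidate actually has its "closed strips" in the
ultrafilter. -/
lemma mem_of_compat (F : StarSubalgebra ℂ (BoundedContinuousFunction X ℂ))
    (hF : IsClosed (F : Set (BoundedContinuousFunction X ℂ)))
    {p : Set (Set X)} (hp : FUltrafilter F p) {f : BoundedContinuousFunction X ℂ}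
    (hf : f ∈ F) (c : ℂ)
    (hmeet : ∀ A ∈ p, ∀ r : ℝ, 0 < r → (A ∩ {x | ‖f x - c‖ ≤ r}).Nonempty) :
    ∀ r : ℝ, 0 < r → {x | ‖f x - c‖ ≤ r} ∈ p := by
  have huniv : Set.univ ∈ p := hp.1.univ_mem'
  set ψ : Set (Set X) :=
    {S | ∃ A ∈ p, ∃ r : ℝ, 0 < r ∧ A ∩ {x | ‖f x - c‖ ≤ r} ⊆ S} with hψdef
  have hpsub : p ⊆ ψ := fun A hA => ⟨A, hA, 1, one_pos, inter_subset_left⟩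
  have hFamNe : ∀ S ∈ ψ, S.Nonempty := by
    rintro S ⟨A, hA, r, hr, hsub⟩
    exact (hmeet A hA r hr).mono hsub
  have hufc : f - BoundedContinuousFunction.const X c ∈ F := by
    apply sub_mem hf
    have : BoundedContinuousFunction.const X c = algebraMap ℂ _ c := rfl
    rw [this]; exact F.algebraMap_mem c
  have hucx : ∀ x, (f - BoundedContinuousFunction.const X c) x = f x - c := by
    intro x; simp
  have hfilter : FFilter F ψ := by
    refine ⟨⟨⟨Set.univ, hpsub huniv⟩, ?_, ?_, ?_⟩, ⟨Set.univ, hpsub huniv⟩, hFamNe, ?_⟩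
    · rintro S ⟨A, hA, r, hr, hS⟩ T ⟨B, hB, r', hr', hT⟩
      refine ⟨A ∩ B, hp.1.1.2.1 _ hA _ hB, min r r', lt_min hr hr', ?_⟩
      rintro x ⟨⟨hxA, hxB⟩, hx⟩
      have hx' : ‖f x - c‖ ≤ min r r' := hx
      exact ⟨hS ⟨hxA, le_trans hx' (min_le_left _ _)⟩,
        hT ⟨hxB, le_trans hx' (min_le_right _ _)⟩⟩
    · rintro S ⟨A, hA, r, hr, hS⟩ T hST
      exact ⟨A, hA, r, hr, hS.trans hST⟩
    · intro h0
      exact (hFamNe ∅ h0).ne_empty rfl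
    · rintro S ⟨A, hA, r, hr, hsub⟩ hSne
      -- find g vanishing on a member of p and equal 1 off A
      have hAB : ∃ B ∈ p, ∃ g ∈ F, (∀ x ∈ B, g x = 0) ∧ ∀ x ∉ A, g x = 1 := by
        by_cases hA' : A = Set.univ
        · exact ⟨Set.univ, huniv, 0, zero_mem F, by simp, by simp [hA']⟩
        · exact hp.1.2.2.2 A hA hA'
      obtain ⟨B, hB, g, hgF, hg0, hg1⟩ := hAB
      obtain ⟨h, hhF, hh0, hh1⟩ := exists_plateau F hF hufc (half_pos hr) (half_lt_self hr)
      set k : BoundedContinuousFunction X ℂ := 1 - (1 - g) * (1 - h) with hkdef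
      have hkF : k ∈ F := sub_mem (one_mem F)
        (mul_mem (sub_mem (one_mem F) hgF) (sub_mem (one_mem F) hhF))
      have hkapp : ∀ x, k x = 1 - (1 - g x) * (1 - h x) := by intro x; simp [hkdef]
      refine ⟨B ∩ {x | ‖f x - c‖ ≤ r / 2}, ⟨B, hB, r / 2, half_pos hr, fun x hx => hx⟩,
        k, hkF, ?_, ?_⟩
      · rintro x ⟨hxB, hxr⟩
        have h0 : h x = 0 := hh0 x (by rw [hucx x]; exact hxr)
        rw [hkapp x, hg0 x hxB, h0]; ring
      · intro x hxS
        have hnx : x ∉ A ∩ {x | ‖f x - c‖ ≤ r} := fun hx => hxS (hsub hx)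
        by_cases hxA : x ∈ A
        · have hxr : ¬ ‖f x - c‖ ≤ r := fun hle => hnx ⟨hxA, hle⟩
          have h1 : h x = 1 := hh1 x (by rw [hucx x]; exact (not_le.1 hxr).le)
          rw [hkapp x, h1]; ring
        · rw [hkapp x, hg1 x hxA]; ring
  have hψp : ψ = p := hp.2 ψ hfilter hpsub
  intro r hr
  rw [← hψp]
  exact ⟨Set.univ, huniv, r, hr, by intro x hx; exact hx.2⟩

end Aux2
section Aux3

variable {F : StarSubalgebra ℂ (BoundedContinuousFunction X ℂ)}

/-- The limit of `f` along the `F`-ultrafilter `p`. -/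
noncomputable def gam (F : StarSubalgebra ℂ (BoundedContinuousFunction X ℂ))
    (f : BoundedContinuousFunction X ℂ) (p : Delta F) : ℂ :=
  (exists_c F p.2 f).choose

lemma gam_meet (F : StarSubalgebra ℂ (BoundedContinuousFunction X ℂ))
    (f : BoundedContinuousFunction X ℂ) (p : Delta F) :
    ∀ A ∈ p.1, ∀ r : ℝ, 0 < r → (A ∩ {x | ‖f x - gam F f p‖ ≤ r}).Nonempty :=
  (exists_c F p.2 f).choose_spec

lemma gam_spec (hF : IsClosed (F : Set (BoundedContinuousFunction X ℂ)))
    {f : BoundedContinuousFunction X ℂ} (hf : f ∈ F) (p : Delta F) :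
    ∀ r : ℝ, 0 < r → {x | ‖f x - gam F f p‖ ≤ r} ∈ p.1 :=
  mem_of_compat F hF p.2 hf _ (gam_meet F f p)

lemma gam_unique (hF : IsClosed (F : Set (BoundedContinuousFunction X ℂ)))
    {f : BoundedContinuousFunction X ℂ} (hf : f ∈ F) (p : Delta F) {c : ℂ}
    (hc : ∀ r : ℝ, 0 < r → {x | ‖f x - c‖ ≤ r} ∈ p.1) : gam F f p = c := by
  by_contra hne
  have hd : 0 < ‖gam F f p - c‖ / 3 := by
    have := norm_pos_iff.2 (sub_ne_zero.2 hne)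
    linarith
  have h1 := gam_spec hF hf p _ hd
  have h2 := hc _ hd
  obtain ⟨x, hx1, hx2⟩ := p.nonempty_of_mem (p.inter_mem h1 h2)
  have hx1' : ‖f x - gam F f p‖ ≤ ‖gam F f p - c‖ / 3 := hx1
  have hx2' : ‖f x - c‖ ≤ ‖gam F f p - c‖ / 3 := hx2
  have : ‖gam F f p - c‖ ≤ ‖f x - gam F f p‖ + ‖f x - c‖ := by
    have : gam F f p - c = (f x - c) - (f x - gam F f p) := by ring
    rw [this]
    exact (norm_sub_le _ _).trans (by rw [add_comm])
  linarith

lemma gam_superset (hF : IsClosed (F : Set (BoundedContinuousFunction X ℂ)))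
    {f : BoundedContinuousFunction X ℂ} (hf : f ∈ F) (p : Delta F) {c : ℂ}
    {B : Set X} (hB : B ∈ p.1) (hBc : ∀ x ∈ B, f x = c) : gam F f p = c := by
  apply gam_unique hF hf p
  intro r hr
  apply p.superset_mem hB
  intro x hx
  rw [mem_setOf_eq, hBc x hx, sub_self, norm_zero]
  exact hr.le

lemma gam_add (hF : IsClosed (F : Set (BoundedContinuousFunction X ℂ)))
    {f g : BoundedContinuousFunction X ℂ} (hf : f ∈ F) (hg : g ∈ F) (p : Delta F) :
    gam F (f + g) p = gam F f p + gam F g p := by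
  apply gam_unique hF (add_mem hf hg) p
  intro r hr
  apply p.superset_mem (p.inter_mem (gam_spec hF hf p (r/2) (half_pos hr))
    (gam_spec hF hg p (r/2) (half_pos hr)))
  rintro x ⟨hx1, hx2⟩
  have hx1' : ‖f x - gam F f p‖ ≤ r/2 := hx1
  have hx2' : ‖g x - gam F g p‖ ≤ r/2 := hx2
  have : (f + g) x - (gam F f p + gam F g p)
      = (f x - gam F f p) + (g x - gam F g p) := by
    simp; ring
  rw [mem_setOf_eq, this]
  calc ‖(f x - gam F f p) + (g x - gam F g p)‖
      ≤ ‖f x - gam F f p‖ + ‖g x - gam F g p‖ := norm_add_le _ _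
    _ ≤ r := by linarith

lemma gam_mul (hF : IsClosed (F : Set (BoundedContinuousFunction X ℂ)))
    {f g : BoundedContinuousFunction X ℂ} (hf : f ∈ F) (hg : g ∈ F) (p : Delta F) :
    gam F (f * g) p = gam F f p * gam F g p := by
  set c := gam F f p
  set d := gam F g p
  apply gam_unique hF (mul_mem hf hg) p
  intro r hr
  set δ := min r (r / (‖f‖ + ‖d‖ + 1)) with hδdef
  have hδpos : 0 < δ := lt_min hr (by positivity)
  apply p.superset_mem (p.inter_mem (gam_spec hF hf p δ hδpos) (gam_spec hF hg p δ hδpos))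
  rintro x ⟨hx1, hx2⟩
  have hx1' : ‖f x - c‖ ≤ δ := hx1
  have hx2' : ‖g x - d‖ ≤ δ := hx2
  have hfx : ‖f x‖ ≤ ‖f‖ := f.norm_coe_le_norm x
  have key : (f * g) x - c * d = f x * (g x - d) + (f x - c) * d := by
    simp; ring
  rw [mem_setOf_eq, key]
  have hδle : δ ≤ r / (‖f‖ + ‖d‖ + 1) := min_le_right _ _
  have hbound : (‖f‖ + ‖d‖) * δ ≤ r := by
    have h1 : (‖f‖ + ‖d‖) * δ ≤ (‖f‖ + ‖d‖) * (r / (‖f‖ + ‖d‖ + 1)) := by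
      apply mul_le_mul_of_nonneg_left hδle (by positivity)
    have h2 : (‖f‖ + ‖d‖) * (r / (‖f‖ + ‖d‖ + 1)) ≤ r := by
      rw [mul_div_assoc']
      apply div_le_of_le_mul₀ (by positivity) hr.le
      nlinarith [norm_nonneg f, norm_nonneg d, hr.le]
    linarith
  calc ‖f x * (g x - d) + (f x - c) * d‖
      ≤ ‖f x * (g x - d)‖ + ‖(f x - c) * d‖ := norm_add_le _ _
    _ = ‖f x‖ * ‖g x - d‖ + ‖f x - c‖ * ‖d‖ := by rw [norm_mul, norm_mul]
    _ ≤ ‖f‖ * δ + δ * ‖d‖ := by gcongr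
    _ = (‖f‖ + ‖d‖) * δ := by ring
    _ ≤ r := hbound

lemma gam_star (hF : IsClosed (F : Set (BoundedContinuousFunction X ℂ)))
    {f : BoundedContinuousFunction X ℂ} (hf : f ∈ F) (p : Delta F) :
    gam F (star f) p = star (gam F f p) := by
  apply gam_unique hF (star_mem hf) p
  intro r hr
  have : {x | ‖(star f) x - star (gam F f p)‖ ≤ r} = {x | ‖f x - gam F f p‖ ≤ r} := by
    ext x
    have : (star f) x = star (f x) := rfl
    rw [mem_setOf_eq, mem_setOf_eq, this, ← star_sub, norm_star]
  rw [this]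
  exact gam_spec hF hf p r hr

lemma gam_algebraMap (hF : IsClosed (F : Set (BoundedContinuousFunction X ℂ)))
    (c : ℂ) (p : Delta F) :
    gam F (algebraMap ℂ (BoundedContinuousFunction X ℂ) c) p = c := by
  apply gam_superset hF (F.algebraMap_mem c) p p.univ_mem
  intro x _
  rfl

lemma gam_one (hF : IsClosed (F : Set (BoundedContinuousFunction X ℂ))) (p : Delta F) :
    gam F 1 p = 1 := by
  simpa using gam_algebraMap hF 1 p

lemma gam_zero (hF : IsClosed (F : Set (BoundedContinuousFunction X ℂ))) (p : Delta F) :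
    gam F 0 p = 0 := by
  simpa using gam_algebraMap hF 0 p

lemma gam_continuous (hF : IsClosed (F : Set (BoundedContinuousFunction X ℂ)))
    {f : BoundedContinuousFunction X ℂ} (hf : f ∈ F) : Continuous (gam F f) := by
  rw [continuous_iff_continuousAt]
  intro p
  rw [ContinuousAt, Metric.tendsto_nhds]
  intro ε hε
  have h3 : (0:ℝ) < ε / 3 := by linarith
  have hopen : IsOpen (hatSet F {x | ‖f x - gam F f p‖ ≤ ε / 3}) :=
    TopologicalSpace.isOpen_generateFrom_of_mem ⟨_, rfl⟩
  have hmemp : p ∈ hatSet F {x | ‖f x - gam F f p‖ ≤ ε / 3} := gam_spec hF hf p _ h3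
  filter_upwards [hopen.mem_nhds hmemp] with q hq
  have h1 : {x | ‖f x - gam F f p‖ ≤ ε / 3} ∈ q.1 := hq
  have h2 := gam_spec hF hf q _ h3
  obtain ⟨x, hx1, hx2⟩ := q.nonempty_of_mem (q.inter_mem h1 h2)
  have hx1' : ‖f x - gam F f p‖ ≤ ε / 3 := hx1
  have hx2' : ‖f x - gam F f q‖ ≤ ε / 3 := hx2
  rw [dist_eq_norm]
  have : gam F f q - gam F f p = (f x - gam F f p) - (f x - gam F f q) := by ring
  rw [this]
  calc ‖(f x - gam F f p) - (f x - gam F f q)‖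
      ≤ ‖f x - gam F f p‖ + ‖f x - gam F f q‖ := norm_sub_le _ _
    _ < ε := by linarith

/-- `Γ f` as a continuous map on `δX`. -/
noncomputable def gamCM (F : StarSubalgebra ℂ (BoundedContinuousFunction X ℂ))
    (hF : IsClosed (F : Set (BoundedContinuousFunction X ℂ))) (f : F) :
    C(Delta F, ℂ) :=
  ⟨gam F ↑f, gam_continuous hF f.2⟩

/-- `Γ` as a star algebra homomorphism. -/
noncomputable def gamHom (F : StarSubalgebra ℂ (BoundedContinuousFunction X ℂ))
    (hF : IsClosed (F : Set (BoundedContinuousFunction X ℂ))) :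
    F →⋆ₐ[ℂ] C(Delta F, ℂ) where
  toFun f := gamCM F hF f
  map_one' := ContinuousMap.ext fun p => by
    simpa [gamCM] using gam_one hF p
  map_mul' f g := ContinuousMap.ext fun p => by
    simpa [gamCM] using gam_mul hF f.2 g.2 p
  map_zero' := ContinuousMap.ext fun p => by
    simpa [gamCM] using gam_zero hF p
  map_add' f g := ContinuousMap.ext fun p => by
    simpa [gamCM] using gam_add hF f.2 g.2 p
  commutes' c := ContinuousMap.ext fun p => by
    simpa [gamCM] using gam_algebraMap hF c p
  map_star' f := ContinuousMap.ext fun p => by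
    simpa [gamCM] using gam_star hF f.2 p

lemma gamHom_apply (hF : IsClosed (F : Set (BoundedContinuousFunction X ℂ)))
    (f : F) (p : Delta F) : gamHom F hF f p = gam F ↑f p := rfl

end Aux3
section Aux4

set_option synthInstance.maxHeartbeats 1000000 in
/-- The promoted star algebra equivalence. -/
noncomputable def gamEquiv (F : StarSubalgebra ℂ (BoundedContinuousFunction X ℂ))
    (hF : IsClosed (F : Set (BoundedContinuousFunction X ℂ)))
    (hbij : Function.Bijective ⇑(gamHom F hF)) : F ≃⋆ₐ[ℂ] C(Delta F, ℂ) :=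
  StarAlgEquiv.ofBijective (gamHom F hF) hbij

set_option synthInstance.maxHeartbeats 1000000 in
lemma gamEquiv_apply (F : StarSubalgebra ℂ (BoundedContinuousFunction X ℂ))
    (hF : IsClosed (F : Set (BoundedContinuousFunction X ℂ)))
    (hbij : Function.Bijective ⇑(gamHom F hF)) (f : F) :
    gamEquiv F hF hbij f = gamHom F hF f := rfl

end Aux4
theorem stmt14 (F : StarSubalgebra ℂ (BoundedContinuousFunction X ℂ)) (hF : IsClosed (F : Set (BoundedContinuousFunction X ℂ))) [CompactSpace (Delta F)] (e : X → Delta F) (he : ∀ x : X, (e x).1 = {A : Set X | A ∈ @nhds X (tauF F) x}) :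
    ∃ Γ : F ≃⋆ₐ[ℂ] C(Delta F, ℂ),
      (∀ f : F, ‖Γ f‖ = ‖(f : BoundedContinuousFunction X ℂ)‖) ∧
      ∀ (f : F) (x : X), Γ f (e x) = (f : BoundedContinuousFunction X ℂ) x := by
  classical
  -- Γ evaluated at points of `X` via `e` recovers `f`
  have gam_e : ∀ (f : BoundedContinuousFunction X ℂ), f ∈ F → ∀ x : X,
      gam F f (e x) = f x := by
    intro f hf x
    apply gam_unique hF hf
    intro r hr
    have hmem : {y | ‖f y - f x‖ ≤ r} ∈ @nhds X (tauF F) x := by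
      have hle : tauF F ≤ TopologicalSpace.induced (fun y => f y) inferInstance :=
        iInf_le_of_le f (iInf_le_of_le hf le_rfl)
      have hopen : @IsOpen X (tauF F) ((fun y => f y) ⁻¹' Metric.ball (f x) r) :=
        hle _ (isOpen_induced Metric.isOpen_ball)
      have hxmem : x ∈ (fun y => f y) ⁻¹' Metric.ball (f x) r := by
        simp [Metric.mem_ball, hr]
      refine Filter.mem_of_superset (@IsOpen.mem_nhds X (tauF F) x _ hopen hxmem) ?_
      intro y hy
      have : dist (f y) (f x) < r := hy
      rw [mem_setOf_eq, ← dist_eq_norm]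
      exact this.le
    have : {y | ‖f y - f x‖ ≤ r} ∈ (e x).1 := by rw [he x]; exact hmem
    exact this
  -- the norm identity
  have hnorm : ∀ f : F, ‖gamHom F hF f‖ = ‖(f : BoundedContinuousFunction X ℂ)‖ := by
    intro f
    apply le_antisymm
    · rw [ContinuousMap.norm_le _ (norm_nonneg _)]
      intro p
      rw [gamHom_apply]
      refine le_of_forall_pos_le_add ?_
      intro ε hε
      obtain ⟨x, -, hx⟩ := gam_meet F ↑f p Set.univ p.univ_mem ε hε
      have hx' : ‖(f : BoundedContinuousFunction X ℂ) x - gam F ↑f p‖ ≤ ε := hx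
      calc ‖gam F ↑f p‖
          ≤ ‖(f : BoundedContinuousFunction X ℂ) x‖
            + ‖(f : BoundedContinuousFunction X ℂ) x - gam F ↑f p‖ := by
            have h' := norm_sub_le ((f : BoundedContinuousFunction X ℂ) x)
              ((f : BoundedContinuousFunction X ℂ) x - gam F ↑f p)
            rwa [sub_sub_cancel] at h'
        _ ≤ ‖(f : BoundedContinuousFunction X ℂ)‖ + ε := by
            have := (f : BoundedContinuousFunction X ℂ).norm_coe_le_norm x
            linarith
    · rw [BoundedContinuousFunction.norm_le (norm_nonneg _)]
      intro x
      calc ‖(f : BoundedContinuousFunction X ℂ) x‖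
          = ‖gam F ↑f (e x)‖ := by rw [gam_e ↑f f.2 x]
        _ ≤ ‖gamHom F hF f‖ := by
            rw [← gamHom_apply hF f (e x)]
            exact (gamHom F hF f).norm_coe_le_norm (e x)
  -- separation of points of `Delta F`
  have hside : ∀ p q : Delta F, ∀ A : Set X, A ∈ p.1 → A ∉ q.1 →
      ∃ f : F, gam F ↑f p = 0 ∧ gam F ↑f q ≠ 0 := by
    intro p q A hAp hAq
    have hAne : A ≠ Set.univ := by
      rintro rfl
      exact hAq q.univ_mem
    obtain ⟨B, hB, g, hgF, hg0, hg1⟩ := p.2.1.2.2.2 A hAp hAne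
    refine ⟨⟨g, hgF⟩, gam_superset hF hgF p hB hg0, ?_⟩
    intro h0
    have hspec := gam_spec hF hgF q (1/2) (by norm_num)
    rw [h0] at hspec
    apply hAq
    apply q.superset_mem hspec
    intro x hx
    by_contra hxA
    have : ‖g x - 0‖ ≤ 1/2 := hx
    rw [hg1 x hxA] at this
    norm_num at this
  have hsep : ∀ p q : Delta F, p ≠ q → ∃ f : F, gam F ↑f p ≠ gam F ↑f q := by
    intro p q hpq
    have h1 : p.1 ≠ q.1 := fun h => hpq (Subtype.ext h)
    have h2 : ∃ A : Set X, (A ∈ p.1 ∧ A ∉ q.1) ∨ (A ∈ q.1 ∧ A ∉ p.1) := by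
      by_contra hall
      push_neg at hall
      apply h1
      ext A
      exact ⟨(hall A).1, (hall A).2⟩
    obtain ⟨A, hA | hA⟩ := h2
    · obtain ⟨f, hf0, hfne⟩ := hside p q A hA.1 hA.2
      exact ⟨f, by rw [hf0]; exact fun h => hfne h.symm⟩
    · obtain ⟨f, hf0, hfne⟩ := hside q p A hA.1 hA.2
      exact ⟨f, by rw [hf0]; exact hfne⟩
  -- Γ is isometric
  have hiso : Isometry ⇑(gamHom F hF) := by
    apply Isometry.of_dist_eq
    intro f g
    rw [dist_eq_norm, ← map_sub, hnorm (f - g), Subtype.dist_eq, dist_eq_norm]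
    rfl
  -- the range is closed
  haveI : CompleteSpace F := hF.completeSpace_coe
  have hclrange : IsClosed (Set.range ⇑(gamHom F hF)) :=
    hiso.isClosedEmbedding.isClosed_range
  -- the range separates points, so by Stone–Weierstrass it is dense, hence everything
  set S := (gamHom F hF).range with hSdef
  have hScoe : (S : Set C(Delta F, ℂ)) = Set.range ⇑(gamHom F hF) := by
    ext g
    constructor
    · rintro ⟨f, rfl⟩
      exact ⟨f, rfl⟩
    · rintro ⟨f, rfl⟩
      exact ⟨f, rfl⟩
  have hSsep : S.SeparatesPoints := by
    intro p q hpq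
    obtain ⟨f, hfne⟩ := hsep p q hpq
    refine ⟨⇑(gamHom F hF f), ⟨gamHom F hF f, ⟨f, rfl⟩, rfl⟩, ?_⟩
    exact hfne
  have htop := ContinuousMap.starSubalgebra_topologicalClosure_eq_top_of_separatesPoints S hSsep
  have hsurj : Function.Surjective ⇑(gamHom F hF) := by
    intro g
    have hg1 : g ∈ S.topologicalClosure := by
      rw [htop]; exact StarSubalgebra.mem_top
    have hg2 : g ∈ closure (S : Set C(Delta F, ℂ)) := hg1
    rw [hScoe, hclrange.closure_eq] at hg2
    exact hg2
  have hinj : Function.Injective ⇑(gamHom F hF) := by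
    intro f g h
    apply Subtype.ext
    apply BoundedContinuousFunction.ext
    intro x
    have h1 : gamHom F hF f (e x) = gamHom F hF g (e x) := by rw [h]
    rw [gamHom_apply, gamHom_apply, gam_e ↑f f.2 x, gam_e ↑g g.2 x] at h1
    exact h1
  have hbij : Function.Bijective ⇑(gamHom F hF) := ⟨hinj, hsurj⟩
  refine ⟨gamEquiv F hF hbij, ?_, ?_⟩
  · intro f
    rw [gamEquiv_apply, hnorm]
  · intro f x
    rw [gamEquiv_apply, gamHom_apply, gam_e ↑f f.2 x]
end
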